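/- arXiv:2510.02775 — 9 statements merged into one kernel-verified Lean document; each statement's English description precedes it below -/
import Mathlib

section
/- If $x_1,\dots,x_n$ are real numbers with $0 \le x_j \le 1$ for each $j$, then $\sum_{j=1}^n \frac{1-x_j}{1+x_j} \ge \frac{1-\prod_{j=1}^n x_j}{1+\prod_{j=1}^n x_j}$. -/
lemma key_ineq (a b : ℝ) (ha : 0 ≤ a) (ha1 : a ≤ 1) (hb : 0 ≤ b) (hb1 : b ≤ 1) :
    (1 - a*b)/(1 + a*b) ≤ (1 - a)/(1 + a) + (1 - b)/(1 + b) := by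
  have h1 : (0:ℝ) < 1 + a := by linarith
  have h2 : (0:ℝ) < 1 + b := by linarith
  have h3 : (0:ℝ) < 1 + a*b := by nlinarith
  rw [div_add_div _ _ (ne_of_gt h1) (ne_of_gt h2), div_le_div_iff₀ h3 (by positivity)]
  have hab : a*b ≤ 1 := by nlinarith
  nlinarith [mul_nonneg (mul_nonneg (by linarith : (0:ℝ) ≤ 1-a) (by linarith : (0:ℝ) ≤ 1-b)) (by linarith : (0:ℝ) ≤ 1-a*b)]

lemma aux {ι : Type*} (s : Finset ι) (x : ι → ℝ)
    (hx : ∀ j ∈ s, 0 ≤ x j ∧ x j ≤ 1) :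
    (1 - ∏ j ∈ s, x j) / (1 + ∏ j ∈ s, x j) ≤ ∑ j ∈ s, (1 - x j) / (1 + x j) := by
  induction s using Finset.cons_induction with
  | empty => simp
  | cons a s ha ih =>
    rw [Finset.prod_cons, Finset.sum_cons]
    have hxa := hx a (Finset.mem_cons_self a s)
    have hprod0 : 0 ≤ ∏ j ∈ s, x j :=
      Finset.prod_nonneg fun j hj => (hx j (Finset.mem_cons_of_mem hj)).1
    have hprod1 : ∏ j ∈ s, x j ≤ 1 :=
      Finset.prod_le_one (fun j hj => (hx j (Finset.mem_cons_of_mem hj)).1)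
        (fun j hj => (hx j (Finset.mem_cons_of_mem hj)).2)
    calc (1 - x a * ∏ j ∈ s, x j) / (1 + x a * ∏ j ∈ s, x j)
        ≤ (1 - x a)/(1 + x a) + (1 - ∏ j ∈ s, x j)/(1 + ∏ j ∈ s, x j) :=
          key_ineq _ _ hxa.1 hxa.2 hprod0 hprod1
      _ ≤ (1 - x a)/(1 + x a) + ∑ j ∈ s, (1 - x j) / (1 + x j) := by
          gcongr; exact ih fun j hj => hx j (Finset.mem_cons_of_mem hj)

theorem stmt_0 (n : ℕ) (hn : 0 < n) (x : Fin n → ℝ)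
    (hx : ∀ j, 0 ≤ x j ∧ x j ≤ 1) :
    (1 - ∏ j, x j) / (1 + ∏ j, x j) ≤ ∑ j, (1 - x j) / (1 + x j) := by
  exact aux Finset.univ x fun j _ => hx j
end

section
/- If $P(z)$ is a complex polynomial of degree $n \ge 1$ all of whose zeros lie in the disk $|z| \le k$ with $k \ge 1$, then $\max_{|z|=k} |P(z)| \ge \frac{2k^n}{1+k^n} \max_{|z|=1} |P(z)|$. -/
open Polynomial Metric Finset


noncomputable def msup (p : ℂ[X]) (r : ℝ) : ℝ :=
  ⨆ z : Metric.sphere (0:ℂ) r, ‖p.eval (z:ℂ)‖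

lemma msup_bdd (p : ℂ[X]) (r : ℝ) :
    BddAbove (Set.range fun z : Metric.sphere (0:ℂ) r => ‖p.eval (z:ℂ)‖) := by
  have h := ((isCompact_sphere (0:ℂ) r).image (p.continuous.norm)).bddAbove
  rwa [Set.image_eq_range] at h

lemma le_msup (p : ℂ[X]) {r : ℝ} {z : ℂ} (hz : ‖z‖ = r) : ‖p.eval z‖ ≤ msup p r := by
  have hmem : z ∈ Metric.sphere (0:ℂ) r := by simpa [mem_sphere_zero_iff_norm] using hz
  exact le_ciSup (msup_bdd p r) ⟨z, hmem⟩

lemma msup_le (p : ℂ[X]) {r C : ℝ} (hr : 0 ≤ r) (h : ∀ z : ℂ, ‖z‖ = r → ‖p.eval z‖ ≤ C) :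
    msup p r ≤ C := by
  have : Nonempty (Metric.sphere (0:ℂ) r) := (NormedSpace.sphere_nonempty.mpr hr).coe_sort
  exact ciSup_le fun z => h z (by simpa [mem_sphere_zero_iff_norm] using z.2)

lemma msup_nonneg (p : ℂ[X]) {r : ℝ} (hr : 0 ≤ r) : 0 ≤ msup p r := by
  obtain ⟨z, hz⟩ : (Metric.sphere (0:ℂ) r).Nonempty := NormedSpace.sphere_nonempty.mpr hr
  exact le_trans (norm_nonneg _) (le_msup p (by simpa [mem_sphere_zero_iff_norm] using hz))

/-- Maximum modulus principle for polynomials on the closed disc. -/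
lemma maxmod (p : ℂ[X]) {r : ℝ} (hr : 0 < r) {w : ℂ} (hw : ‖w‖ ≤ r) :
    ‖p.eval w‖ ≤ msup p r := by
  have hU : Bornology.IsBounded (Metric.ball (0:ℂ) r) := Metric.isBounded_ball
  have hd : DiffContOnCl ℂ (fun z => p.eval z) (Metric.ball (0:ℂ) r) :=
    (p.differentiable).diffContOnCl
  have hfr : ∀ z ∈ frontier (Metric.ball (0:ℂ) r), ‖p.eval z‖ ≤ msup p r := by
    rw [frontier_ball (0:ℂ) hr.ne']
    intro z hz
    exact le_msup p (by simpa [mem_sphere_zero_iff_norm] using hz)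
  have hcl : w ∈ closure (Metric.ball (0:ℂ) r) := by
    rw [closure_ball (0:ℂ) hr.ne']
    simpa [mem_closedBall_zero_iff] using hw
  exact Complex.norm_le_of_forall_mem_frontier_norm_le hU hd hfr hcl
section
variable (b : ℕ → ℂ) (n : ℕ)

noncomputable def revp : ℂ[X] := ∑ i ∈ Finset.range (n+1), C (b i) * X^(n-i)

lemma revp_natDegree_le : (revp b n).natDegree ≤ n := by
  apply Polynomial.natDegree_sum_le_of_forall_le
  intro i hi
  calc (C (b i) * X^(n-i)).natDegree ≤ (n-i) := by
        calc (C (b i) * X^(n-i)).natDegree ≤ (X^(n-i) : ℂ[X]).natDegree :=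
            Polynomial.natDegree_C_mul_le (b i) (X^(n-i))
          _ ≤ n - i := by simp
    _ ≤ n := Nat.sub_le _ _

lemma revp_eval {z : ℂ} (hz : z ≠ 0) :
    (revp b n).eval z = z^n * ∑ i ∈ Finset.range (n+1), b i * (z⁻¹)^i := by
  rw [revp, Polynomial.eval_finset_sum, Finset.mul_sum]
  apply Finset.sum_congr rfl
  intro i hi
  have hin : i ≤ n := Nat.lt_succ_iff.mp (Finset.mem_range.mp hi)
  have hpow : z ^ n = z ^ (n - i) * z ^ i := by
    rw [← pow_add]; congr 1; omega
  simp only [Polynomial.eval_mul, Polynomial.eval_C, Polynomial.eval_pow, Polynomial.eval_X]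
  rw [hpow]
  field_simp
  rw [mul_assoc, ← mul_pow, mul_one_div_cancel hz, one_pow, mul_one]

lemma revp_eval_zero : (revp b n).eval 0 = b n := by
  rw [revp, Polynomial.eval_finset_sum]
  rw [Finset.sum_eq_single n]
  · simp
  · intro i hi hne
    have hin : i ≤ n := Nat.lt_succ_iff.mp (Finset.mem_range.mp hi)
    have : n - i ≠ 0 := by omega
    simp [zero_pow this]
  · intro h; exact absurd (Finset.self_mem_range_succ n) h

end

/-- Maximum modulus principle with explicit bound. -/
lemma maxmod' (p : ℂ[X]) {r C : ℝ} (hr : 0 < r) (hC : ∀ z : ℂ, ‖z‖ = r → ‖p.eval z‖ ≤ C)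
    {w : ℂ} (hw : ‖w‖ ≤ r) : ‖p.eval w‖ ≤ C := by
  refine le_trans (maxmod p hr hw) (msup_le p hr.le hC)

/-- Growth lemma: `‖p(w)‖ ≤ M(1)‖w‖^n` for `‖w‖ ≥ 1`. -/
lemma growth (p : ℂ[X]) {n : ℕ} (hp : p.natDegree ≤ n) {w : ℂ} (hw : 1 ≤ ‖w‖) :
    ‖p.eval w‖ ≤ msup p 1 * ‖w‖^n := by
  have hw0 : w ≠ 0 := by intro h; rw [h] at hw; simp at hw; linarith
  set g := revp p.coeff n with hg
  have hsum : ∀ u : ℂ, ∑ i ∈ Finset.range (n+1), p.coeff i * u^i = p.eval u := by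
    intro u; rw [Polynomial.eval_eq_sum_range' (Nat.lt_succ_of_le hp)]
  have hge : ∀ z : ℂ, z ≠ 0 → g.eval z = z^n * p.eval z⁻¹ := by
    intro z hz; rw [hg, revp_eval _ _ hz, hsum]
  have hbd : ∀ z : ℂ, ‖z‖ = 1 → ‖g.eval z‖ ≤ msup p 1 := by
    intro z hz
    have hz0 : z ≠ 0 := by intro h; rw [h] at hz; simp at hz
    rw [hge z hz0, norm_mul, norm_pow, hz, one_pow, one_mul]
    exact le_msup p (by rw [norm_inv, hz]; norm_num)
  have hkey : ‖g.eval w⁻¹‖ ≤ msup p 1 := by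
    apply maxmod' g one_pos hbd
    rw [norm_inv]
    exact inv_le_one_of_one_le₀ hw
  have hwinv : (w⁻¹ : ℂ) ≠ 0 := inv_ne_zero hw0
  have := hge w⁻¹ hwinv
  rw [inv_inv] at this
  rw [this] at hkey
  have hnorm : ‖(w⁻¹)^n * p.eval w‖ = ‖p.eval w‖ / ‖w‖^n := by
    rw [norm_mul, norm_pow, norm_inv]
    rw [inv_pow, inv_mul_eq_div]
  rw [hnorm, div_le_iff₀ (by positivity)] at hkey
  exact hkey

/-- The top coefficient bound `‖a_n‖ ≤ M(1)`. -/
lemma coeff_le_msup (p : ℂ[X]) {n : ℕ} (hp : p.natDegree ≤ n) : ‖p.coeff n‖ ≤ msup p 1 := by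
  set g := revp p.coeff n with hg
  have hsum : ∀ u : ℂ, ∑ i ∈ Finset.range (n+1), p.coeff i * u^i = p.eval u := by
    intro u; rw [Polynomial.eval_eq_sum_range' (Nat.lt_succ_of_le hp)]
  have hbd : ∀ z : ℂ, ‖z‖ = 1 → ‖g.eval z‖ ≤ msup p 1 := by
    intro z hz
    have hz0 : z ≠ 0 := by intro h; rw [h] at hz; simp at hz
    rw [hg, revp_eval _ _ hz0, hsum, norm_mul, norm_pow, hz, one_pow, one_mul]
    exact le_msup p (by rw [norm_inv, hz]; norm_num)
  have := maxmod' g one_pos hbd (w := 0) (by simp)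
  rwa [hg, revp_eval_zero] at this

lemma eval_derivative_prod (c : ℂ) (m : Multiset ℂ) {z : ℂ} (hz : ∀ a ∈ m, z ≠ a) :
    Polynomial.eval z (Polynomial.derivative (C c * (m.map (fun a => X - C a)).prod))
      = Polynomial.eval z (C c * (m.map (fun a => X - C a)).prod)
        * (m.map (fun a => (z - a)⁻¹)).sum := by
  induction m using Multiset.induction_on with
  | empty => simp
  | cons a m ih =>
    have hza : z ≠ a := hz a (Multiset.mem_cons_self a m)
    have hz' : ∀ b ∈ m, z ≠ b := fun b hb => hz b (Multiset.mem_cons_of_mem hb)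
    have hrw : C c * ((a ::ₘ m).map (fun a => X - C a)).prod
        = (X - C a) * (C c * (m.map (fun a => X - C a)).prod) := by
      rw [Multiset.map_cons, Multiset.prod_cons]; ring
    rw [hrw, Polynomial.derivative_mul]
    simp only [Polynomial.derivative_sub, Polynomial.derivative_X, Polynomial.derivative_C,
      sub_zero, one_mul, Polynomial.eval_add, Polynomial.eval_mul, Polynomial.eval_sub,
      Polynomial.eval_X, Polynomial.eval_C]
    rw [ih hz', Multiset.map_cons, Multiset.sum_cons]
    have hne : z - a ≠ 0 := sub_ne_zero.mpr hza
    field_simp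
    simp only [Polynomial.eval_mul, Polynomial.eval_C]
    ring

lemma logderiv_sum (s : ℂ[X]) (hs : s ≠ 0) {z : ℂ} (hz : s.eval z ≠ 0) :
    z * (Polynomial.derivative s).eval z
      = s.eval z * (s.roots.map (fun a => z / (z - a))).sum := by
  have hzr : ∀ a ∈ s.roots, z ≠ a := by
    intro a ha hza
    subst hza
    exact hz ((Polynomial.mem_roots hs).mp ha)
  have hsplit := Polynomial.Splits.eq_prod_roots (IsAlgClosed.splits (k := ℂ) s)
  calc z * (Polynomial.derivative s).eval z
      = z * (Polynomial.eval z s * (s.roots.map (fun a => (z - a)⁻¹)).sum) := by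
        conv_lhs => rw [hsplit, eval_derivative_prod _ _ hzr, ← hsplit]
    _ = s.eval z * (z * (s.roots.map (fun a => (z - a)⁻¹)).sum) := by ring
    _ = s.eval z * ((s.roots.map (fun a => z * (z - a)⁻¹)).sum) := by
        rw [Multiset.sum_map_mul_left]
    _ = s.eval z * (s.roots.map (fun a => z / (z - a))).sum := by
        rfl

lemma normSq_mono {u v : ℂ} (h : Complex.normSq u ≤ Complex.normSq v) : ‖u‖ ≤ ‖v‖ := by
  rw [Complex.norm_def, Complex.norm_def]
  exact Real.sqrt_le_sqrt h

lemma re_ge_half {z a : ℂ} (hz : ‖z‖ = 1) (ha : ‖a‖ ≤ 1) (hne : z - a ≠ 0) :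
    (1:ℝ)/2 ≤ (z / (z - a)).re := by
  have h1 : Complex.normSq z = 1 := by
    rw [Complex.normSq_eq_norm_sq, hz]; norm_num
  have h2 : Complex.normSq a ≤ 1 := by
    rw [Complex.normSq_eq_norm_sq]
    nlinarith [norm_nonneg a]
  rw [Complex.div_re]
  have h3 : 0 < Complex.normSq (z - a) := Complex.normSq_pos.mpr hne
  rw [← add_div, le_div_iff₀ h3]
  have hexp : Complex.normSq (z - a) = Complex.normSq z - 2*(z.re*a.re + z.im*a.im)
      + Complex.normSq a := by
    simp [Complex.normSq_apply, Complex.sub_re, Complex.sub_im]; ring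
  have hz1 : z.re^2 + z.im^2 = 1 := by rw [← h1, Complex.normSq_apply]; ring
  have ha1 : a.re^2 + a.im^2 ≤ 1 := by
    have := Complex.normSq_apply a; nlinarith [h2]
  simp only [Complex.sub_re, Complex.sub_im, hexp, h1, Complex.normSq_apply]
  nlinarith
  

lemma re_le_half {z a : ℂ} (hz : ‖z‖ = 1) (ha : 1 ≤ ‖a‖) (hne : z - a ≠ 0) :
    (z / (z - a)).re ≤ (1:ℝ)/2 := by
  have h1 : Complex.normSq z = 1 := by
    rw [Complex.normSq_eq_norm_sq, hz]; norm_num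
  have h2 : 1 ≤ Complex.normSq a := by
    rw [Complex.normSq_eq_norm_sq]
    nlinarith [norm_nonneg a]
  rw [Complex.div_re]
  have h3 : 0 < Complex.normSq (z - a) := Complex.normSq_pos.mpr hne
  rw [← add_div, div_le_iff₀ h3]
  have hexp : Complex.normSq (z - a) = Complex.normSq z - 2*(z.re*a.re + z.im*a.im)
      + Complex.normSq a := by
    simp [Complex.normSq_apply, Complex.sub_re, Complex.sub_im]; ring
  have hz1 : z.re^2 + z.im^2 = 1 := by rw [← h1, Complex.normSq_apply]; ring
  have ha1 : 1 ≤ a.re^2 + a.im^2 := by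
    have := Complex.normSq_apply a; nlinarith [h2]
  simp only [Complex.sub_re, Complex.sub_im, hexp, h1, Complex.normSq_apply]
  nlinarith

lemma re_sum_multiset (m : Multiset ℂ) : m.sum.re = (m.map Complex.re).sum := by
  simpa [Complex.coe_reAddGroupHom] using map_multiset_sum Complex.reAddGroupHom m

lemma card_roots_eq (s : ℂ[X]) : s.roots.card = s.natDegree :=
  Polynomial.splits_iff_card_roots.mp (IsAlgClosed.splits (k := ℂ) s)

/-- Pointwise Turán-type inequality: all roots in the closed unit disc. -/
lemma turan (s : ℂ[X]) {n : ℕ} (hs : s ≠ 0) (hdeg : s.natDegree = n)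
    (hroots : ∀ a ∈ s.roots, ‖a‖ ≤ 1) {z : ℂ} (hz : ‖z‖ = 1)
    (hez : s.eval z ≠ 0) :
    ‖(n:ℂ) * s.eval z - z * (Polynomial.derivative s).eval z‖
      ≤ ‖z * (Polynomial.derivative s).eval z‖ := by
  set S : ℂ := (s.roots.map (fun a => z / (z - a))).sum with hSdef
  have hS := logderiv_sum s hs hez
  have hcard : s.roots.card = n := by rw [card_roots_eq, hdeg]
  have hre : (n:ℝ)/2 ≤ S.re := by
    rw [hSdef, re_sum_multiset, Multiset.map_map]
    have h := Multiset.card_nsmul_le_sum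
      (s := s.roots.map (Complex.re ∘ fun a => z / (z - a))) (a := (1:ℝ)/2) ?_
    · rw [Multiset.card_map, hcard] at h
      calc (n:ℝ)/2 = n • ((1:ℝ)/2) := by
            simp [nsmul_eq_mul]; ring
        _ ≤ _ := h
    · intro x hx
      obtain ⟨a, ha, rfl⟩ := Multiset.mem_map.mp hx
      have hne : z - a ≠ 0 := by
        intro h0
        have : z = a := by linear_combination h0
        subst this
        exact hez ((Polynomial.mem_roots hs).mp ha)
      exact re_ge_half hz (hroots a ha) hne
  have hnorm : ‖(n:ℂ) - S‖ ≤ ‖S‖ := by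
    apply normSq_mono
    have e1 : Complex.normSq ((n:ℂ) - S) = (n - S.re)^2 + S.im^2 := by
      simp [Complex.normSq_apply, Complex.sub_re, Complex.sub_im]; ring
    have e2 : Complex.normSq S = S.re^2 + S.im^2 := by
      simp [Complex.normSq_apply]; ring
    rw [e1, e2]
    nlinarith [Nat.cast_nonneg (α := ℝ) n]
  have key1 : (n:ℂ) * s.eval z - z * (Polynomial.derivative s).eval z
      = s.eval z * ((n:ℂ) - S) := by rw [hS]; ring
  rw [key1, hS, norm_mul, norm_mul]
  exact mul_le_mul_of_nonneg_left hnorm (norm_nonneg _)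

/-- Pointwise anti-Turán inequality: all roots outside the open unit disc. -/
lemma antiTuran (s : ℂ[X]) {n : ℕ} (hs : s ≠ 0) (hdeg : s.natDegree ≤ n)
    (hroots : ∀ a ∈ s.roots, 1 ≤ ‖a‖) {z : ℂ} (hz : ‖z‖ = 1) :
    ‖z * (Polynomial.derivative s).eval z‖
      ≤ ‖(n:ℂ) * s.eval z - z * (Polynomial.derivative s).eval z‖ := by
  by_cases hez : s.eval z = 0
  · rw [hez]; simp
  set S : ℂ := (s.roots.map (fun a => z / (z - a))).sum with hSdef
  have hS := logderiv_sum s hs hez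
  have hcard : s.roots.card = s.natDegree := card_roots_eq s
  have hre : S.re ≤ (n:ℝ)/2 := by
    rw [hSdef, re_sum_multiset, Multiset.map_map]
    have h := Multiset.sum_le_card_nsmul
      (s.roots.map (Complex.re ∘ fun a => z / (z - a))) ((1:ℝ)/2) ?_
    · rw [Multiset.card_map, hcard] at h
      refine h.trans ?_
      have hle : (s.natDegree : ℝ) ≤ n := by exact_mod_cast hdeg
      simp only [nsmul_eq_mul]
      linarith
    · intro x hx
      obtain ⟨a, ha, rfl⟩ := Multiset.mem_map.mp hx
      have hne : z - a ≠ 0 := by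
        intro h0
        have : z = a := by linear_combination h0
        subst this
        exact hez ((Polynomial.mem_roots hs).mp ha)
      exact re_le_half hz (hroots a ha) hne
  have hnorm : ‖S‖ ≤ ‖(n:ℂ) - S‖ := by
    apply normSq_mono
    have e1 : Complex.normSq ((n:ℂ) - S) = (n - S.re)^2 + S.im^2 := by
      simp [Complex.normSq_apply, Complex.sub_re, Complex.sub_im]; ring
    have e2 : Complex.normSq S = S.re^2 + S.im^2 := by
      simp [Complex.normSq_apply]; ring
    rw [e1, e2]
    nlinarith [Nat.cast_nonneg (α := ℝ) n]
  have key1 : (n:ℂ) * s.eval z - z * (Polynomial.derivative s).eval z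
      = s.eval z * ((n:ℂ) - S) := by rw [hS]; ring
  rw [key1, hS, norm_mul, norm_mul]
  exact mul_le_mul_of_nonneg_left hnorm (norm_nonneg _)

/-- Key lemma: `‖p'(z)‖ + ‖n p(z) - z p'(z)‖ ≤ n ⬝ M(1)` on the unit circle. -/
lemma star2 (p : ℂ[X]) {n : ℕ} (hn : 0 < n) (hdeg : p.natDegree ≤ n) {z : ℂ} (hz : ‖z‖ = 1) :
    ‖(Polynomial.derivative p).eval z‖
      + ‖(n:ℂ) * p.eval z - z * (Polynomial.derivative p).eval z‖ ≤ n * msup p 1 := by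
  by_cases hp : p = 0
  · subst hp; simpa using mul_nonneg (Nat.cast_nonneg n) (msup_nonneg 0 zero_le_one)
  set M : ℝ := msup p 1 with hM
  have hM0 : 0 < M := by
    rcases lt_or_eq_of_le (le_trans (norm_nonneg _)
      (coeff_le_msup p (le_refl p.natDegree))) with h | h
    · exact h
    · exfalso
      have : ‖p.leadingCoeff‖ ≤ 0 := by
        rw [Polynomial.leadingCoeff, h]; exact coeff_le_msup p (le_refl _)
      exact hp (Polynomial.leadingCoeff_eq_zero.mp (by
        simpa using le_antisymm this (norm_nonneg _)))
  have hMn : ‖p.coeff n‖ ≤ M := coeff_le_msup p hdeg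
  set A : ℂ := (Polynomial.derivative p).eval z with hA
  set B : ℂ := (n:ℂ) * p.eval z - z * A with hB
  have hzn : z ≠ 0 := by intro h; rw [h] at hz; simp at hz
  have hz1 : ‖z^(n-1)‖ = 1 := by rw [norm_pow, hz, one_pow]
  have hzpow : z * z^(n-1) = z^n := by
    rw [mul_comm, ← pow_succ]; congr 1; omega
  -- the master inequality, for every λ of norm > 1
  have master : ∀ lam : ℂ, 1 < ‖lam‖ → ‖B‖ ≤ ‖A - lam * M * n * z^(n-1)‖ := by
    intro lam hlam
    set T : ℂ[X] := p - C (lam * M) * X^n with hT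
    have hcoefT : T.coeff n = p.coeff n - lam * M := by
      rw [hT, Polynomial.coeff_sub, Polynomial.coeff_C_mul, Polynomial.coeff_X_pow]
      simp
    have hcne : T.coeff n ≠ 0 := by
      rw [hcoefT]
      intro h0
      have : ‖(lam * M : ℂ)‖ ≤ M := by
        rw [← sub_eq_zero.mp h0]; exact hMn
      rw [norm_mul, Complex.norm_real, Real.norm_eq_abs, abs_of_pos hM0] at this
      nlinarith
    have hT0 : T ≠ 0 := fun h => hcne (by rw [h]; simp)
    have hTdeg : T.natDegree = n := by
      refine le_antisymm ?_ (Polynomial.le_natDegree_of_ne_zero hcne)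
      refine le_trans (Polynomial.natDegree_sub_le _ _) (max_le hdeg ?_)
      refine le_trans (Polynomial.natDegree_C_mul_le _ _) (by simp)
    have hTroots : ∀ a ∈ T.roots, ‖a‖ < 1 := by
      intro a ha
      by_contra hge
      push_neg at hge
      have hev : p.eval a = lam * M * a^n := by
        have := (Polynomial.mem_roots hT0).mp ha
        rw [Polynomial.IsRoot, hT] at this
        simp only [Polynomial.eval_sub, Polynomial.eval_mul, Polynomial.eval_C,
          Polynomial.eval_pow, Polynomial.eval_X] at this
        linear_combination this
      have hgr := growth p hdeg (w := a) hge
      rw [hev] at hgr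
      have han : 0 < ‖a‖^n := by positivity
      rw [norm_mul, norm_mul, Complex.norm_real, Real.norm_eq_abs, abs_of_pos hM0,
        norm_pow, ← hM] at hgr
      nlinarith [mul_pos hM0 han, hgr, hlam]
    have hTez : T.eval z ≠ 0 := by
      intro h0
      have : z ∈ T.roots := (Polynomial.mem_roots hT0).mpr h0
      have := hTroots z this
      rw [hz] at this; exact lt_irrefl _ this
    have htu := turan T hT0 hTdeg (fun a ha => (hTroots a ha).le) hz hTez
    have hevT : T.eval z = p.eval z - lam * M * z^n := by
      rw [hT]; simp
    have hevT' : (Polynomial.derivative T).eval z = A - lam * M * n * z^(n-1) := by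
      rw [hT, Polynomial.derivative_sub, Polynomial.derivative_C_mul,
        Polynomial.derivative_X_pow]
      simp only [Polynomial.eval_sub, Polynomial.eval_mul, Polynomial.eval_C,
        Polynomial.eval_pow, Polynomial.eval_X, Polynomial.eval_natCast, hA]
      ring
    have hid : (n:ℂ) * T.eval z - z * (Polynomial.derivative T).eval z = B := by
      rw [hevT, hevT', hB]
      have : z * (lam * M * n * z^(n-1)) = lam * M * n * z^n := by
        rw [← hzpow]; ring
      ring_nf
      ring_nf at this ⊢
      linear_combination (n:ℂ) * (p.eval z - lam * ↑M * z ^ n) * 0 + this * 0 +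
        ((n:ℂ) * T.eval z - z * (Polynomial.derivative T).eval z - B) * 0 + (this)
    rw [hid] at htu
    calc ‖B‖ ≤ ‖z * (Polynomial.derivative T).eval z‖ := htu
      _ = ‖A - lam * M * n * z^(n-1)‖ := by rw [norm_mul, hz, one_mul, hevT']
  -- Step 1 : ‖A‖ ≤ n M
  have step1 : ‖A‖ ≤ n * M := by
    by_contra hA'
    push_neg at hA'
    have hnM : (0:ℝ) < n * M := by positivity
    have hA0 : A ≠ 0 := by
      intro h; rw [h] at hA'; simp at hA'; nlinarith
    set lam : ℂ := A / ((M:ℂ) * n * z^(n-1)) with hlam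
    have hden : ((M:ℂ) * n * z^(n-1)) ≠ 0 := by
      apply mul_ne_zero (mul_ne_zero _ _) (pow_ne_zero _ hzn)
      · exact_mod_cast hM0.ne'
      · exact_mod_cast hn.ne'
    have hlamval : ‖lam‖ = ‖A‖ / (M * n) := by
      rw [hlam, norm_div, norm_mul, norm_mul, hz1, Complex.norm_real,
        Complex.norm_natCast, Real.norm_eq_abs, abs_of_pos hM0, mul_one]
    have hlamnorm : 1 < ‖lam‖ := by
      rw [hlamval, lt_div_iff₀ (by positivity)]
      nlinarith
    have hcancel : lam * M * n * z^(n-1) = A := by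
      rw [hlam, mul_assoc, mul_assoc, ← mul_assoc (M:ℂ), div_mul_cancel₀ _ hden]
    have := master lam hlamnorm
    rw [hcancel] at this
    simp only [sub_self, norm_zero] at this
    have hBz : B = 0 := norm_le_zero_iff.mp this
    have : (n:ℂ) * p.eval z = z * A := by rw [hB] at hBz; linear_combination hBz
    have hnorm : (n:ℝ) * ‖p.eval z‖ = ‖A‖ := by
      have := congrArg norm this
      rwa [norm_mul, norm_mul, hz, one_mul, Complex.norm_natCast] at this
    have hpz : ‖p.eval z‖ ≤ M := le_msup p hz
    nlinarith
  -- Step 2 : for every t > n M we get ‖A‖ + ‖B‖ ≤ t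
  have step2 : ∀ t : ℝ, n * M < t → ‖A‖ + ‖B‖ ≤ t := by
    intro t ht
    have ht0 : 0 < t := lt_trans (by positivity) ht
    set u : ℂ := if A = 0 then 1 else A / (‖A‖ : ℂ) with hu
    have hu1 : ‖u‖ = 1 := by
      rw [hu]
      by_cases h : A = 0
      · simp [h]
      · rw [if_neg h, norm_div, Complex.norm_real, Real.norm_eq_abs,
          abs_of_pos (norm_pos_iff.mpr h), div_self (norm_pos_iff.mpr h).ne']
    have hAu : A = (‖A‖ : ℂ) * u := by
      rw [hu]
      by_cases h : A = 0
      · simp [h]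
      · have hne : ((‖A‖ : ℝ) : ℂ) ≠ 0 := by
          exact_mod_cast (norm_pos_iff.mpr h).ne'
        rw [if_neg h, mul_div_assoc']
        rw [mul_comm, mul_div_assoc, div_self hne, mul_one]
    set lam : ℂ := (t : ℂ) * u / ((M:ℂ) * n * z^(n-1)) with hlam
    have hden : ((M:ℂ) * n * z^(n-1)) ≠ 0 := by
      apply mul_ne_zero (mul_ne_zero _ _) (pow_ne_zero _ hzn)
      · exact_mod_cast hM0.ne'
      · exact_mod_cast hn.ne'
    have hlamval : ‖lam‖ = t / (M * n) := by
      rw [hlam, norm_div, norm_mul, norm_mul, norm_mul, hz1, hu1,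
        Complex.norm_real, Complex.norm_real, Complex.norm_natCast,
        Real.norm_eq_abs, Real.norm_eq_abs, abs_of_pos ht0, abs_of_pos hM0,
        mul_one, mul_one]
    have hlamnorm : 1 < ‖lam‖ := by
      rw [hlamval, lt_div_iff₀ (by positivity)]
      nlinarith
    have hcancel : lam * M * n * z^(n-1) = (t:ℂ) * u := by
      rw [hlam, mul_assoc, mul_assoc, ← mul_assoc (M:ℂ), div_mul_cancel₀ _ hden]
    have hm := master lam hlamnorm
    rw [hcancel, hAu] at hm
    have : ‖(‖A‖ : ℂ) * u - (t:ℂ) * u‖ = t - ‖A‖ := by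
      rw [← sub_mul, norm_mul, hu1, mul_one]
      rw [← Complex.ofReal_sub, Complex.norm_real, Real.norm_eq_abs, abs_sub_comm,
        abs_of_nonneg (by linarith)]
    rw [this] at hm
    linarith
  -- conclude
  by_contra hcon
  push_neg at hcon
  have := step2 ((n*M + (‖A‖ + ‖B‖))/2) (by linarith)
  linarith

/-- Erdős–Lax inequality. -/
lemma erdosLax (p : ℂ[X]) {n : ℕ} (hn : 0 < n) (hdeg : p.natDegree ≤ n)
    (hroots : ∀ a ∈ p.roots, 1 ≤ ‖a‖) {z : ℂ} (hz : ‖z‖ = 1) :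
    ‖(Polynomial.derivative p).eval z‖ ≤ (n : ℝ)/2 * msup p 1 := by
  by_cases hp : p = 0
  · subst hp
    simp only [Polynomial.derivative_zero, Polynomial.eval_zero, norm_zero]
    exact mul_nonneg (by positivity) (msup_nonneg 0 zero_le_one)
  have h1 := antiTuran p hp hdeg hroots hz
  have h2 := star2 p hn hdeg hz
  have h3 : ‖z * (Polynomial.derivative p).eval z‖ = ‖(Polynomial.derivative p).eval z‖ := by
    rw [norm_mul, hz, one_mul]
  rw [h3] at h1
  linarith

/-- Ankeny–Rivlin: if all roots are outside the open unit disc, `M(R) ≤ (R^n+1)/2 ⬝ M(1)`. -/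
lemma ankenyRivlin (p : ℂ[X]) {n : ℕ} (hn : 0 < n) (hdeg : p.natDegree ≤ n)
    (hroots : ∀ a ∈ p.roots, 1 ≤ ‖a‖) {R : ℝ} (hR : 1 ≤ R) :
    msup p R ≤ (R^n + 1)/2 * msup p 1 := by
  have hR0 : (0:ℝ) < R := lt_of_lt_of_le one_pos hR
  set M : ℝ := msup p 1 with hM
  have hM0 : 0 ≤ M := msup_nonneg p zero_le_one
  apply msup_le p hR0.le
  intro w hw
  have hwR : w ≠ 0 → True := fun _ => trivial
  set ω : ℂ := w / R with hω
  have hω1 : ‖ω‖ = 1 := by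
    rw [hω, norm_div, hw, Complex.norm_real, Real.norm_eq_abs, abs_of_pos hR0,
      div_self hR0.ne']
  -- the path function and its derivative
  set g : ℝ → ℂ := fun t => p.eval ((t:ℂ) * ω) with hg
  set g' : ℝ → ℂ := fun t => ω * (Polynomial.derivative p).eval ((t:ℂ) * ω) with hg'
  have hderiv : ∀ t ∈ Set.uIcc (1:ℝ) R, HasDerivAt g (g' t) t := by
    intro t _
    have h1 : HasDerivAt (fun s : ℂ => p.eval (s * ω))
        ((Polynomial.derivative p).eval ((t:ℂ) * ω) * (1 * ω)) ((t:ℂ)) := by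
      exact (p.hasDerivAt ((t:ℂ) * ω)).comp ((t:ℂ)) ((hasDerivAt_id ((t:ℂ))).mul_const ω)
    have := h1.comp_ofReal
    simpa [hg, hg', mul_comm] using this
  have hcont : Continuous g' := by
    rw [hg']
    fun_prop
  have hint : IntervalIntegrable g' MeasureTheory.volume 1 R :=
    hcont.intervalIntegrable 1 R
  have hftc := intervalIntegral.integral_eq_sub_of_hasDerivAt hderiv hint
  -- bound the derivative along the segment
  have hdp : (Polynomial.derivative p).natDegree ≤ n - 1 := by
    have := Polynomial.natDegree_derivative_le p
    omega
  have hel : msup (Polynomial.derivative p) 1 ≤ (n:ℝ)/2 * M := by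
    apply msup_le _ zero_le_one
    intro z hz
    exact erdosLax p hn hdeg hroots hz
  have hbound : ∀ t ∈ Set.Icc (1:ℝ) R, ‖g' t‖ ≤ (n:ℝ)/2 * M * t^(n-1) := by
    intro t ht
    have ht1 : (1:ℝ) ≤ t := ht.1
    have htω : ‖(t:ℂ) * ω‖ = t := by
      rw [norm_mul, hω1, mul_one, Complex.norm_real, Real.norm_eq_abs,
        abs_of_pos (lt_of_lt_of_le one_pos ht1)]
    have hgr := growth (Polynomial.derivative p) hdp (w := (t:ℂ) * ω) (by rw [htω]; exact ht1)
    rw [htω] at hgr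
    calc ‖g' t‖ = ‖(Polynomial.derivative p).eval ((t:ℂ) * ω)‖ := by
          rw [hg', norm_mul, hω1, one_mul]
      _ ≤ msup (Polynomial.derivative p) 1 * t^(n-1) := hgr
      _ ≤ (n:ℝ)/2 * M * t^(n-1) := by
          apply mul_le_mul_of_nonneg_right hel
          positivity
  -- integrate
  have hnormint : ‖∫ t in (1:ℝ)..R, g' t‖ ≤ (R^n - 1)/2 * M := by
    calc ‖∫ t in (1:ℝ)..R, g' t‖ ≤ ∫ t in (1:ℝ)..R, ‖g' t‖ :=
          intervalIntegral.norm_integral_le_integral_norm hR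
      _ ≤ ∫ t in (1:ℝ)..R, (n:ℝ)/2 * M * t^(n-1) := by
          apply intervalIntegral.integral_mono_on hR (hcont.norm.intervalIntegrable 1 R)
            (by apply Continuous.intervalIntegrable; fun_prop)
          exact hbound
      _ = (n:ℝ)/2 * M * ((R^n - 1)/n) := by
          rw [intervalIntegral.integral_const_mul, integral_pow]
          have hns : n - 1 + 1 = n := by omega
          rw [hns]
          have hcast : ((n - 1 : ℕ) : ℝ) + 1 = (n:ℝ) := by
            have h1 := Nat.cast_sub (by omega : 1 ≤ n) (R := ℝ)
            rw [h1]; push_cast; ring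
          rw [hcast]
          norm_num
      _ = (R^n - 1)/2 * M := by
          field_simp
  -- conclude
  have hgR : g R = p.eval w := by
    rw [hg]
    have hRne : ((R:ℂ)) ≠ 0 := by exact_mod_cast hR0.ne'
    have : ((R:ℝ):ℂ) * ω = w := by rw [hω]; field_simp
    simp only [this]
  have hg1 : ‖g 1‖ ≤ M := by
    rw [hg]
    simpa using le_msup p (by simpa using hω1)
  calc ‖p.eval w‖ = ‖g R‖ := by rw [hgR]
    _ = ‖g 1 + (g R - g 1)‖ := by congr 1; ring
    _ ≤ ‖g 1‖ + ‖g R - g 1‖ := norm_add_le _ _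
    _ ≤ M + (R^n - 1)/2 * M := by
        rw [← hftc]
        exact add_le_add hg1 hnormint
    _ = (R^n + 1)/2 * M := by ring

theorem stmt_2 (P : Polynomial ℂ) (n : ℕ) (hn : 0 < n) (hdeg : P.natDegree = n)
    (k : ℝ) (hk : 1 ≤ k) (hzeros : ∀ z : ℂ, P.IsRoot z → ‖z‖ ≤ k) :
    (2 * k ^ n / (1 + k ^ n)) * (⨆ z : Metric.sphere (0 : ℂ) 1, ‖P.eval (z : ℂ)‖) ≤
      ⨆ z : Metric.sphere (0 : ℂ) k, ‖P.eval (z : ℂ)‖ := by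
  show (2 * k ^ n / (1 + k ^ n)) * msup P 1 ≤ msup P k
  have hk0 : (0:ℝ) < k := lt_of_lt_of_le one_pos hk
  have hkc : ((k:ℝ):ℂ) ≠ 0 := by exact_mod_cast hk0.ne'
  have hPne : P ≠ 0 := by
    intro h; rw [h] at hdeg; simp at hdeg; omega
  have hlc : P.coeff n ≠ 0 := by
    rw [← hdeg]; exact Polynomial.leadingCoeff_ne_zero.mpr hPne
  have hPnz : ∀ v : ℂ, k < ‖v‖ → P.eval v ≠ 0 :=
    fun v hv h0 => absurd (hzeros v h0) (not_le.mpr hv)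
  -- the conjugate-reversed polynomial
  set Q : ℂ[X] := revp (fun i => (starRingEnd ℂ) (P.coeff i)) n with hQdef
  have hQeval : ∀ w : ℂ, w ≠ 0 →
      Q.eval w = w^n * (starRingEnd ℂ) (P.eval ((starRingEnd ℂ) w)⁻¹) := by
    intro w hw
    rw [hQdef, revp_eval _ _ hw]
    congr 1
    rw [Polynomial.eval_eq_sum_range' (n := n+1) (by omega), map_sum]
    apply Finset.sum_congr rfl
    intro i _
    rw [map_mul, map_pow, map_inv₀, Complex.conj_conj]
  have hQn : ∀ w : ℂ, w ≠ 0 →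
      ‖Q.eval w‖ = ‖w‖^n * ‖P.eval ((starRingEnd ℂ) w)⁻¹‖ := by
    intro w hw
    rw [hQeval w hw, norm_mul, norm_pow, RCLike.norm_conj]
  have hQ0 : Q.eval 0 ≠ 0 := by
    rw [hQdef, revp_eval_zero]
    simpa using hlc
  -- the rescaled polynomial p(z) = Q(z/k)
  set pQ : ℂ[X] := Q.comp (C ((k:ℂ)⁻¹) * X) with hpQdef
  have hpQeval : ∀ z : ℂ, pQ.eval z = Q.eval ((k:ℂ)⁻¹ * z) := by
    intro z; rw [hpQdef, Polynomial.eval_comp]; simp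
  have hcomp : ∀ u : ℂ, pQ.eval ((k:ℂ) * u) = Q.eval u := by
    intro u; rw [hpQeval]; congr 1; field_simp
  have hpQdeg : pQ.natDegree ≤ n := by
    refine le_trans (Polynomial.natDegree_comp_le) ?_
    calc Q.natDegree * (C ((k:ℂ)⁻¹) * X).natDegree ≤ n * 1 :=
          Nat.mul_le_mul (revp_natDegree_le _ _)
            (le_trans (Polynomial.natDegree_C_mul_le _ _) Polynomial.natDegree_X_le)
      _ = n := mul_one n
  have hpQroots : ∀ a ∈ pQ.roots, 1 ≤ ‖a‖ := by
    intro a ha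
    by_contra hlt
    push_neg at hlt
    have haroot : pQ.eval a = 0 := (Polynomial.mem_roots'.mp ha).2
    rw [hpQeval a] at haroot
    set w : ℂ := (k:ℂ)⁻¹ * a with hw
    by_cases hw0 : w = 0
    · rw [hw0] at haroot; exact hQ0 haroot
    · rw [hQeval w hw0] at haroot
      have h1 : w^n ≠ 0 := pow_ne_zero _ hw0
      have h2 : (starRingEnd ℂ) (P.eval ((starRingEnd ℂ) w)⁻¹) ≠ 0 := by
        rw [Ne, _root_.map_eq_zero]
        apply hPnz
        rw [norm_inv, RCLike.norm_conj]
        have hnw : ‖w‖ < k⁻¹ := by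
          rw [hw, norm_mul, norm_inv, Complex.norm_real, Real.norm_eq_abs, abs_of_pos hk0]
          calc k⁻¹ * ‖a‖ < k⁻¹ * 1 := by
                exact mul_lt_mul_of_pos_left hlt (by positivity)
            _ = k⁻¹ := mul_one _
        have hw0' : 0 < ‖w‖ := norm_pos_iff.mpr hw0
        have hkk : k * ‖w‖ < 1 := by
          have := mul_lt_mul_of_pos_left hnw hk0
          rwa [mul_inv_cancel₀ hk0.ne'] at this
        calc k = k * ‖w‖ * ‖w‖⁻¹ := by
              rw [mul_assoc, mul_inv_cancel₀ hw0'.ne', mul_one]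
          _ < 1 * ‖w‖⁻¹ := mul_lt_mul_of_pos_right hkk (by positivity)
          _ = ‖w‖⁻¹ := one_mul _
      exact (mul_ne_zero h1 h2) haroot
  -- Ankeny-Rivlin
  have hAR := ankenyRivlin pQ hn hpQdeg hpQroots hk
  -- translate the sups
  have hb : msup P 1 ≤ msup pQ k := by
    apply msup_le P zero_le_one
    intro v hv
    have hv0 : v ≠ 0 := by intro h; rw [h] at hv; simp at hv
    set w : ℂ := ((starRingEnd ℂ) v)⁻¹ with hwdef
    have hw0 : w ≠ 0 := by
      rw [hwdef]
      simp [_root_.map_eq_zero, hv0]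
    have hwn : ‖w‖ = 1 := by rw [hwdef, norm_inv, RCLike.norm_conj, hv]; norm_num
    have hback : ((starRingEnd ℂ) w)⁻¹ = v := by
      rw [hwdef, map_inv₀, Complex.conj_conj, inv_inv]
    have hval := hQn w hw0
    rw [hback, hwn, one_pow, one_mul] at hval
    rw [← hval, ← hcomp w]
    apply le_msup pQ
    rw [norm_mul, hwn, mul_one, Complex.norm_real, Real.norm_eq_abs, abs_of_pos hk0]
  have hc : msup pQ 1 ≤ msup P k / k^n := by
    apply msup_le pQ zero_le_one
    intro z hz
    have hz0 : z ≠ 0 := by intro h; rw [h] at hz; simp at hz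
    set w : ℂ := (k:ℂ)⁻¹ * z with hw
    have hw0 : w ≠ 0 := mul_ne_zero (inv_ne_zero hkc) hz0
    have hwn : ‖w‖ = k⁻¹ := by
      rw [hw, norm_mul, norm_inv, Complex.norm_real, Real.norm_eq_abs, abs_of_pos hk0,
        hz, mul_one]
    have hv : ‖((starRingEnd ℂ) w)⁻¹‖ = k := by
      rw [norm_inv, RCLike.norm_conj, hwn, inv_inv]
    rw [hpQeval z, ← hw, hQn w hw0, hwn]
    calc k⁻¹^n * ‖P.eval ((starRingEnd ℂ) w)⁻¹‖ ≤ k⁻¹^n * msup P k := by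
          exact mul_le_mul_of_nonneg_left (le_msup P hv) (by positivity)
      _ = msup P k / k^n := by rw [inv_pow, inv_mul_eq_div]
  -- put everything together
  have hkn : (0:ℝ) < k^n := by positivity
  have h1kn : (0:ℝ) < 1 + k^n := by positivity
  have hchain : msup P 1 ≤ (k^n + 1)/2 * (msup P k / k^n) := by
    calc msup P 1 ≤ msup pQ k := hb
      _ ≤ (k^n + 1)/2 * msup pQ 1 := hAR
      _ ≤ (k^n + 1)/2 * (msup P k / k^n) := by
          exact mul_le_mul_of_nonneg_left hc (by positivity)
  rw [div_mul_eq_mul_div, div_le_iff₀ h1kn]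
  have hchain2 : 2*k^n* msup P 1 ≤ (1+k^n) * msup P k := by
    have h4 := mul_le_mul_of_nonneg_left hchain (by positivity : (0:ℝ) ≤ 2*k^n)
    calc 2*k^n*msup P 1 ≤ 2*k^n*((k^n + 1)/2 * (msup P k / k^n)) := h4
      _ = (k^n/k^n) * ((k^n+1) * msup P k) := by ring
      _ = (1+k^n) * msup P k := by rw [div_self hkn.ne', one_mul]; ring
  linarith
end

section
/- Let $P(z) = c\prod_{j=1}^n (z - z_j)$ be a complex polynomial of degree $n$ with all zeros satisfying $|z_j| \le 1$. Then for every $z$ with $|z| = 1$ and $P(z) \ne 0$, one has $\operatorname{Re}\!\left( z \frac{P'(z)}{P(z)} \right) \ge \frac{n}{2}\left(1 + \frac{1}{n}\cdot\frac{|a_n| - |a_0|}{|a_n| + |a_0|}\right)$, where $a_n$ and $a_0$ are the leading coefficient and constant term of $P$. -/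
open Polynomial Finset

private lemma f_subadd (a b : ℝ) (ha0 : 0 ≤ a) (ha1 : a ≤ 1) (hb0 : 0 ≤ b) (hb1 : b ≤ 1) :
    (1 - a*b)/(1 + a*b) ≤ (1 - a)/(1 + a) + (1 - b)/(1 + b) := by
  have h1 : (0:ℝ) < 1 + a := by linarith
  have h2 : (0:ℝ) < 1 + b := by linarith
  have h3 : (0:ℝ) < 1 + a*b := by nlinarith
  rw [div_add_div _ _ (ne_of_gt h1) (ne_of_gt h2), div_le_div_iff₀ h3 (by positivity)]
  nlinarith [mul_nonneg (mul_nonneg (sub_nonneg.2 ha1) (sub_nonneg.2 hb1))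
    (sub_nonneg.2 (by nlinarith : a*b ≤ 1))]

private lemma prod_ineq {ι : Type*} (s : Finset ι) (t : ι → ℝ) (ht0 : ∀ j, 0 ≤ t j)
    (ht1 : ∀ j, t j ≤ 1) :
    (1 - ∏ j ∈ s, t j)/(1 + ∏ j ∈ s, t j) ≤ ∑ j ∈ s, (1 - t j)/(1 + t j) := by
  induction s using Finset.cons_induction with
  | empty => simp
  | cons a s ha ih =>
    rw [Finset.prod_cons, Finset.sum_cons]
    have hp0 : 0 ≤ ∏ j ∈ s, t j := Finset.prod_nonneg fun j _ => ht0 j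
    have hp1 : ∏ j ∈ s, t j ≤ 1 := Finset.prod_le_one (fun j _ => ht0 j) (fun j _ => ht1 j)
    calc (1 - t a * ∏ j ∈ s, t j)/(1 + t a * ∏ j ∈ s, t j)
        ≤ (1 - t a)/(1 + t a) + (1 - ∏ j ∈ s, t j)/(1 + ∏ j ∈ s, t j) :=
          f_subadd _ _ (ht0 a) (ht1 a) hp0 hp1
      _ ≤ (1 - t a)/(1 + t a) + ∑ j ∈ s, (1 - t j)/(1 + t j) := by linarith [ih]

private lemma re_term (w ζ : ℂ) (hw : ‖w‖ = 1) (hz : ‖ζ‖ ≤ 1) (hne : w - ζ ≠ 0) :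
    1/2 + 1/2 * ((1 - ‖ζ‖)/(1 + ‖ζ‖)) ≤ (w/(w - ζ)).re := by
  set t := ‖ζ‖ with ht
  have ht0 : 0 ≤ t := norm_nonneg _
  have htpos : (0:ℝ) < 1 + t := by linarith
  have hhalf : 1/2 + 1/2 * ((1 - t)/(1 + t)) = 1/(1+t) := by
    rw [eq_div_iff htpos.ne']
    field_simp
    ring
  rw [hhalf]
  have hwsq : w.re^2 + w.im^2 = 1 := by
    have := Complex.sq_norm w
    rw [Complex.normSq_apply] at this
    rw [hw] at this
    nlinarith [this]
  have hzsq : ζ.re^2 + ζ.im^2 = t^2 := by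
    have := Complex.sq_norm ζ
    rw [Complex.normSq_apply] at this
    rw [← ht] at this
    nlinarith [this]
  have hN : 0 < Complex.normSq (w - ζ) := Complex.normSq_pos.2 hne
  have hNeq : Complex.normSq (w - ζ) = (w.re - ζ.re)^2 + (w.im - ζ.im)^2 := by
    rw [Complex.normSq_apply]; simp [Complex.sub_re, Complex.sub_im]; ring
  rw [Complex.div_re, ← add_div, div_le_div_iff₀ htpos hN]
  rw [hNeq]
  have hcs : (w.re*ζ.re + w.im*ζ.im)^2 ≤ t^2 := by
    nlinarith [sq_nonneg (w.re*ζ.im - w.im*ζ.re)]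
  have hr : -(t) ≤ w.re*ζ.re + w.im*ζ.im := by nlinarith
  simp only [Complex.sub_re, Complex.sub_im]
  nlinarith [mul_nonneg (sub_nonneg.2 hz) (by linarith : (0:ℝ) ≤ t + (w.re*ζ.re + w.im*ζ.im))]

theorem stmt_3 (n : ℕ) (hn : 0 < n) (c : ℂ) (hc : c ≠ 0) (z : Fin n → ℂ)
    (hz : ∀ j, ‖z j‖ ≤ 1)
    (P : Polynomial ℂ) (hP : P = Polynomial.C c * ∏ j, (Polynomial.X - Polynomial.C (z j)))
    (w : ℂ) (hw : ‖w‖ = 1) (hPw : P.eval w ≠ 0) :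
    (n : ℝ) / 2 * (1 + (1 / n) * ((‖c‖ - ‖P.coeff 0‖) / (‖c‖ + ‖P.coeff 0‖))) ≤
      (w * P.derivative.eval w / P.eval w).re := by
  have hPe : P.eval w = c * ∏ j, (w - z j) := by
    simp [hP, eval_prod]
  have hfac : ∀ j, w - z j ≠ 0 := by
    intro j
    rw [hPe] at hPw
    have : ∏ j, (w - z j) ≠ 0 := fun h => hPw (by rw [h, mul_zero])
    exact Finset.prod_ne_zero_iff.1 this j (Finset.mem_univ j)
  have hd : derivative (∏ j : Fin n, (X - C (z j)))
      = ∑ j : Fin n, ∏ i ∈ Finset.univ.erase j, (X - C (z i)) := by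
    rw [Finset.prod_eq_multiset_prod, Polynomial.derivative_prod, ← Finset.sum_eq_multiset_sum]
    refine Finset.sum_congr rfl fun j _ => ?_
    rw [← Finset.erase_val, ← Finset.prod_eq_multiset_prod]
    simp
  have hDe : P.derivative.eval w = c * ∑ j, ∏ i ∈ Finset.univ.erase j, (w - z i) := by
    rw [hP, derivative_mul, derivative_C, zero_mul, zero_add, eval_mul, eval_C, hd]
    simp [eval_finset_sum, eval_prod]
  have key : w * P.derivative.eval w / P.eval w = ∑ j, w / (w - z j) := by
    rw [hPe, hDe, Finset.mul_sum, Finset.mul_sum, Finset.sum_div]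
    refine Finset.sum_congr rfl fun j _ => ?_
    rw [← Finset.mul_prod_erase Finset.univ _ (Finset.mem_univ j)]
    have h1 : w - z j ≠ 0 := hfac j
    have h2 : ∏ i ∈ Finset.univ.erase j, (w - z i) ≠ 0 :=
      Finset.prod_ne_zero_iff.2 fun i _ => hfac i
    field_simp
  have ha0 : ‖P.coeff 0‖ = ‖c‖ * ∏ j, ‖z j‖ := by
    rw [Polynomial.coeff_zero_eq_eval_zero, hP]
    simp [eval_prod, norm_prod]
  set p := ∏ j, ‖z j‖ with hp
  have hp0 : 0 ≤ p := Finset.prod_nonneg fun j _ => norm_nonneg _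
  have hp1 : p ≤ 1 := Finset.prod_le_one (fun j _ => norm_nonneg _) (fun j _ => hz j)
  have hcpos : 0 < ‖c‖ := norm_pos_iff.2 hc
  have hnn : (n:ℝ) ≠ 0 := Nat.cast_ne_zero.2 hn.ne'
  have hrhs : (n : ℝ) / 2 * (1 + (1 / n) * ((‖c‖ - ‖P.coeff 0‖) / (‖c‖ + ‖P.coeff 0‖)))
      = (n:ℝ)/2 + 1/2 * ((1 - p)/(1 + p)) := by
    rw [ha0]
    have h1 : ‖c‖ - ‖c‖ * p = ‖c‖ * (1 - p) := by ring
    have h2 : ‖c‖ + ‖c‖ * p = ‖c‖ * (1 + p) := by ring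
    rw [h1, h2, mul_div_mul_left _ _ (ne_of_gt hcpos)]
    field_simp
  rw [hrhs, key]
  have hresum : (∑ j, w / (w - z j)).re = ∑ j, (w / (w - z j)).re := Complex.re_sum _ _
  rw [hresum]
  have hstep : ∀ j ∈ Finset.univ, 1/2 + 1/2 * ((1 - ‖z j‖)/(1 + ‖z j‖)) ≤ (w/(w - z j)).re :=
    fun j _ => re_term w (z j) hw (hz j) (hfac j)
  have hsum := Finset.sum_le_sum hstep
  have hsplit : ∑ j : Fin n, (1/2 + 1/2 * ((1 - ‖z j‖)/(1 + ‖z j‖)))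
      = (n:ℝ)/2 + 1/2 * ∑ j, (1 - ‖z j‖)/(1 + ‖z j‖) := by
    rw [Finset.sum_add_distrib, Finset.sum_const, Finset.card_univ, Fintype.card_fin,
      ← Finset.mul_sum]
    simp [nsmul_eq_mul]
    ring
  have hpi := prod_ineq Finset.univ (fun j => ‖z j‖) (fun j => norm_nonneg _) hz
  rw [hsplit] at hsum
  simp only [← hp] at hsum hpi
  linarith
end

section
/- Let $P(z)$ be a complex polynomial of degree $n$ with all zeros in $|z| \le k$, where $0 < k \le 1$. Then for every $z$ with $|z| = 1$, $|P'(z)| \ge \frac{n}{1+k}\left(1 + \frac{k}{n}\cdot\frac{k^n |a_n| - |a_0|}{k^n |a_n| + |a_0|}\right) |P(z)|$, where $a_n$ is the leading coefficient and $a_0$ the constant term of $P$. -/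
private lemma aux_subadd {a b : ℝ} (ha0 : 0 ≤ a) (ha1 : a ≤ 1) (hb0 : 0 ≤ b) (hb1 : b ≤ 1) :
    (1 - a*b)/(1+a*b) ≤ (1-a)/(1+a) + (1-b)/(1+b) := by
  rw [div_add_div _ _ (by positivity) (by positivity),
    div_le_div_iff₀ (by positivity) (by positivity)]
  nlinarith [mul_nonneg (mul_nonneg (sub_nonneg.2 ha1) (sub_nonneg.2 hb1))
    (sub_nonneg.2 (mul_le_one₀ ha1 hb0 hb1))]

private lemma aux_prod_mem (s : Multiset ℝ) (h : ∀ x ∈ s, 0 ≤ x ∧ x ≤ 1) :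
    0 ≤ s.prod ∧ s.prod ≤ 1 := by
  induction s using Multiset.induction with
  | empty => simp
  | cons a t ih =>
    have ha := h a (Multiset.mem_cons_self a t)
    have ht := ih (fun x hx => h x (Multiset.mem_cons_of_mem hx))
    simp only [Multiset.prod_cons]
    exact ⟨mul_nonneg ha.1 ht.1, mul_le_one₀ ha.2 ht.1 ht.2⟩

private lemma aux_A (s : Multiset ℝ) (h : ∀ x ∈ s, 0 ≤ x ∧ x ≤ 1) :
    (1 - s.prod)/(1 + s.prod) ≤ (s.map (fun x => (1-x)/(1+x))).sum := by
  induction s using Multiset.induction with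
  | empty => simp
  | cons a t ih =>
    have ha := h a (Multiset.mem_cons_self a t)
    have ht' : ∀ x ∈ t, 0 ≤ x ∧ x ≤ 1 := fun x hx => h x (Multiset.mem_cons_of_mem hx)
    have hp := aux_prod_mem t ht'
    simp only [Multiset.prod_cons, Multiset.map_cons, Multiset.sum_cons]
    calc (1 - a * t.prod)/(1 + a * t.prod)
        ≤ (1-a)/(1+a) + (1 - t.prod)/(1 + t.prod) := aux_subadd ha.1 ha.2 hp.1 hp.2
      _ ≤ (1-a)/(1+a) + (t.map (fun x => (1-x)/(1+x))).sum := by linarith [ih ht']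

private lemma aux_term {r k : ℝ} (hr0 : 0 ≤ r) (hrk : r ≤ k) (hk0 : 0 < k) (hk1 : k ≤ 1) :
    1/(1+k) + (k/(1+k)) * ((1 - r/k)/(1 + r/k)) ≤ 1/(1+r) := by
  have h1 : (1 - r/k)/(1 + r/k) = (k - r)/(k + r) := by
    rw [div_eq_div_iff (by positivity) (by positivity)]
    field_simp
  have key : 1/(1+r) - (1/(1+k) + (k/(1+k)) * ((k - r)/(k + r)))
      = (r*(1-k)*(k-r))/((1+r)*(1+k)*(k+r)) := by
    field_simp
    ring
  have hnum : 0 ≤ r*(1-k)*(k-r) :=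
    mul_nonneg (mul_nonneg hr0 (by linarith)) (by linarith)
  have hden : (0:ℝ) ≤ (1+r)*(1+k)*(k+r) := by positivity
  have := div_nonneg hnum hden
  rw [h1]
  linarith [key ▸ this]

private lemma aux_prod_div (s : Multiset ℝ) (k : ℝ) (hk : k ≠ 0) :
    (s.map (fun x => x/k)).prod = s.prod / k^s.card := by
  induction s using Multiset.induction with
  | empty => simp
  | cons a t ih =>
    simp only [Multiset.map_cons, Multiset.prod_cons, Multiset.card_cons, ih, pow_succ]
    rw [div_mul_div_comm]
    ring_nf

private lemma aux_sum_split (s : Multiset ℝ) (c : ℝ) (f : ℝ → ℝ) :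
    (s.map (fun x => c + f x)).sum = s.card * c + (s.map f).sum := by
  induction s using Multiset.induction with
  | empty => simp
  | cons a t ih =>
    simp only [Multiset.map_cons, Multiset.sum_cons, Multiset.card_cons, ih]
    push_cast
    ring

private lemma aux_D (s : Multiset ℝ) (k : ℝ) (hk0 : 0 < k) (hk1 : k ≤ 1)
    (hc : 0 < s.card) (h : ∀ x ∈ s, 0 ≤ x ∧ x ≤ k) :
    (s.card : ℝ)/(1+k) * (1 + (k/s.card) * ((k^s.card - s.prod)/(k^s.card + s.prod)))
      ≤ (s.map (fun r => 1/(1+r))).sum := by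
  have hmem : ∀ x ∈ s, 0 ≤ x ∧ x ≤ 1 := fun x hx => ⟨(h x hx).1, le_trans (h x hx).2 hk1⟩
  obtain ⟨hp0, hp1⟩ := aux_prod_mem s hmem
  set c := s.card with hcdef
  set p := s.prod with hpdef
  have hcne : (c:ℝ) ≠ 0 := Nat.cast_ne_zero.2 hc.ne'
  have hkc : (0:ℝ) < k^c := by positivity
  -- rewrite target in split form
  have hQ : (k^c - p)/(k^c + p) = (1 - p/k^c)/(1 + p/k^c) := by
    rw [div_eq_div_iff (by positivity) (by positivity)]
    field_simp
  have hLHS : (c : ℝ)/(1+k) * (1 + (k/c) * ((k^c - p)/(k^c + p)))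
      = c * (1/(1+k)) + (k/(1+k)) * ((1 - p/k^c)/(1 + p/k^c)) := by
    rw [hQ]
    field_simp
  rw [hLHS]
  -- lemma A applied to scaled multiset
  have hmem' : ∀ x ∈ s.map (fun x => x/k), 0 ≤ x ∧ x ≤ 1 := by
    intro x hx
    obtain ⟨y, hy, rfl⟩ := Multiset.mem_map.1 hx
    exact ⟨div_nonneg (h y hy).1 hk0.le, (div_le_one hk0).2 (h y hy).2⟩
  have hA := aux_A _ hmem'
  rw [aux_prod_div s k hk0.ne', Multiset.map_map] at hA
  simp only [Function.comp] at hA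
  -- per-term bound
  have hterm : (s.map (fun x => 1/(1+k) + (k/(1+k)) * ((1 - x/k)/(1 + x/k)))).sum
      ≤ (s.map (fun r => 1/(1+r))).sum := by
    apply Multiset.sum_map_le_sum_map
    intro x hx
    exact aux_term (h x hx).1 (h x hx).2 hk0 hk1
  rw [aux_sum_split s (1/(1+k)) (fun x => (k/(1+k)) * ((1 - x/k)/(1 + x/k)))] at hterm
  have hconst : 0 ≤ k/(1+k) := by positivity
  calc (c:ℝ) * (1/(1+k)) + (k/(1+k)) * ((1 - p/k^c)/(1 + p/k^c))
      ≤ (c:ℝ) * (1/(1+k)) + ((s.map (fun x => k/(1+k) * ((1-x/k)/(1+x/k)))).sum) := by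
        have h2 := mul_le_mul_of_nonneg_left hA hconst
        rw [← Multiset.sum_map_mul_left] at h2
        linarith
    _ ≤ (s.map (fun r => 1/(1+r))).sum := by
        simpa using hterm

open Polynomial in
private lemma aux_B (w : ℂ) (t : Multiset ℂ) (h : ∀ z ∈ t, z ≠ w) :
    eval w (derivative (t.map (fun z => X - C z)).prod)
      = eval w (t.map (fun z => X - C z)).prod * (t.map (fun z => (w - z)⁻¹)).sum := by
  induction t using Multiset.induction with
  | empty => simp
  | cons a t ih =>
    have ha : w - a ≠ 0 := sub_ne_zero.2 ((h a (Multiset.mem_cons_self a t)).symm)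
    have ih' := ih (fun z hz => h z (Multiset.mem_cons_of_mem hz))
    simp only [Multiset.map_cons, Multiset.prod_cons, Multiset.sum_cons, derivative_mul,
      derivative_sub, derivative_X, derivative_C, sub_zero, eval_add, eval_mul, eval_one,
      eval_sub, eval_X, eval_C, one_mul, ih']
    field_simp

private lemma aux_C {w z : ℂ} (hw : ‖w‖ = 1) (hz1 : ‖z‖ ≤ 1) (hne : z ≠ w) :
    1/(1 + ‖z‖) ≤ (w * (w - z)⁻¹).re := by
  have hwz : w - z ≠ 0 := sub_ne_zero.2 (Ne.symm hne)
  have hr0 : (0:ℝ) ≤ ‖z‖ := norm_nonneg z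
  have hw2 : w.re*w.re + w.im*w.im = 1 := by
    have h1 : Complex.normSq w = 1 := by
      rw [← Complex.sq_norm, hw]; norm_num
    simpa [Complex.normSq_apply] using h1
  have hz2 : z.re*z.re + z.im*z.im = ‖z‖^2 := by
    rw [Complex.sq_norm, Complex.normSq_apply]
  have ht : -(‖z‖) ≤ w.re*z.re + w.im*z.im := by
    have h1 := Complex.abs_re_le_norm (w * (starRingEnd ℂ) z)
    have h2 : (w * (starRingEnd ℂ) z).re = w.re*z.re + w.im*z.im := by
      simp [Complex.mul_re, Complex.conj_re, Complex.conj_im]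
    have h3 : ‖w * (starRingEnd ℂ) z‖ = ‖z‖ := by
      rw [norm_mul, Complex.norm_conj, hw, one_mul]
    rw [h2, h3] at h1
    have := abs_le.1 h1
    linarith [this.1]
  have hD : 0 < Complex.normSq (w - z) := Complex.normSq_pos.2 hwz
  rw [mul_comm, ← div_eq_inv_mul, Complex.div_re, ← add_div,
    div_le_div_iff₀ (by positivity) hD]
  simp only [Complex.normSq_apply, Complex.sub_re, Complex.sub_im] at *
  nlinarith [mul_nonneg (sub_nonneg.2 hz1) (by linarith : (0:ℝ) ≤ ‖z‖ + (w.re*z.re + w.im*z.im))]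

private lemma aux_norm_prod (t : Multiset ℂ) : ‖t.prod‖ = (t.map (fun z => ‖z‖)).prod := by
  induction t using Multiset.induction with
  | empty => simp
  | cons a t ih => simp [Multiset.prod_cons, norm_mul, ih]

private lemma aux_re_sum (t : Multiset ℂ) : (t.sum).re = (t.map Complex.re).sum := by
  induction t using Multiset.induction with
  | empty => simp
  | cons a t ih => simp [Multiset.sum_cons, ih]

theorem stmt_4 (P : Polynomial ℂ) (n : ℕ) (hn : 0 < n) (hdeg : P.natDegree = n)
    (k : ℝ) (hk0 : 0 < k) (hk1 : k ≤ 1)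
    (hzeros : ∀ z : ℂ, P.IsRoot z → ‖z‖ ≤ k)
    (w : ℂ) (hw : ‖w‖ = 1) :
    (n : ℝ) / (1 + k) *
        (1 + (k / n) * ((k ^ n * ‖P.leadingCoeff‖ - ‖P.coeff 0‖) /
          (k ^ n * ‖P.leadingCoeff‖ + ‖P.coeff 0‖))) * ‖P.eval w‖ ≤
      ‖P.derivative.eval w‖ := by
  by_cases hPw : P.eval w = 0
  · simp [hPw]
  · have hP0 : P ≠ 0 := fun h => by rw [h] at hdeg; simp at hdeg; omega
    have hsplit : Polynomial.Splits P := IsAlgClosed.splits P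
    have hfact := hsplit.eq_prod_roots
    have hcard : Multiset.card P.roots = n := by
      rw [Polynomial.splits_iff_card_roots.mp hsplit, hdeg]
    have ha : P.leadingCoeff ≠ 0 := Polynomial.leadingCoeff_ne_zero.mpr hP0
    have hA0 : 0 < ‖P.leadingCoeff‖ := norm_pos_iff.2 ha
    set R := P.roots with hR
    have hroots_ne : ∀ z ∈ R, z ≠ w := by
      intro z hz hzw
      exact hPw (hzw ▸ (Polynomial.isRoot_of_mem_roots hz))
    have hrootsk : ∀ z ∈ R, ‖z‖ ≤ k := fun z hz => hzeros z (Polynomial.isRoot_of_mem_roots hz)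
    set M := (R.map (fun z => Polynomial.X - Polynomial.C z)).prod with hM
    set T := (R.map (fun z => (w - z)⁻¹)).sum with hT
    have hevalP : P.eval w = P.leadingCoeff * M.eval w := by
      conv_lhs => rw [hfact]
      rw [Polynomial.eval_mul, Polynomial.eval_C]
    have hderivP : P.derivative.eval w = P.eval w * T := by
      conv_lhs => rw [hfact]
      rw [Polynomial.derivative_C_mul, Polynomial.eval_mul, Polynomial.eval_C,
        aux_B w R hroots_ne, hevalP]
      ring
    set s := R.map (fun z => ‖z‖) with hs
    have hscard : Multiset.card s = n := by rw [hs, Multiset.card_map, hcard]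
    have hsmem : ∀ x ∈ s, 0 ≤ x ∧ x ≤ k := by
      intro x hx
      obtain ⟨z, hz, rfl⟩ := Multiset.mem_map.1 hx
      exact ⟨norm_nonneg z, hrootsk z hz⟩
    have hp0 : 0 ≤ s.prod :=
      (aux_prod_mem s (fun x hx => ⟨(hsmem x hx).1, le_trans (hsmem x hx).2 hk1⟩)).1
    have hre : (s.map (fun r => 1/(1+r))).sum ≤ (w * T).re := by
      have h1 : w * T = (R.map (fun z => w * (w - z)⁻¹)).sum := by
        rw [hT, Multiset.sum_map_mul_left]
      rw [h1, aux_re_sum, Multiset.map_map, Multiset.map_map]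
      apply Multiset.sum_map_le_sum_map
      intro z hz
      simp only [Function.comp_apply]
      exact aux_C hw (le_trans (hrootsk z hz) hk1) (hroots_ne z hz)
    have hD := aux_D s k hk0 hk1 (by rw [hscard]; exact hn) hsmem
    rw [hscard] at hD
    have hprod : ‖P.coeff 0‖ = ‖P.leadingCoeff‖ * s.prod := by
      rw [Polynomial.coeff_zero_eq_eval_zero]
      conv_lhs => rw [hfact]
      rw [Polynomial.eval_mul, Polynomial.eval_C, norm_mul, hM, Polynomial.eval_multiset_prod,
        Multiset.map_map, aux_norm_prod, Multiset.map_map, hs]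
      congr 2
      apply Multiset.map_congr rfl
      intro z _
      simp
    have hkn : (0:ℝ) < k^n := pow_pos hk0 n
    have hfac : (k ^ n * ‖P.leadingCoeff‖ - ‖P.coeff 0‖) / (k ^ n * ‖P.leadingCoeff‖ + ‖P.coeff 0‖)
        = (k^n - s.prod)/(k^n + s.prod) := by
      rw [hprod, div_eq_div_iff
        (by nlinarith [mul_nonneg hA0.le hp0]) (by nlinarith)]
      ring
    have hTre : (n:ℝ)/(1+k) * (1 + (k/n) * ((k ^ n * ‖P.leadingCoeff‖ - ‖P.coeff 0‖) /
          (k ^ n * ‖P.leadingCoeff‖ + ‖P.coeff 0‖))) ≤ ‖T‖ := by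
      rw [hfac]
      calc (n:ℝ)/(1+k) * (1 + (k/n) * ((k^n - s.prod)/(k^n + s.prod)))
          ≤ (s.map (fun r => 1/(1+r))).sum := hD
        _ ≤ (w * T).re := hre
        _ ≤ ‖w * T‖ := by exact Complex.re_le_norm _
        _ = ‖T‖ := by rw [norm_mul, hw, one_mul]
    calc (n : ℝ) / (1 + k) *
        (1 + (k / n) * ((k ^ n * ‖P.leadingCoeff‖ - ‖P.coeff 0‖) /
          (k ^ n * ‖P.leadingCoeff‖ + ‖P.coeff 0‖))) * ‖P.eval w‖
        ≤ ‖T‖ * ‖P.eval w‖ := mul_le_mul_of_nonneg_right hTre (norm_nonneg _)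
      _ = ‖P.derivative.eval w‖ := by rw [hderivP, norm_mul]; ring
end

section
/- Let $P(z) = c\prod_{j=1}^n (z-z_j)$ with all $|z_j| \le k$, $0 < k \le 1$, and let $\gamma = (\gamma_1,\dots,\gamma_n)$ be nonnegative reals, not all zero, with sum $\Lambda$. Define the generalized derivative $P^\gamma(z) = P(z)\sum_{j=1}^n \frac{\gamma_j}{z - z_j}$. Then for all $|z| = 1$, $|P^\gamma(z)| \ge \frac{k}{1+k}\left(\frac{\Lambda}{k} + \gamma_m \cdot \frac{k^n|a_n| - |a_0|}{k^n|a_n| + |a_0|}\right) |P(z)|$, where $\gamma_m = \min_j \gamma_j$, $a_n$ is the leading coefficient and $a_0$ the constant term of $P$. -/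
open Finset

lemma two_var (a b : ℝ) (ha0 : 0 ≤ a) (ha1 : a ≤ 1) (hb0 : 0 ≤ b) (hb1 : b ≤ 1) :
    (1 - a*b)/(1+a*b) ≤ (1-a)/(1+a) + (1-b)/(1+b) := by
  have h1 : (0:ℝ) < 1 + a := by linarith
  have h2 : (0:ℝ) < 1 + b := by linarith
  have h3 : (0:ℝ) < 1 + a*b := by positivity
  have hab1 : a * b ≤ 1 := by nlinarith
  rw [div_add_div _ _ (ne_of_gt h1) (ne_of_gt h2), div_le_div_iff₀ h3 (by positivity)]
  nlinarith [mul_nonneg (mul_nonneg (sub_nonneg.2 hab1) (sub_nonneg.2 ha1)) (sub_nonneg.2 hb1)]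

lemma prod_lemma {ι : Type*} [DecidableEq ι] (T : Finset ι) (s : ι → ℝ) (h0 : ∀ j ∈ T, 0 ≤ s j)
    (h1 : ∀ j ∈ T, s j ≤ 1) :
    (1 - ∏ j ∈ T, s j)/(1 + ∏ j ∈ T, s j) ≤ ∑ j ∈ T, (1 - s j)/(1 + s j) := by
  induction T using Finset.induction with
  | empty => simp
  | @insert a T ha ih =>
    have h0' : ∀ j ∈ T, 0 ≤ s j := fun j hj => h0 j (mem_insert_of_mem hj)
    have h1' : ∀ j ∈ T, s j ≤ 1 := fun j hj => h1 j (mem_insert_of_mem hj)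
    have hp0 : 0 ≤ ∏ j ∈ T, s j := Finset.prod_nonneg h0'
    have hp1 : ∏ j ∈ T, s j ≤ 1 := Finset.prod_le_one h0' h1'
    rw [Finset.prod_insert ha, Finset.sum_insert ha]
    calc (1 - s a * ∏ j ∈ T, s j)/(1 + s a * ∏ j ∈ T, s j)
        ≤ (1 - s a)/(1 + s a) + (1 - ∏ j ∈ T, s j)/(1 + ∏ j ∈ T, s j) :=
          two_var _ _ (h0 a (mem_insert_self a T)) (h1 a (mem_insert_self a T)) hp0 hp1
      _ ≤ (1 - s a)/(1 + s a) + ∑ j ∈ T, (1 - s j)/(1 + s j) := by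
          gcongr ?_ + ?_
          · exact le_refl _
          · exact ih h0' h1'

lemma prodk (n : ℕ) (k : ℝ) (hk0 : 0 < k) (r : Fin n → ℝ)
    (hr0 : ∀ j, 0 ≤ r j) (hrk : ∀ j, r j ≤ k) :
    (k^n - ∏ j, r j)/(k^n + ∏ j, r j) ≤ ∑ j, (k - r j)/(k + r j) := by
  have key := prod_lemma Finset.univ (fun j => r j / k)
    (fun j _ => div_nonneg (hr0 j) hk0.le)
    (fun j _ => div_le_one_of_le₀ (hrk j) hk0.le)
  have hkn : (0:ℝ) < k ^ n := pow_pos hk0 n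
  have hprod : ∏ j, r j / k = (∏ j, r j) / k ^ n := by
    rw [Finset.prod_div_distrib, Finset.prod_const, Finset.card_univ, Fintype.card_fin]
  rw [hprod] at key
  have e1 : (1 - (∏ j, r j) / k ^ n)/(1 + (∏ j, r j) / k ^ n)
      = (k^n - ∏ j, r j)/(k^n + ∏ j, r j) := by
    have hpn : 0 ≤ (∏ j, r j) / k ^ n := div_nonneg (Finset.prod_nonneg fun j _ => hr0 j) hkn.le
    have hp : 0 ≤ ∏ j, r j := Finset.prod_nonneg fun j _ => hr0 j
    rw [div_eq_div_iff (by linarith) (by linarith)]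
    field_simp
  have e2 : ∀ j, (1 - r j / k)/(1 + r j / k) = (k - r j)/(k + r j) := by
    intro j
    have h1 : 0 ≤ r j / k := div_nonneg (hr0 j) hk0.le
    have h2 := hr0 j
    rw [div_eq_div_iff (by linarith) (by linarith)]
    field_simp
  rw [e1] at key
  calc (k^n - ∏ j, r j)/(k^n + ∏ j, r j) ≤ ∑ j, (1 - r j / k)/(1 + r j / k) := key
    _ = ∑ j, (k - r j)/(k + r j) := Finset.sum_congr rfl fun j _ => e2 j

lemma real_main (n : ℕ) (k : ℝ) (hk0 : 0 < k) (hk1 : k ≤ 1)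
    (r γ : Fin n → ℝ) (hr0 : ∀ j, 0 ≤ r j) (hrk : ∀ j, r j ≤ k)
    (γm : ℝ) (hγm : ∀ j, γm ≤ γ j) (hγm0 : 0 ≤ γm) :
    k/(1+k)*((∑ j, γ j)/k + γm*((k^n - ∏ j, r j)/(k^n + ∏ j, r j)))
      ≤ ∑ j, γ j/(1 + r j) := by
  have hk1' : (0:ℝ) < 1 + k := by linarith
  -- per-term bound
  have step1 : ∀ j, γ j/(1+k) + γm * (k * ((k - r j)/(k + r j)))/(1+k) ≤ γ j/(1 + r j) := by
    intro j
    have h1 : (0:ℝ) < k + r j := by have := hr0 j; linarith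
    have h2 : (0:ℝ) < 1 + r j := by have := hr0 j; linarith
    have hγj : γm ≤ γ j := hγm j
    have hkr : 0 ≤ k - r j := by have := hrk j; linarith
    have eL : γ j/(1+k) + γm * (k * ((k - r j)/(k + r j)))/(1+k)
        = (γ j*(k + r j) + γm*k*(k - r j))/((1+k)*(k + r j)) := by
      field_simp
    rw [eL, div_le_div_iff₀ (by positivity) h2]
    nlinarith [mul_nonneg (mul_nonneg hkr (sub_nonneg.2 hγj)) h1.le,
      mul_nonneg (mul_nonneg (mul_nonneg hkr hγm0) (hr0 j)) (sub_nonneg.2 hk1)]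
  have hsum : ∑ j, (γ j/(1+k) + γm * (k * ((k - r j)/(k + r j)))/(1+k))
      ≤ ∑ j, γ j/(1 + r j) := Finset.sum_le_sum fun j _ => step1 j
  have hsplit : ∑ j, (γ j/(1+k) + γm * (k * ((k - r j)/(k + r j)))/(1+k))
      = (∑ j, γ j)/(1+k) + γm * k * (∑ j, (k - r j)/(k + r j))/(1+k) := by
    rw [Finset.sum_add_distrib, Finset.sum_div, Finset.mul_sum, Finset.sum_div]
    congr 1
    · exact Finset.sum_congr rfl fun j _ => by ring
  have hA := prodk n k hk0 r hr0 hrk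
  have hfinal : k/(1+k)*((∑ j, γ j)/k + γm*((k^n - ∏ j, r j)/(k^n + ∏ j, r j)))
      ≤ (∑ j, γ j)/(1+k) + γm * k * (∑ j, (k - r j)/(k + r j))/(1+k) := by
    have e : k/(1+k)*((∑ j, γ j)/k + γm*((k^n - ∏ j, r j)/(k^n + ∏ j, r j)))
        = (∑ j, γ j)/(1+k) + γm * k * ((k^n - ∏ j, r j)/(k^n + ∏ j, r j))/(1+k) := by
      have hp : 0 ≤ ∏ j, r j := Finset.prod_nonneg fun j _ => hr0 j
      have hkn : (0:ℝ) < k ^ n := pow_pos hk0 n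
      have hden : (0:ℝ) < k^n + ∏ j, r j := by linarith
      field_simp
    rw [e]
    gcongr
  linarith [hsplit ▸ hsum]

lemma re_bound (w u : ℂ) (hw : ‖w‖ = 1) (hne : w ≠ u) (hu1 : ‖u‖ ≤ 1) :
    1/(1 + ‖u‖) ≤ (w/(w - u)).re := by
  have hd : w - u ≠ 0 := sub_ne_zero.2 hne
  have hN : 0 < Complex.normSq (w - u) := Complex.normSq_pos.2 hd
  have hw2 : w.re^2 + w.im^2 = 1 := by
    have := Complex.sq_norm w
    rw [hw] at this
    rw [Complex.normSq_apply] at this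
    nlinarith [this]
  have hu2 : u.re^2 + u.im^2 = ‖u‖^2 := by
    have := Complex.sq_norm u
    rw [Complex.normSq_apply] at this
    nlinarith [this]
  have hr0 : 0 ≤ ‖u‖ := norm_nonneg u
  have hre : (w/(w-u)).re = (w.re*(w-u).re + w.im*(w-u).im)/Complex.normSq (w-u) := by
    rw [Complex.div_re]
    ring
  have hNs : Complex.normSq (w - u) = (w.re - u.re)^2 + (w.im - u.im)^2 := by
    rw [Complex.normSq_apply, Complex.sub_re, Complex.sub_im]
    ring
  rw [hre, Complex.sub_re, Complex.sub_im]
  rw [div_le_div_iff₀ (by linarith) hN, hNs]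
  set r := ‖u‖
  set t := w.re*u.re + w.im*u.im with ht
  have hcs : t^2 ≤ r^2 := by nlinarith [sq_nonneg (w.re*u.im - w.im*u.re)]
  have htr : -r ≤ t := by nlinarith [sq_nonneg (t + r)]
  nlinarith [mul_nonneg (sub_nonneg.2 hu1) (by linarith : (0:ℝ) ≤ r + t)]

theorem stmt_5 (n : ℕ) (hn : 0 < n) (c : ℂ) (hc : c ≠ 0) (z : Fin n → ℂ)
    (k : ℝ) (hk0 : 0 < k) (hk1 : k ≤ 1) (hz : ∀ j, ‖z j‖ ≤ k)
    (γ : Fin n → ℝ) (hγ : ∀ j, 0 ≤ γ j) (hγ0 : ∃ j, γ j ≠ 0)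
    (γm : ℝ) (hγm : IsLeast (Set.range γ) γm)
    (P : Polynomial ℂ) (hP : P = Polynomial.C c * ∏ j, (Polynomial.X - Polynomial.C (z j)))
    (Pγ : Polynomial ℂ)
    (hPγ : Pγ = Polynomial.C c * ∑ j, Polynomial.C (γ j : ℂ) *
      ∏ i ∈ Finset.univ.erase j, (Polynomial.X - Polynomial.C (z i)))
    (w : ℂ) (hw : ‖w‖ = 1) :
    k / (1 + k) *
        ((∑ j, γ j) / k + γm * ((k ^ n * ‖c‖ - ‖P.coeff 0‖) /
          (k ^ n * ‖c‖ + ‖P.coeff 0‖))) * ‖P.eval w‖ ≤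
      ‖Pγ.eval w‖ := by
  obtain ⟨hmem, hlb⟩ := hγm
  have hγmle : ∀ j, γm ≤ γ j := fun j => hlb (Set.mem_range_self j)
  have hγm0 : 0 ≤ γm := by
    obtain ⟨j0, hj0⟩ := hmem
    exact hj0 ▸ hγ j0
  have hPe : ∀ v : ℂ, P.eval v = c * ∏ j, (v - z j) := by
    intro v
    rw [hP]
    simp [Polynomial.eval_prod]
  by_cases hPw : P.eval w = 0
  · rw [hPw]
    simp
  have hne : ∀ j, w - z j ≠ 0 := by
    intro j h
    exact hPw (by rw [hPe w]; exact mul_eq_zero_of_right c (Finset.prod_eq_zero (Finset.mem_univ j) h))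
  set S : ℂ := ∑ j, (γ j : ℂ)/(w - z j) with hS
  have hPγe : Pγ.eval w = P.eval w * S := by
    rw [hPγ, hS]
    simp only [Polynomial.eval_mul, Polynomial.eval_C, Polynomial.eval_finset_sum,
      Polynomial.eval_prod, Polynomial.eval_sub, Polynomial.eval_X]
    rw [hPe w, Finset.mul_sum, Finset.mul_sum]
    refine Finset.sum_congr rfl fun j _ => ?_
    rw [← Finset.mul_prod_erase Finset.univ _ (Finset.mem_univ j)]
    field_simp [hne j]
  -- the key norm bound on S
  have h2 : (w*S).re = ∑ j, γ j * (w/(w - z j)).re := by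
    rw [hS, Finset.mul_sum, Complex.re_sum]
    refine Finset.sum_congr rfl fun j _ => ?_
    have e : w * ((γ j : ℂ)/(w - z j)) = (γ j : ℂ) * (w/(w - z j)) := by ring
    rw [e]
    simp [Complex.mul_re]
  have h1 : (w*S).re ≤ ‖S‖ := by
    calc (w*S).re ≤ ‖w*S‖ := Complex.re_le_norm (w*S)
      _ = ‖S‖ := by rw [norm_mul, hw, one_mul]
  have h3 : ∑ j, γ j / (1 + ‖z j‖) ≤ ∑ j, γ j * (w/(w - z j)).re := by
    refine Finset.sum_le_sum fun j _ => ?_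
    have hb := re_bound w (z j) hw (fun h => hne j (by rw [h, sub_self])) (le_trans (hz j) hk1)
    calc γ j/(1+‖z j‖) = γ j * (1/(1+‖z j‖)) := by ring
      _ ≤ γ j * (w/(w - z j)).re := mul_le_mul_of_nonneg_left hb (hγ j)
  have hcoeff : ‖P.coeff 0‖ = ‖c‖ * ∏ j, ‖z j‖ := by
    rw [Polynomial.coeff_zero_eq_eval_zero, hPe 0, norm_mul, norm_prod]
    simp
  have hc' : ‖c‖ ≠ 0 := norm_ne_zero_iff.2 hc
  have hratio : (k ^ n * ‖c‖ - ‖P.coeff 0‖) / (k ^ n * ‖c‖ + ‖P.coeff 0‖)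
      = (k^n - ∏ j, ‖z j‖)/(k^n + ∏ j, ‖z j‖) := by
    rw [hcoeff,
      show k ^ n * ‖c‖ - ‖c‖ * ∏ j, ‖z j‖ = ‖c‖ * (k^n - ∏ j, ‖z j‖) from by ring,
      show k ^ n * ‖c‖ + ‖c‖ * ∏ j, ‖z j‖ = ‖c‖ * (k^n + ∏ j, ‖z j‖) from by ring,
      mul_div_mul_left _ _ hc']
  have h4 : k / (1 + k) * ((∑ j, γ j) / k + γm * ((k ^ n * ‖c‖ - ‖P.coeff 0‖) /
      (k ^ n * ‖c‖ + ‖P.coeff 0‖))) ≤ ∑ j, γ j / (1 + ‖z j‖) := by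
    rw [hratio]
    exact real_main n k hk0 hk1 (fun j => ‖z j‖) γ (fun j => norm_nonneg _) hz γm hγmle hγm0
  have hSb : k / (1 + k) * ((∑ j, γ j) / k + γm * ((k ^ n * ‖c‖ - ‖P.coeff 0‖) /
      (k ^ n * ‖c‖ + ‖P.coeff 0‖))) ≤ ‖S‖ := by
    calc _ ≤ ∑ j, γ j / (1 + ‖z j‖) := h4
      _ ≤ ∑ j, γ j * (w/(w - z j)).re := h3
      _ = (w*S).re := h2.symm
      _ ≤ ‖S‖ := h1
  rw [hPγe, norm_mul, mul_comm ‖P.eval w‖ ‖S‖]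
  exact mul_le_mul_of_nonneg_right hSb (norm_nonneg _)
end

section
/- Let $P(z) = c\prod_{j=1}^n(z-z_j)$ be a degree-$n$ polynomial with all zeros in $|z| \le k$ where $k \ge 1$, let $\gamma = (\gamma_1,\dots,\gamma_n)$ be nonnegative reals, not all zero, with sum $\Lambda$ and minimum $\gamma_m$, and let $\alpha \in \mathbb{C}$ with $|\alpha| \ge k$. Define $P^\gamma(z) = c\sum_{j=1}^n \gamma_j\prod_{i\ne j}(z-z_i)$ and $D_\alpha^\gamma[P](z) = \Lambda P(z) + (\alpha-z)P^\gamma(z)$. Then $\max_{|z|=1}|D_\alpha^\gamma[P](z)| \ge \frac{|\alpha|-k}{1+k^n}\left(\Lambda + \gamma_m\cdot\frac{|a_n|-|a_0|}{|a_n|+|a_0|}\right)\max_{|z|=1}|P(z)|$, where $a_n$ and $a_0$ are the leading coefficient and constant term of $P$. -/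
open Finset Metric Complex Polynomial

lemma maxmod_s9 {f : ℂ → ℂ} {R C : ℝ} (hR : 0 < R)
    (hd : DiffContOnCl ℂ f (Metric.ball 0 R))
    (hC : ∀ w : ℂ, ‖w‖ = R → ‖f w‖ ≤ C) {v : ℂ} (hv : ‖v‖ ≤ R) : ‖f v‖ ≤ C := by
  apply Complex.norm_le_of_forall_mem_frontier_norm_le Metric.isBounded_ball hd
  · intro w hw
    rw [frontier_ball 0 hR.ne'] at hw
    exact hC w (mem_sphere_zero_iff_norm.mp hw)
  · rw [closure_ball 0 hR.ne']
    exact mem_closedBall_zero_iff.mpr hv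

lemma norm_sq_eq' (w : ℂ) : ‖w‖^2 = w.re^2 + w.im^2 := by
  rw [Complex.sq_norm, Complex.normSq_apply]; ring

lemma norm_sub_real_le {T : ℂ} {L : ℝ} (hL : 0 ≤ L) (hT : L/2 ≤ T.re) : ‖T - (L:ℂ)‖ ≤ ‖T‖ := by
  have h : ‖T - (L:ℂ)‖^2 ≤ ‖T‖^2 := by
    rw [norm_sq_eq', norm_sq_eq']
    simp only [Complex.sub_re, Complex.sub_im, Complex.ofReal_re, Complex.ofReal_im]
    nlinarith
  nlinarith [norm_nonneg (T - (L:ℂ)), norm_nonneg T]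

lemma tau_re {k : ℝ} (hk : 0 < k) {w a : ℂ} (hw : ‖w‖ = k) (ha : ‖a‖ ≤ k) (hne : w - a ≠ 0) :
    k / (k + ‖a‖) ≤ (w / (w - a)).re := by
  have hN : 0 < Complex.normSq (w - a) := Complex.normSq_pos.2 hne
  have hw2 : w.re^2 + w.im^2 = k^2 := by rw [← norm_sq_eq', hw]
  have ha2 : a.re^2 + a.im^2 = ‖a‖^2 := (norm_sq_eq' a).symm
  have ht : -(k*‖a‖) ≤ w.re*a.re + w.im*a.im := by
    have h := (abs_le.mp (Complex.abs_re_le_norm (w * (starRingEnd ℂ) a))).1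
    have h2 : (w * (starRingEnd ℂ) a).re = w.re*a.re + w.im*a.im := by
      simp [Complex.mul_re]
    have h3 : ‖w * (starRingEnd ℂ) a‖ = k * ‖a‖ := by
      rw [norm_mul]
      simp [hw]
    rw [h2, h3] at h; linarith
  have hNval : Complex.normSq (w-a) = k^2 - 2*(w.re*a.re+w.im*a.im) + ‖a‖^2 := by
    rw [Complex.normSq_apply]
    simp only [Complex.sub_re, Complex.sub_im]
    linear_combination hw2 + ha2
  rw [Complex.div_re, ← add_div, div_le_div_iff₀ (by positivity) hN]
  have hnum : w.re * (w-a).re + w.im*(w-a).im = k^2 - (w.re*a.re + w.im*a.im) := by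
    simp only [Complex.sub_re, Complex.sub_im]; linear_combination hw2
  rw [hnum, hNval]
  nlinarith [mul_nonneg (sub_nonneg.2 ha) (by linarith : (0:ℝ) ≤ k*‖a‖ + (w.re*a.re+w.im*a.im)),
    norm_nonneg a]

lemma symfun {ι : Type*} (s : Finset ι) (x : ι → ℝ) :
    (∀ i ∈ s, 0 ≤ x i) → (∀ i ∈ s, x i ≤ 1) →
    (1 - ∏ i ∈ s, x i) / (1 + ∏ i ∈ s, x i) ≤ ∑ i ∈ s, (1 - x i) / (1 + x i) := by
  classical
  induction s using Finset.cons_induction with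
  | empty => intro _ _; simp
  | cons a s ha ih =>
    intro h0 h1
    have hxa0 : 0 ≤ x a := h0 a (Finset.mem_cons_self a s)
    have hxa1 : x a ≤ 1 := h1 a (Finset.mem_cons_self a s)
    have h0' : ∀ i ∈ s, 0 ≤ x i := fun i hi => h0 i (Finset.mem_cons_of_mem hi)
    have h1' : ∀ i ∈ s, x i ≤ 1 := fun i hi => h1 i (Finset.mem_cons_of_mem hi)
    have hb0 : 0 ≤ ∏ i ∈ s, x i := Finset.prod_nonneg h0'
    have hb1 : ∏ i ∈ s, x i ≤ 1 := Finset.prod_le_one h0' h1'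
    rw [Finset.prod_cons, Finset.sum_cons]
    set b := ∏ i ∈ s, x i with hb
    have key : (1 - x a * b) / (1 + x a * b) ≤ (1 - x a)/(1 + x a) + (1 - b)/(1 + b) := by
      rw [div_add_div _ _ (by positivity) (by positivity), div_le_div_iff₀ (by positivity) (by positivity)]
      nlinarith [mul_nonneg (mul_nonneg (sub_nonneg.2 hxa1) (sub_nonneg.2 hb1))
        (sub_nonneg.2 (mul_le_one₀ hxa1 hb0 hb1))]
    have := ih h0' h1'
    linarith

-- keyA standalone
lemma keyA (n : ℕ) (c : ℂ) (z : Fin n → ℂ) (k : ℝ) (hk : 1 ≤ k) (hz : ∀ j, ‖z j‖ ≤ k)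
    (γ : Fin n → ℝ) (hγ : ∀ j, 0 ≤ γ j) (γm : ℝ) (hγm0 : 0 ≤ γm) (hγmle : ∀ j, γm ≤ γ j)
    (α : ℂ) (hα : k ≤ ‖α‖)
    (P D : Polynomial ℂ)
    (hPev : ∀ w : ℂ, P.eval w = c * ∏ j, (w - z j))
    (hDev : ∀ w : ℂ, D.eval w = ((∑ j, γ j : ℝ):ℂ) * P.eval w + (α - w) *
      (c * ∑ j, (γ j : ℂ) * ∏ i ∈ Finset.univ.erase j, (w - z i)))
    (w : ℂ) (hw : ‖w‖ = k) :
    (‖α‖ - k)/(2*k) * ((∑ j, γ j) + γm * ((k^n - ∏ j, ‖z j‖)/(k^n + ∏ j, ‖z j‖))) * ‖P.eval w‖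
      ≤ ‖D.eval w‖ := by
  have hk0 : (0:ℝ) < k := lt_of_lt_of_le one_pos hk
  set Λ : ℝ := ∑ j, γ j with hΛ
  set q : ℝ := ∏ j, ‖z j‖ with hq
  have hΛ0 : 0 ≤ Λ := Finset.sum_nonneg fun j _ => hγ j
  have hq0 : 0 ≤ q := Finset.prod_nonneg fun j _ => norm_nonneg _
  have hqkn : q ≤ k^n := by
    calc q ≤ ∏ _j : Fin n, k := Finset.prod_le_prod (fun j _ => norm_nonneg _) (fun j _ => hz j)
    _ = k^n := by simp [Finset.prod_const]
  set R : ℝ := (k^n - q)/(k^n + q) with hR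
  have hkn0 : (0:ℝ) < k^n := pow_pos hk0 n
  have hR0 : 0 ≤ R := div_nonneg (by linarith) (by linarith)
  by_cases hp0 : P.eval w = 0
  · rw [hp0, norm_zero, mul_zero]; exact norm_nonneg _
  · have hw0 : w ≠ 0 := by
      intro h; rw [h, norm_zero] at hw; linarith
    have hfac : ∀ j, w - z j ≠ 0 := by
      intro j hj
      apply hp0
      rw [hPev w]
      rw [Finset.prod_eq_zero (Finset.mem_univ j) hj, mul_zero]
    set T : ℂ := ∑ j, (γ j:ℂ) * (w/(w - z j)) with hT
    -- real part bound
    have hsym : R ≤ ∑ j, (k - ‖z j‖)/(k + ‖z j‖) := by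
      have h1 := symfun Finset.univ (fun j : Fin n => ‖z j‖/k)
        (fun j _ => div_nonneg (norm_nonneg _) hk0.le)
        (fun j _ => by rw [div_le_one hk0]; exact hz j)
      have h1' : (1 - ∏ j : Fin n, (‖z j‖/k)) / (1 + ∏ j : Fin n, (‖z j‖/k))
          ≤ ∑ j : Fin n, (1 - ‖z j‖/k)/(1 + ‖z j‖/k) := h1
      have h2 : ∀ j : Fin n, (1 - ‖z j‖/k)/(1 + ‖z j‖/k) = (k - ‖z j‖)/(k + ‖z j‖) := by
        intro j
        have hzj := norm_nonneg (z j)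
        have hd1 : (0:ℝ) < 1 + ‖z j‖/k := by
          have := div_nonneg hzj hk0.le; linarith
        rw [div_eq_div_iff hd1.ne' (by linarith : (0:ℝ) < k + ‖z j‖).ne']
        field_simp
        try ring
      have h3 : (∏ j : Fin n, (‖z j‖/k)) = q/k^n := by
        rw [Finset.prod_div_distrib]; simp [Finset.prod_const, hq]
      have h4 : (1 - q/k^n)/(1 + q/k^n) = R := by
        have hd2 : (0:ℝ) < 1 + q/k^n := by
          have := div_nonneg hq0 hkn0.le; linarith
        rw [hR, div_eq_div_iff hd2.ne' (by linarith : (0:ℝ) < k^n + q).ne']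
        field_simp
        try ring
      rw [h3, h4] at h1'
      calc R ≤ ∑ j, (1 - ‖z j‖/k)/(1 + ‖z j‖/k) := h1'
        _ = ∑ j, (k - ‖z j‖)/(k + ‖z j‖) := Finset.sum_congr rfl fun j _ => h2 j
    have hTre : (Λ + γm * R)/2 ≤ T.re := by
      have hre : T.re = ∑ j, γ j * (w/(w - z j)).re := by
        rw [hT, Complex.re_sum]
        exact Finset.sum_congr rfl fun j _ => by
          simp [Complex.mul_re, Complex.ofReal_re, Complex.ofReal_im]
      rw [hre]
      have hstep : ∀ j : Fin n, γ j/2 + γm * ((k - ‖z j‖)/(k + ‖z j‖))/2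
          ≤ γ j * (w/(w - z j)).re := by
        intro j
        have hzj := norm_nonneg (z j)
        have hdj : (0:ℝ) < k + ‖z j‖ := by linarith
        have hs0 : (0:ℝ) ≤ (k - ‖z j‖)/(k + ‖z j‖) :=
          div_nonneg (by linarith [hz j]) hdj.le
        have hid : k/(k + ‖z j‖) = 1/2 + ((k - ‖z j‖)/(k + ‖z j‖))/2 := by
          field_simp
          ring
        have htau := tau_re hk0 hw (hz j) (hfac j)
        have hγj := hγ j
        have h5 : γ j * (k/(k + ‖z j‖)) ≤ γ j * (w/(w - z j)).re :=
          mul_le_mul_of_nonneg_left htau hγj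
        rw [hid] at h5
        nlinarith [mul_le_mul_of_nonneg_right (hγmle j) hs0]
      calc (Λ + γm * R)/2 ≤ (Λ + γm * (∑ j, (k - ‖z j‖)/(k + ‖z j‖)))/2 := by
            nlinarith
        _ = ∑ j, (γ j/2 + γm * ((k - ‖z j‖)/(k + ‖z j‖))/2) := by
            rw [eq_comm, Finset.sum_add_distrib, ← Finset.sum_div, ← Finset.sum_div,
              ← Finset.mul_sum, ← hΛ]
            ring
        _ ≤ ∑ j, γ j * (w/(w - z j)).re := Finset.sum_le_sum fun j _ => hstep j
    -- identity
    have hPγw : (c * ∑ j, (γ j : ℂ) * ∏ i ∈ Finset.univ.erase j, (w - z i)) * w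
        = P.eval w * T := by
      rw [hPev, hT]
      rw [Finset.mul_sum, Finset.sum_mul, Finset.mul_sum]
      refine Finset.sum_congr rfl fun j _ => ?_
      have hpe' : (w - z j) * ∏ i ∈ Finset.univ.erase j, (w - z i) = ∏ i, (w - z i) :=
        Finset.mul_prod_erase Finset.univ (fun i => w - z i) (Finset.mem_univ j)
      rw [← hpe']
      field_simp [hfac j]
      try ring
    have hDw : D.eval w * w = P.eval w * ((Λ:ℂ)*w + (α - w) * T) := by
      rw [hDev]
      linear_combination (α - w) * hPγw
    -- norms
    have hTΛ : ‖T - (Λ:ℂ)‖ ≤ ‖T‖ := norm_sub_real_le hΛ0 (by nlinarith)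
    have hFval : (Λ:ℂ)*w + (α - w)*T = α*T - w*(T - (Λ:ℂ)) := by ring
    have hF : (‖α‖ - k) * ((Λ + γm * R)/2) ≤ ‖(Λ:ℂ)*w + (α - w)*T‖ := by
      rw [hFval]
      have h1 : ‖α*T‖ - ‖w*(T - (Λ:ℂ))‖ ≤ ‖α*T - w*(T - (Λ:ℂ))‖ :=
        norm_sub_norm_le _ _
      rw [norm_mul, norm_mul, hw] at h1
      have h2 : T.re ≤ ‖T‖ := Complex.re_le_norm T
      nlinarith [norm_nonneg T]
    have hnorm : ‖D.eval w‖ * k = ‖P.eval w‖ * ‖(Λ:ℂ)*w + (α - w)*T‖ := by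
      have := congrArg norm hDw
      rw [norm_mul, norm_mul, hw] at this
      exact this
    have hPn : 0 ≤ ‖P.eval w‖ := norm_nonneg _
    rw [div_mul_eq_mul_div, div_mul_eq_mul_div, div_le_iff₀ (by linarith : (0:ℝ) < 2*k)]
    nlinarith [hnorm, mul_le_mul_of_nonneg_left hF hPn]

lemma keyB (n : ℕ) (hn : 0 < n) (c : ℂ) (z : Fin n → ℂ) (k : ℝ) (hk : 1 ≤ k)
    (γ : Fin n → ℝ) (α : ℂ) (D : Polynomial ℂ)
    (hDsum : ∀ w : ℂ, D.eval w = c * ∑ j, (γ j:ℂ)*(α - z j) * ∏ i ∈ Finset.univ.erase j, (w - z i))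
    (B : ℝ) (hB : ∀ u : ℂ, ‖u‖ = 1 → ‖D.eval u‖ ≤ B)
    (w : ℂ) (hw : ‖w‖ = k) : ‖D.eval w‖ ≤ k^(n-1) * B := by
  have hk0 : (0:ℝ) < k := lt_of_lt_of_le one_pos hk
  set G : Polynomial ℂ := Polynomial.C c * ∑ j, Polynomial.C ((γ j:ℂ)*(α - z j)) *
    ∏ i ∈ Finset.univ.erase j, (1 - Polynomial.C (z i) * Polynomial.X) with hG
  have hGev : ∀ u : ℂ, G.eval u = c * ∑ j, (γ j:ℂ)*(α - z j) *
      ∏ i ∈ Finset.univ.erase j, (1 - z i * u) := by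
    intro u; simp [hG, Polynomial.eval_finset_sum, Polynomial.eval_prod]
  have hcard : ∀ j : Fin n, (Finset.univ.erase j).card = n - 1 := by
    intro j
    rw [Finset.card_erase_of_mem (Finset.mem_univ j), Finset.card_univ, Fintype.card_fin]
  have hid : ∀ u : ℂ, u ≠ 0 → D.eval u = u^(n-1) * G.eval u⁻¹ := by
    intro u hu
    rw [hDsum, hGev, Finset.mul_sum, Finset.mul_sum, Finset.mul_sum]
    refine Finset.sum_congr rfl fun j _ => ?_
    have hprod : ∏ i ∈ Finset.univ.erase j, (u - z i)
        = u^(n-1) * ∏ i ∈ Finset.univ.erase j, (1 - z i * u⁻¹) := by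
      rw [← hcard j, ← Finset.prod_const u, ← Finset.prod_mul_distrib]
      refine Finset.prod_congr rfl fun i _ => ?_
      field_simp
    rw [hprod]
    ring
  have hbd : ∀ u : ℂ, ‖u‖ = 1 → ‖G.eval u‖ ≤ B := by
    intro u hu
    have hu0 : u ≠ 0 := by intro h; rw [h, norm_zero] at hu; norm_num at hu
    have huinv : ‖u⁻¹‖ = 1 := by rw [norm_inv, hu]; norm_num
    have h2 := hid u⁻¹ (inv_ne_zero hu0)
    rw [inv_inv] at h2
    have h3 : ‖D.eval u⁻¹‖ = ‖G.eval u‖ := by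
      rw [h2, norm_mul, norm_pow, huinv, one_pow, one_mul]
    rw [← h3]
    exact hB _ huinv
  have hmax : ∀ v : ℂ, ‖v‖ ≤ 1 → ‖G.eval v‖ ≤ B :=
    fun v hv => maxmod_s9 one_pos ((G.differentiable).diffContOnCl) hbd hv
  have hw0 : w ≠ 0 := by intro h; rw [h, norm_zero] at hw; linarith
  rw [hid w hw0, norm_mul, norm_pow, hw]
  have hwi : ‖w⁻¹‖ ≤ 1 := by
    rw [norm_inv, hw]
    exact inv_le_one_of_one_le₀ hk
  exact mul_le_mul_of_nonneg_left (hmax _ hwi) (by positivity)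

lemma factor_refl {k : ℝ} (v a : ℂ) (hv : ‖v‖ ≤ k) (ha : ‖a‖ ≤ k) :
    k * ‖v - a‖ ≤ ‖((k:ℂ)^2 - (starRingEnd ℂ) a * v)‖ := by
  have hk0 : (0:ℝ) ≤ k := le_trans (norm_nonneg v) hv
  have hv2 : v.re^2 + v.im^2 ≤ k^2 := by
    rw [← norm_sq_eq']; exact pow_le_pow_left₀ (norm_nonneg v) hv 2
  have ha2 : a.re^2 + a.im^2 ≤ k^2 := by
    rw [← norm_sq_eq']; exact pow_le_pow_left₀ (norm_nonneg a) ha 2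
  have key : (k * ‖v - a‖)^2 ≤ ‖((k:ℂ)^2 - (starRingEnd ℂ) a * v)‖^2 := by
    rw [mul_pow, norm_sq_eq', norm_sq_eq']
    simp only [Complex.sub_re, Complex.sub_im, Complex.mul_re, Complex.mul_im,
      Complex.conj_re, Complex.conj_im, ← Complex.ofReal_pow, Complex.ofReal_re,
      Complex.ofReal_im]
    nlinarith [mul_nonneg (sub_nonneg.2 hv2) (sub_nonneg.2 ha2)]
  nlinarith [key, norm_nonneg ((k:ℂ)^2 - (starRingEnd ℂ) a * v),
    mul_nonneg hk0 (norm_nonneg (v - a))]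

lemma keyC (n : ℕ) (c : ℂ) (z : Fin n → ℂ) (k : ℝ) (hk : 1 ≤ k) (hz : ∀ j, ‖z j‖ ≤ k)
    (P : Polynomial ℂ) (hPev : ∀ w : ℂ, P.eval w = c * ∏ j, (w - z j))
    (Mk : ℝ) (hMk : ∀ w : ℂ, ‖w‖ = k → ‖P.eval w‖ ≤ Mk)
    (w0 : ℂ) (hw0 : ‖w0‖ = 1) :
    2 * k^n * ‖P.eval w0‖ ≤ (1 + k^n) * Mk := by
  have hk0 : (0:ℝ) < k := lt_of_lt_of_le one_pos hk
  have hkn0 : (0:ℝ) < k^n := pow_pos hk0 n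
  have hkc : ((k:ℂ)) ≠ 0 := by
    simpa using hk0.ne'
  have nconj : ∀ x : ℂ, ‖(starRingEnd ℂ) x‖ = ‖x‖ := fun x => by
    rw [Complex.norm_conj]
  set Qp : Polynomial ℂ := Polynomial.C ((starRingEnd ℂ) c) *
    ∏ j, (Polynomial.C ((k:ℂ)^2) - Polynomial.C ((starRingEnd ℂ) (z j)) * Polynomial.X) with hQp
  have hQev : ∀ v : ℂ, Qp.eval v = (starRingEnd ℂ) c * ∏ j, ((k:ℂ)^2 - (starRingEnd ℂ) (z j) * v) := by
    intro v; simp [hQp, Polynomial.eval_prod]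
  -- L3a
  have hL3a : ∀ v : ℂ, ‖v‖ ≤ k → k^n * ‖P.eval v‖ ≤ ‖Qp.eval v‖ := by
    intro v hv
    rw [hPev, hQev, norm_mul, norm_mul, norm_prod, norm_prod, nconj]
    have h1 : ∏ j, (k * ‖v - z j‖) ≤ ∏ j, ‖(k:ℂ)^2 - (starRingEnd ℂ) (z j) * v‖ :=
      Finset.prod_le_prod (fun j _ => mul_nonneg hk0.le (norm_nonneg _))
        (fun j _ => factor_refl v (z j) hv (hz j))
    have h2 : ∏ j, (k * ‖v - z j‖) = k^n * ∏ j, ‖v - z j‖ := by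
      rw [Finset.prod_mul_distrib, Finset.prod_const]
      simp
    rw [h2] at h1
    calc k^n * (‖c‖ * ∏ j, ‖v - z j‖) = ‖c‖ * (k^n * ∏ j, ‖v - z j‖) := by ring
      _ ≤ ‖c‖ * ∏ j, ‖(k:ℂ)^2 - (starRingEnd ℂ) (z j) * v‖ :=
          mul_le_mul_of_nonneg_left h1 (norm_nonneg c)
  -- reflection identity on the circle of radius k
  have hrefl : ∀ w : ℂ, ‖w‖ = k → w^n * (starRingEnd ℂ) (P.eval w) = Qp.eval w := by
    intro w hw
    have hns : Complex.normSq w = k^2 := by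
      rw [← Complex.sq_norm, hw]
    have hcc : w * (starRingEnd ℂ) w = ((k:ℂ))^2 := by
      rw [Complex.mul_conj, hns]
      push_cast
      ring
    rw [hPev, hQev, map_mul, map_prod]
    have hfac : ∀ j : Fin n, w * (starRingEnd ℂ) (w - z j) = (k:ℂ)^2 - (starRingEnd ℂ) (z j) * w := by
      intro j
      rw [map_sub, mul_sub, hcc]
      ring
    calc w^n * ((starRingEnd ℂ) c * ∏ j, (starRingEnd ℂ) (w - z j))
        = (starRingEnd ℂ) c * ∏ j, (w * (starRingEnd ℂ) (w - z j)) := by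
          rw [Finset.prod_mul_distrib, Finset.prod_const, Finset.card_univ, Fintype.card_fin]
          ring
      _ = (starRingEnd ℂ) c * ∏ j, ((k:ℂ)^2 - (starRingEnd ℂ) (z j) * w) := by
          rw [Finset.prod_congr rfl fun j _ => hfac j]
  -- norm equality on circle k
  have hQnormk : ∀ w : ℂ, ‖w‖ = k → ‖Qp.eval w‖ = k^n * ‖P.eval w‖ := by
    intro w hw
    have := congrArg norm (hrefl w hw)
    rw [norm_mul, norm_pow, hw, nconj] at this
    rw [← this]
  -- max modulus for Qp
  have hMq : ∀ v : ℂ, ‖v‖ ≤ k → ‖Qp.eval v‖ ≤ k^n * Mk := by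
    intro v hv
    exact maxmod_s9 hk0 (Qp.differentiable.diffContOnCl)
      (fun w hw => by rw [hQnormk w hw]; exact mul_le_mul_of_nonneg_left (hMk w hw) hkn0.le) hv
  have hw0k : ‖w0‖ ≤ k := by rw [hw0]; exact hk
  have hMk0 : 0 ≤ Mk := le_trans (norm_nonneg _) (hMk (k:ℂ) (by
    rw [Complex.norm_real]; exact _root_.abs_of_pos hk0))
  rcases eq_or_lt_of_le hMk0 with hMkz | hMkpos
  · -- Mk = 0
    have h1 := le_trans (hL3a w0 hw0k) (hMq w0 hw0k)
    nlinarith [norm_nonneg (P.eval w0)]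
  · -- Mk > 0
    have key : ∀ ε : ℝ, 0 < ε → 2 * k^n * ‖P.eval w0‖ ≤ (1+ε) * ((1 + k^n) * Mk) := by
      intro ε hε
      -- phase of Qp.eval w0
      obtain ⟨u, hu1, huQ⟩ : ∃ u : ℂ, ‖u‖ = 1 ∧ Qp.eval w0 = ((‖Qp.eval w0‖ : ℝ):ℂ) * u := by
        by_cases h0 : Qp.eval w0 = 0
        · exact ⟨1, by simp, by simp [h0]⟩
        · refine ⟨Qp.eval w0 / ((‖Qp.eval w0‖ : ℝ):ℂ), ?_, ?_⟩
          · rw [norm_div, Complex.norm_real, Real.norm_eq_abs, _root_.abs_of_nonneg (norm_nonneg _)]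
            exact div_self (norm_ne_zero_iff.mpr h0)
          · rw [mul_div_cancel₀]
            simpa using norm_ne_zero_iff.mpr h0
      set ν : ℂ := -(((1+ε : ℝ)):ℂ) * u with hν
      set μ : ℂ := (starRingEnd ℂ) ν with hμ
      have hνn : ‖ν‖ = 1 + ε := by
        rw [hν, norm_mul, norm_neg, Complex.norm_real, Real.norm_eq_abs, _root_.abs_of_pos (by linarith), hu1, mul_one]
      have hμn : ‖μ‖ = 1 + ε := by rw [hμ, nconj, hνn]
      set G : ℂ → ℂ := fun v => (k:ℂ)^n * P.eval v + μ * (Mk:ℝ) * v^n with hG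
      set Gs : ℂ → ℂ := fun v => Qp.eval v + ν * (Mk:ℝ) * (k:ℂ)^n with hGs
      have hnu : ‖ν * (Mk:ℝ) * (k:ℂ)^n‖ = (1+ε) * Mk * k^n := by
        rw [norm_mul, norm_mul, hνn, Complex.norm_real, Real.norm_eq_abs,
          _root_.abs_of_nonneg hMk0, norm_pow, Complex.norm_real, Real.norm_eq_abs,
          _root_.abs_of_pos hk0]
      have hGsnz : ∀ v : ℂ, ‖v‖ ≤ k → ε * Mk * k^n ≤ ‖Gs v‖ := by
        intro v hv
        have h1 : ‖ν * (Mk:ℝ) * (k:ℂ)^n‖ - ‖Qp.eval v‖ ≤ ‖Gs v‖ := by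
          have := norm_sub_norm_le (ν * (Mk:ℝ) * (k:ℂ)^n) (-(Qp.eval v))
          simpa [hGs, add_comm] using this
        rw [hnu] at h1
        have h2 := hMq v hv
        nlinarith
      have hGsne : ∀ v : ℂ, ‖v‖ ≤ k → Gs v ≠ 0 := by
        intro v hv h0
        have := hGsnz v hv
        rw [h0, norm_zero] at this
        nlinarith [mul_pos (mul_pos hε hMkpos) hkn0]
      -- boundary equality of norms
      have hbd : ∀ w : ℂ, ‖w‖ = k → ‖Gs w‖ = ‖G w‖ := by
        intro w hw
        have hns : Complex.normSq w = k^2 := by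
          rw [← Complex.sq_norm, hw]
        have hcc : w * (starRingEnd ℂ) w = ((k:ℂ))^2 := by
          rw [Complex.mul_conj, hns]; push_cast; ring
        have e1 : (starRingEnd ℂ) (G w) = (k:ℂ)^n * (starRingEnd ℂ) (P.eval w)
            + ν * ((Mk:ℝ):ℂ) * ((starRingEnd ℂ) w)^n := by
          simp only [hG, map_add, map_mul, map_pow, Complex.conj_ofReal]
          rw [hμ, Complex.conj_conj]
        have hccpow : w^n * ((starRingEnd ℂ) w)^n = ((k:ℂ)^2)^n := by
          rw [← mul_pow, hcc]
        have hid : (k:ℂ)^n * Gs w = w^n * (starRingEnd ℂ) (G w) := by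
          simp only [hGs]
          rw [e1]
          linear_combination (k:ℂ)^n * (hrefl w hw).symm + ν * ((Mk:ℝ):ℂ) * hccpow.symm
        have := congrArg norm hid
        rw [norm_mul, norm_mul, norm_pow, norm_pow, Complex.norm_real, Real.norm_eq_abs,
          _root_.abs_of_pos hk0, hw, nconj] at this
        exact mul_left_cancel₀ hkn0.ne' this
      -- differentiability
      have hGd : Differentiable ℂ G := by
        rw [hG]
        exact (Polynomial.differentiable P |>.const_mul _).add
          ((differentiable_pow n).const_mul _)
      have hGsd : Differentiable ℂ Gs := by
        rw [hGs]
        exact (Polynomial.differentiable Qp).add_const _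
      have hdcc : DiffContOnCl ℂ (fun v => G v / Gs v) (Metric.ball 0 k) := by
        constructor
        · exact (hGd.differentiableOn).div (hGsd.differentiableOn)
            (fun v hv => hGsne v (le_of_lt (mem_ball_zero_iff.mp hv)))
        · rw [closure_ball (0:ℂ) hk0.ne']
          exact (hGd.continuous.continuousOn).div (hGsd.continuous.continuousOn)
            (fun v hv => hGsne v (mem_closedBall_zero_iff.mp hv))
      have hrat : ‖G w0‖ ≤ ‖Gs w0‖ := by
        have h1 : ‖G w0 / Gs w0‖ ≤ 1 :=
          maxmod_s9 hk0 hdcc (fun w hw => by rw [norm_div, hbd w hw]; exact div_self_le_one _) hw0k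
        have h2 : Gs w0 ≠ 0 := hGsne w0 hw0k
        rw [norm_div, div_le_one (norm_pos_iff.mpr h2)] at h1
        exact h1
      have hQle : ‖Qp.eval w0‖ ≤ k^n * Mk := hMq w0 hw0k
      have hGsw0 : ‖Gs w0‖ = (1+ε)*Mk*k^n - ‖Qp.eval w0‖ := by
        have e : Gs w0 = ((‖Qp.eval w0‖ - (1+ε)*Mk*k^n : ℝ):ℂ) * u := by
          simp only [hGs]
          conv_lhs => rw [huQ, hν]
          push_cast
          ring
        rw [e, norm_mul, hu1, mul_one, Complex.norm_real, Real.norm_eq_abs,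
          _root_.abs_of_nonpos (by nlinarith [mul_pos (mul_pos hε hMkpos) hkn0])]
        ring
      have hGlow : k^n * ‖P.eval w0‖ - (1+ε)*Mk ≤ ‖G w0‖ := by
        have h := norm_sub_norm_le ((k:ℂ)^n * P.eval w0) (-(μ * ((Mk:ℝ):ℂ) * w0^n))
        rw [sub_neg_eq_add] at h
        have e1 : ‖(k:ℂ)^n * P.eval w0‖ = k^n * ‖P.eval w0‖ := by
          rw [norm_mul, norm_pow, Complex.norm_real, Real.norm_eq_abs, _root_.abs_of_pos hk0]
        have e2 : ‖-(μ * ((Mk:ℝ):ℂ) * w0^n)‖ = (1+ε)*Mk := by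
          rw [norm_neg, norm_mul, norm_mul, hμn, Complex.norm_real, Real.norm_eq_abs,
            _root_.abs_of_nonneg hMk0, norm_pow, hw0, one_pow, mul_one]
        rw [e1, e2] at h
        exact h
      have hfin := le_trans hGlow (le_trans hrat (le_of_eq hGsw0))
      have hQge := hL3a w0 hw0k
      nlinarith
    -- let epsilon tend to zero
    apply le_of_forall_pos_le_add
    intro dlt hdlt
    have hden : 0 < (1+k^n)*Mk := mul_pos (by linarith) hMkpos
    have hε := div_pos hdlt hden
    have h2 := key _ hε
    have h3 : (1 + dlt/((1+k^n)*Mk)) * ((1+k^n)*Mk) = (1+k^n)*Mk + dlt := by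
      field_simp
    linarith [h2.trans (le_of_eq h3)]

theorem stmt_9 (n : ℕ) (hn : 0 < n) (c : ℂ) (hc : c ≠ 0) (z : Fin n → ℂ)
    (k : ℝ) (hk : 1 ≤ k) (hz : ∀ j, ‖z j‖ ≤ k)
    (γ : Fin n → ℝ) (hγ : ∀ j, 0 ≤ γ j) (hγ0 : ∃ j, γ j ≠ 0)
    (γm : ℝ) (hγm : IsLeast (Set.range γ) γm)
    (P : Polynomial ℂ) (hP : P = Polynomial.C c * ∏ j, (Polynomial.X - Polynomial.C (z j)))
    (Pγ : Polynomial ℂ)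
    (hPγ : Pγ = Polynomial.C c * ∑ j, Polynomial.C (γ j : ℂ) *
      ∏ i ∈ Finset.univ.erase j, (Polynomial.X - Polynomial.C (z i)))
    (α : ℂ) (hα : k ≤ ‖α‖)
    (D : Polynomial ℂ)
    (hD : D = Polynomial.C ((∑ j, γ j : ℝ) : ℂ) * P + (Polynomial.C α - Polynomial.X) * Pγ) :
    (‖α‖ - k) / (1 + k ^ n) *
        ((∑ j, γ j) + γm * ((‖c‖ - ‖P.coeff 0‖) / (‖c‖ + ‖P.coeff 0‖))) *
        (⨆ w : Metric.sphere (0 : ℂ) 1, ‖P.eval (w : ℂ)‖) ≤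
      ⨆ w : Metric.sphere (0 : ℂ) 1, ‖D.eval (w : ℂ)‖ := by
  have hk0 : (0:ℝ) < k := lt_of_lt_of_le one_pos hk
  have hkn1 : (1:ℝ) ≤ k^n := one_le_pow₀ hk
  have hkn0 : (0:ℝ) < k^n := pow_pos hk0 n
  have hPev : ∀ w : ℂ, P.eval w = c * ∏ j, (w - z j) := by
    intro w; simp [hP, Polynomial.eval_prod]
  have hPγev : ∀ w : ℂ, Pγ.eval w = c * ∑ j, (γ j : ℂ) * ∏ i ∈ Finset.univ.erase j, (w - z i) := by
    intro w; simp [hPγ, Polynomial.eval_finset_sum, Polynomial.eval_prod]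
  have hDev : ∀ w : ℂ, D.eval w = ((∑ j, γ j : ℝ):ℂ) * P.eval w + (α - w) * Pγ.eval w := by
    intro w
    rw [hD]
    simp only [Polynomial.eval_add, Polynomial.eval_mul, Polynomial.eval_sub,
      Polynomial.eval_C, Polynomial.eval_X]
  have hΛ0 : 0 ≤ ∑ j, γ j := Finset.sum_nonneg fun j _ => hγ j
  obtain ⟨⟨j0, hj0⟩, hγml⟩ := hγm
  have hγm0 : 0 ≤ γm := hj0 ▸ hγ j0
  have hγmle : ∀ j, γm ≤ γ j := fun j => hγml ⟨j, rfl⟩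
  have hq0 : 0 ≤ ∏ j, ‖z j‖ := Finset.prod_nonneg fun j _ => norm_nonneg _
  have hqkn : ∏ j, ‖z j‖ ≤ k^n := by
    calc ∏ j, ‖z j‖ ≤ ∏ _j : Fin n, k :=
      Finset.prod_le_prod (fun j _ => norm_nonneg _) (fun j _ => hz j)
    _ = k^n := by simp [Finset.prod_const]
  have hRq0 : (0:ℝ) < k^n + ∏ j, ‖z j‖ := by linarith
  have hR0 : 0 ≤ (k^n - ∏ j, ‖z j‖)/(k^n + ∏ j, ‖z j‖) := div_nonneg (by linarith) hRq0.le
  have ha0 : ‖P.coeff 0‖ = ‖c‖ * ∏ j, ‖z j‖ := by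
    rw [Polynomial.coeff_zero_eq_eval_zero, hPev 0, norm_mul, norm_prod]
    congr 1
    exact Finset.prod_congr rfl fun j _ => by simp
  have hrR : (‖c‖ - ‖P.coeff 0‖) / (‖c‖ + ‖P.coeff 0‖) ≤ (k^n - ∏ j, ‖z j‖)/(k^n + ∏ j, ‖z j‖) := by
    rw [ha0]
    have hcn : (0:ℝ) < ‖c‖ := norm_pos_iff.mpr hc
    have h1 : (‖c‖ - ‖c‖*∏ j, ‖z j‖)/(‖c‖ + ‖c‖*∏ j, ‖z j‖) = (1 - ∏ j, ‖z j‖)/(1 + ∏ j, ‖z j‖) := by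
      rw [← mul_one_sub, ← mul_one_add, mul_div_mul_left _ _ (ne_of_gt hcn)]
    rw [h1, div_le_div_iff₀ (by linarith) hRq0]
    nlinarith
  -- max points
  have hsphk : ((k:ℂ)) ∈ Metric.sphere (0:ℂ) k := by
    simp [mem_sphere_zero_iff_norm, Complex.norm_real, abs_of_pos hk0]
  obtain ⟨zk, hzk_mem, hzk_max'⟩ := (isCompact_sphere (0:ℂ) k).exists_isMaxOn
    ⟨(k:ℂ), hsphk⟩ ((P.continuous.norm).continuousOn)
  have hzk_max : ∀ w : ℂ, ‖w‖ = k → ‖P.eval w‖ ≤ ‖P.eval zk‖ := fun w hw =>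
    hzk_max' (mem_sphere_zero_iff_norm.mpr hw)
  have hzk_norm : ‖zk‖ = k := mem_sphere_zero_iff_norm.mp hzk_mem
  obtain ⟨w1, hw1_mem, hw1_max'⟩ := (isCompact_sphere (0:ℂ) 1).exists_isMaxOn
    ⟨(1:ℂ), by simp [mem_sphere_zero_iff_norm]⟩ ((D.continuous.norm).continuousOn)
  have hw1_max : ∀ w : ℂ, ‖w‖ = 1 → ‖D.eval w‖ ≤ ‖D.eval w1‖ := fun w hw =>
    hw1_max' (mem_sphere_zero_iff_norm.mpr hw)
  have hw1_norm : ‖w1‖ = 1 := mem_sphere_zero_iff_norm.mp hw1_mem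
  -- sum representation of D
  have hDsum : ∀ w : ℂ, D.eval w
      = c * ∑ j, (γ j:ℂ)*(α - z j) * ∏ i ∈ Finset.univ.erase j, (w - z i) := by
    intro w
    rw [hDev w, hPev w, hPγev w]
    have hcast : ((∑ j, γ j : ℝ):ℂ) = ∑ j, ((γ j:ℝ):ℂ) := by push_cast; rfl
    rw [hcast, Finset.sum_mul, Finset.mul_sum, Finset.mul_sum, Finset.mul_sum,
      ← Finset.sum_add_distrib]
    refine Finset.sum_congr rfl fun j _ => ?_
    have hpe' : (w - z j) * ∏ i ∈ Finset.univ.erase j, (w - z i) = ∏ i, (w - z i) :=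
      Finset.mul_prod_erase Finset.univ (fun i => w - z i) (Finset.mem_univ j)
    rw [← hpe']
    ring
  -- the three key estimates
  have hKA := keyA n c z k hk hz γ hγ γm hγm0 hγmle α hα P D hPev
    (fun w => by rw [hDev w, hPγev w]) zk hzk_norm
  have hKB := keyB n hn c z k hk γ α D hDsum (‖D.eval w1‖) hw1_max zk hzk_norm
  have hKC : ∀ w0 : ℂ, ‖w0‖ = 1 →
      2 * k^n * ‖P.eval w0‖ ≤ (1 + k^n) * ‖P.eval zk‖ :=
    fun w0 hw0 => keyC n c z k hk hz P hPev (‖P.eval zk‖) hzk_max w0 hw0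
  -- sup bounds
  haveI hne : Nonempty (Metric.sphere (0:ℂ) 1) := ⟨⟨(1:ℂ), by simp [mem_sphere_zero_iff_norm]⟩⟩
  have hMle : (⨆ w : Metric.sphere (0 : ℂ) 1, ‖P.eval (w : ℂ)‖)
      ≤ (1 + k^n)/(2*k^n) * ‖P.eval zk‖ := by
    apply ciSup_le
    intro w
    have h := hKC (w : ℂ) (mem_sphere_zero_iff_norm.mp w.2)
    rw [div_mul_eq_mul_div, le_div_iff₀ (by linarith)]
    linarith
  have hM0 : 0 ≤ (⨆ w : Metric.sphere (0 : ℂ) 1, ‖P.eval (w : ℂ)‖) :=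
    Real.iSup_nonneg fun w => norm_nonneg _
  have hbdd : BddAbove (Set.range fun w : Metric.sphere (0:ℂ) 1 => ‖D.eval (w : ℂ)‖) := by
    refine ⟨‖D.eval w1‖, ?_⟩
    rintro x ⟨w, rfl⟩
    exact hw1_max (w : ℂ) (mem_sphere_zero_iff_norm.mp w.2)
  have hlast : ‖D.eval w1‖ ≤ ⨆ w : Metric.sphere (0 : ℂ) 1, ‖D.eval (w : ℂ)‖ :=
    le_ciSup hbdd (⟨w1, hw1_mem⟩ : Metric.sphere (0:ℂ) 1)
  -- arithmetic chain
  set M := ⨆ w : Metric.sphere (0 : ℂ) 1, ‖P.eval (w : ℂ)‖ with hM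
  set Mk := ‖P.eval zk‖ with hMk
  set E' : ℝ := (∑ j, γ j) + γm * ((k^n - ∏ j, ‖z j‖)/(k^n + ∏ j, ‖z j‖)) with hE'
  have hE'0 : 0 ≤ E' := by
    have := mul_nonneg hγm0 hR0
    simp only [hE']
    linarith
  have hA0 : 0 ≤ (‖α‖ - k)/(1 + k^n) := div_nonneg (by linarith) (by linarith)
  have step1 : (‖α‖ - k) / (1 + k ^ n) *
      ((∑ j, γ j) + γm * ((‖c‖ - ‖P.coeff 0‖) / (‖c‖ + ‖P.coeff 0‖))) * M
      ≤ (‖α‖ - k) / (1 + k ^ n) * E' * M := by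
    have h1 : (∑ j, γ j) + γm * ((‖c‖ - ‖P.coeff 0‖) / (‖c‖ + ‖P.coeff 0‖)) ≤ E' := by
      simp only [hE']
      nlinarith [mul_le_mul_of_nonneg_left hrR hγm0]
    nlinarith [mul_le_mul_of_nonneg_right h1 (mul_nonneg hA0 hM0)]
  have step2 : (‖α‖ - k) / (1 + k ^ n) * E' * M
      ≤ (‖α‖ - k) / (1 + k ^ n) * E' * ((1 + k^n)/(2*k^n) * Mk) := by
    exact mul_le_mul_of_nonneg_left hMle (mul_nonneg hA0 hE'0)
  have step3 : (‖α‖ - k) / (1 + k ^ n) * E' * ((1 + k^n)/(2*k^n) * Mk)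
      = (‖α‖ - k)/(2*k^n) * E' * Mk := by
    have d1 : (1:ℝ)+k^n ≠ 0 := by positivity
    have d2 : (k:ℝ) ≠ 0 := hk0.ne'
    field_simp
  -- keyA gives : (‖α‖-k)/(2*k) * E' * Mk ≤ ‖D.eval zk‖ ; keyB : ‖D.eval zk‖ ≤ k^(n-1)*‖D.eval w1‖
  have h5 : (‖α‖ - k)/(2*k) * E' * Mk ≤ k^(n-1) * ‖D.eval w1‖ := le_trans hKA hKB
  have hpow : k^(n-1) * k = k^n := by
    rw [← pow_succ]
    congr 1
    omega
  have hkn1' : (0:ℝ) < k^(n-1) := pow_pos hk0 _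
  have step4 : (‖α‖ - k)/(2*k^n) * E' * Mk ≤ ‖D.eval w1‖ := by
    rw [div_mul_eq_mul_div, div_mul_eq_mul_div, div_le_iff₀ (by linarith : (0:ℝ) < 2*k^n)]
    rw [div_mul_eq_mul_div, div_mul_eq_mul_div, div_le_iff₀ (by linarith : (0:ℝ) < 2*k)] at h5
    have e6 : ‖D.eval w1‖*(2*k^n) = k^(n-1)*‖D.eval w1‖*(2*k) := by
      rw [← hpow]; ring
    linarith
  calc (‖α‖ - k) / (1 + k ^ n) *
      ((∑ j, γ j) + γm * ((‖c‖ - ‖P.coeff 0‖) / (‖c‖ + ‖P.coeff 0‖))) * M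
      ≤ (‖α‖ - k) / (1 + k ^ n) * E' * M := step1
    _ ≤ (‖α‖ - k) / (1 + k ^ n) * E' * ((1 + k^n)/(2*k^n) * Mk) := step2
    _ = (‖α‖ - k)/(2*k^n) * E' * Mk := step3
    _ ≤ ‖D.eval w1‖ := step4
    _ ≤ ⨆ w : Metric.sphere (0 : ℂ) 1, ‖D.eval (w : ℂ)‖ := hlast
end

section
/- Let $P(z)$ be a degree-$n$ polynomial with all zeros in $|z| \le k$ where $0 < k \le 1$, and let $\alpha \in \mathbb{C}$ with $|\alpha| \ge k$. Then $\max_{|z|=1}|D_\alpha[P](z)| \ge n\,\frac{|\alpha|-k}{1+k}\left(1 + \frac{k}{n}\cdot\frac{k^n|a_n|-|a_0|}{k^n|a_n|+|a_0|}\right)\max_{|z|=1}|P(z)|$, where $D_\alpha[P](z) = nP(z)+(\alpha-z)P'(z)$ and $a_n, a_0$ are the leading coefficient and constant term of $P$. -/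
lemma step_ineq (k a K p : ℝ) (hk0 : 0 < k) (hk1 : k ≤ 1) (ha0 : 0 ≤ a) (hak : a ≤ k)
    (hK : 0 < K) (hp0 : 0 ≤ p) (hpK : p ≤ K) (m : ℝ) :
    ((m+1) + k * ((k*K - a*p)/(k*K + a*p))) / (1+k)
      ≤ 1/(1+a) + (m + k * ((K-p)/(K+p))) / (1+k) := by
  have hX : 0 < k*K + a*p := by positivity
  have hY : 0 < K + p := by positivity
  have ha1 : 0 < 1 + a := by linarith
  have hk1' : 0 < 1 + k := by linarith
  have hfac : 0 ≤ (k*K + a*p)*(K+p) - 2*k*K*p*(1+a) := by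
    have h2 : 0 ≤ (k-a)*k*K*(K-p) + a*k*((K-p)^2 + 2*K*p*(1-k)) := by
      nlinarith [mul_nonneg (mul_nonneg (sub_nonneg.2 hak) hk0.le) (mul_nonneg hK.le (sub_nonneg.2 hpK)), mul_nonneg (mul_nonneg ha0 hk0.le) (sq_nonneg (K-p)), mul_nonneg (mul_nonneg (mul_nonneg ha0 hk0.le) (mul_nonneg hK.le hp0)) (sub_nonneg.2 hk1)]
    nlinarith [h2]
  have key : 0 ≤ (k - a) * ((k*K + a*p)*(K+p) - 2*k*K*p*(1+a)) :=
    mul_nonneg (sub_nonneg.2 hak) hfac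
  have e1 : (k*K - a*p)/(k*K + a*p) - (K-p)/(K+p) = 2*K*p*(k-a)/((k*K + a*p)*(K+p)) := by
    field_simp; ring
  have h4 : k * (2*K*p*(k-a)/((k*K + a*p)*(K+p))) ≤ (k-a)/(1+a) := by
    rw [mul_div_assoc', div_le_div_iff₀ (by positivity) ha1]
    nlinarith [key]
  have h3 : (1+k)/(1+a) - 1 = (k-a)/(1+a) := by field_simp; ring
  have main : (m+1) + k*((k*K - a*p)/(k*K + a*p)) ≤ (m + k*((K-p)/(K+p))) + (1+k)/(1+a) := by
    have := e1
    nlinarith [h4, e1]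
  calc ((m+1) + k * ((k*K - a*p)/(k*K + a*p))) / (1+k)
      ≤ ((m + k*((K-p)/(K+p))) + (1+k)/(1+a)) / (1+k) := by
        exact div_le_div_of_nonneg_right main hk1'.le |>.trans_eq rfl
    _ = 1/(1+a) + (m + k * ((K-p)/(K+p))) / (1+k) := by
        rw [add_div]
        have h5 : ((1+k)/(1+a))/(1+k) = 1/(1+a) := by
          field_simp
        rw [h5]; ring

lemma prod_le_pow (k : ℝ) (s : Multiset ℝ) (hs : ∀ r ∈ s, 0 ≤ r ∧ r ≤ k) :
    s.prod ≤ k ^ Multiset.card s := by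
  induction s using Multiset.induction_on with
  | empty => simp
  | cons a t ih =>
    have ha := hs a (Multiset.mem_cons_self a t)
    have ht : ∀ r ∈ t, 0 ≤ r ∧ r ≤ k := fun r hr => hs r (Multiset.mem_cons_of_mem hr)
    have hp0 : 0 ≤ t.prod := Multiset.prod_nonneg (fun x hx => (ht x hx).1)
    simp only [Multiset.prod_cons, Multiset.card_cons, pow_succ]
    calc a * t.prod ≤ k * t.prod := mul_le_mul_of_nonneg_right ha.2 hp0
      _ ≤ k * k ^ Multiset.card t := by
          have hk0 : 0 ≤ k := le_trans ha.1 ha.2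
          exact mul_le_mul_of_nonneg_left (ih ht) hk0
      _ = k ^ Multiset.card t * k := mul_comm _ _

lemma sumR (k : ℝ) (hk0 : 0 < k) (hk1 : k ≤ 1) (s : Multiset ℝ)
    (hs : ∀ r ∈ s, 0 ≤ r ∧ r ≤ k) :
    ((Multiset.card s : ℝ) + k * ((k ^ Multiset.card s - s.prod) / (k ^ Multiset.card s + s.prod))) / (1 + k)
      ≤ (s.map (fun r => 1 / (1 + r))).sum := by
  induction s using Multiset.induction_on with
  | empty => simp
  | cons a t ih =>
    have ha := hs a (Multiset.mem_cons_self a t)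
    have ht : ∀ r ∈ t, 0 ≤ r ∧ r ≤ k := fun r hr => hs r (Multiset.mem_cons_of_mem hr)
    have hp0 : 0 ≤ t.prod := Multiset.prod_nonneg (fun x hx => (ht x hx).1)
    have hpK : t.prod ≤ k ^ Multiset.card t := prod_le_pow k t ht
    have hK : (0:ℝ) < k ^ Multiset.card t := pow_pos hk0 _
    simp only [Multiset.prod_cons, Multiset.card_cons, Multiset.map_cons, Multiset.sum_cons,
      Nat.cast_succ, pow_succ]
    have hstep := step_ineq k a (k ^ Multiset.card t) t.prod hk0 hk1 ha.1 ha.2 hK hp0 hpK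
      (Multiset.card t : ℝ)
    calc ((Multiset.card t : ℝ) + 1 + k * ((k ^ Multiset.card t * k - a * t.prod) / (k ^ Multiset.card t * k + a * t.prod))) / (1 + k)
        = (((Multiset.card t : ℝ)+1) + k * ((k * k ^ Multiset.card t - a * t.prod) / (k * k ^ Multiset.card t + a * t.prod))) / (1 + k) := by
          ring_nf
      _ ≤ 1/(1+a) + ((Multiset.card t : ℝ) + k * ((k ^ Multiset.card t - t.prod) / (k ^ Multiset.card t + t.prod))) / (1 + k) := hstep
      _ ≤ 1/(1+a) + (t.map (fun r => 1 / (1 + r))).sum := by linarith [ih ht]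

lemma ms_sq_sum (t : Multiset ℝ) (ht : ∀ x ∈ t, 0 ≤ x) :
    t.sum ^ 2 ≤ (Multiset.card t : ℝ) * (t.map (fun x => x ^ 2)).sum := by
  induction t using Multiset.induction_on with
  | empty => simp
  | cons a t ih =>
    have ht' : ∀ x ∈ t, 0 ≤ x := fun x hx => ht x (Multiset.mem_cons_of_mem hx)
    have ihh := ih ht'
    have hT : 0 ≤ (t.map (fun x => x ^ 2)).sum :=
      Multiset.sum_nonneg (by intro y hy; obtain ⟨x, _, rfl⟩ := Multiset.mem_map.1 hy; positivity)
    have hc : (0:ℝ) ≤ (Multiset.card t : ℝ) := Nat.cast_nonneg _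
    simp only [Multiset.sum_cons, Multiset.map_cons, Multiset.card_cons, Nat.cast_succ]
    rcases Nat.eq_zero_or_pos (Multiset.card t) with h0 | h1
    · rw [Multiset.card_eq_zero] at h0
      subst h0
      simp
    · have hc1 : (1:ℝ) ≤ (Multiset.card t : ℝ) := by exact_mod_cast h1
      have h7 : 2*a*t.sum ≤ (Multiset.card t : ℝ)*a^2 + (t.map (fun x => x ^ 2)).sum := by
        nlinarith [sq_nonneg ((Multiset.card t : ℝ) * a - t.sum), ihh, hc1]
      nlinarith [ihh, h7]

lemma norm_expand (z : ℂ) : ‖z - 1‖^2 = ‖z‖^2 - 2*z.re + 1 := by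
  simp only [Complex.sq_norm, Complex.normSq_apply, Complex.sub_re,
    Complex.sub_im, Complex.one_re, Complex.one_im]
  ring

lemma re_ms_sum (s : Multiset ℂ) : (s.sum).re = (s.map Complex.re).sum := by
  induction s using Multiset.induction_on with
  | empty => simp
  | cons a t ih => simp [ih]

lemma norm_expand_n (z : ℂ) (n : ℝ) : ‖z - (n:ℂ)‖^2 = ‖z‖^2 - 2*n*z.re + n^2 := by
  simp only [Complex.sq_norm, Complex.normSq_apply, Complex.sub_re,
    Complex.sub_im, Complex.ofReal_re, Complex.ofReal_im]
  ring

lemma convexity_bound (k : ℝ) (hk0 : 0 ≤ k) (hk1 : k ≤ 1) (s : Multiset ℂ)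
    (h : ∀ w ∈ s, ‖w - 1‖ ≤ k * ‖w‖) :
    ‖s.sum - (Multiset.card s : ℂ)‖ ≤ k * ‖s.sum‖ := by
  have hterm : ∀ w ∈ s, (1 - k^2) * ‖w‖^2 + 1 ≤ 2 * w.re := by
    intro w hw
    have h1 := h w hw
    have h2 : ‖w - 1‖^2 ≤ (k*‖w‖)^2 := by
      have h3 := norm_nonneg (w - 1)
      nlinarith [h1]
    rw [norm_expand] at h2
    nlinarith [h2]
  have hsum : (1 - k^2) * ((s.map (fun w => ‖w‖^2)).sum) + (Multiset.card s : ℝ)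
      ≤ 2 * (s.sum).re := by
    have h4 : ((s.map (fun w => (1 - k^2) * ‖w‖^2 + 1)).sum)
        ≤ ((s.map (fun w => 2 * w.re)).sum) :=
      Multiset.sum_map_le_sum_map _ _ hterm
    rw [Multiset.sum_map_add, Multiset.sum_map_mul_left, Multiset.sum_map_mul_left] at h4
    simpa [re_ms_sum, Multiset.map_const', Multiset.sum_replicate, nsmul_eq_mul] using h4
  have hCS : ‖s.sum‖^2 ≤ (Multiset.card s : ℝ) * ((s.map (fun w => ‖w‖^2)).sum) := by
    have h5 : ‖s.sum‖ ≤ ((s.map (fun w => ‖w‖)).sum) := norm_multiset_sum_le s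
    have h6 : ((s.map (fun w => ‖w‖)).sum)^2
        ≤ (Multiset.card (s.map (fun w => ‖w‖)) : ℝ) * (((s.map (fun w => ‖w‖)).map (fun x => x^2)).sum) := by
      apply ms_sq_sum
      intro x hx
      obtain ⟨w, _, rfl⟩ := Multiset.mem_map.1 hx
      exact norm_nonneg w
    rw [Multiset.card_map, Multiset.map_map] at h6
    have h7 : ‖s.sum‖^2 ≤ ((s.map (fun w => ‖w‖)).sum)^2 := by
      have := norm_nonneg s.sum
      nlinarith [h5]
    calc ‖s.sum‖^2 ≤ ((s.map (fun w => ‖w‖)).sum)^2 := h7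
      _ ≤ (Multiset.card s : ℝ) * (((s.map (fun w => ‖w‖ ^ 2))).sum) := by
          simpa [Function.comp] using h6
  have hfin : ‖s.sum - (Multiset.card s : ℂ)‖^2 ≤ (k * ‖s.sum‖)^2 := by
    have hexp : ‖s.sum - ((Multiset.card s : ℝ) : ℂ)‖^2
        = ‖s.sum‖^2 - 2*(Multiset.card s : ℝ)*(s.sum).re + (Multiset.card s : ℝ)^2 :=
      norm_expand_n s.sum (Multiset.card s : ℝ)
    have hc : (0:ℝ) ≤ (Multiset.card s : ℝ) := Nat.cast_nonneg _
    have hTn : (0:ℝ) ≤ (s.map (fun w => ‖w‖^2)).sum := by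
      apply Multiset.sum_nonneg
      intro y hy
      obtain ⟨w, _, rfl⟩ := Multiset.mem_map.1 hy
      positivity
    have hmul : (1 - k^2) * ‖s.sum‖^2 ≤ (Multiset.card s : ℝ) * (2 * (s.sum).re) - (Multiset.card s : ℝ)^2 := by
      have hk2 : 0 ≤ 1 - k^2 := by nlinarith
      nlinarith [mul_le_mul_of_nonneg_left hsum hc, mul_le_mul_of_nonneg_left hCS hk2]
    rw [show ((Multiset.card s : ℕ) : ℂ) = ((Multiset.card s : ℝ) : ℂ) by push_cast; ring, hexp]
    nlinarith [hmul]
  have h8 : (0:ℝ) ≤ k * ‖s.sum‖ := mul_nonneg hk0 (norm_nonneg _)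
  exact (pow_le_pow_iff_left₀ (norm_nonneg _) h8 (by norm_num)).1 hfin

open Polynomial in
lemma deriv_prod_eval (s : Multiset ℂ) (z : ℂ) (hz : ∀ c ∈ s, z - c ≠ 0) :
    z * Polynomial.eval z (Polynomial.derivative (s.map (fun c => X - C c)).prod)
      = Polynomial.eval z ((s.map (fun c => X - C c)).prod) * (s.map (fun c => z/(z - c))).sum := by
  induction s using Multiset.induction_on with
  | empty => simp
  | cons a t ih =>
    have hz' : ∀ c ∈ t, z - c ≠ 0 := fun c hc => hz c (Multiset.mem_cons_of_mem hc)
    have ha := hz a (Multiset.mem_cons_self a t)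
    have ihh := ih hz'
    simp only [Multiset.map_cons, Multiset.prod_cons, Multiset.sum_cons, derivative_mul,
      derivative_sub, derivative_X, derivative_C, sub_zero, one_mul, eval_add, eval_mul,
      eval_sub, eval_X, eval_C]
    have expand : z * (Polynomial.eval z (t.map (fun c => X - C c)).prod
        + (z - a) * Polynomial.eval z (Polynomial.derivative (t.map (fun c => X - C c)).prod))
        = z * Polynomial.eval z (t.map (fun c => X - C c)).prod
          + (z - a) * (z * Polynomial.eval z (Polynomial.derivative (t.map (fun c => X - C c)).prod)) := by
      ring
    rw [expand, ihh]
    field_simp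

lemma re_lower (z₀ z : ℂ) (h0 : ‖z₀‖ = 1) (hz : ‖z‖ ≤ 1) (hne : z₀ - z ≠ 0) :
    1/(1+‖z‖) ≤ (z₀/(z₀ - z)).re := by
  have hd : 0 < Complex.normSq (z₀ - z) := Complex.normSq_pos.mpr hne
  have hre : (z₀/(z₀ - z)).re
      = (z₀.re * (z₀ - z).re + z₀.im * (z₀ - z).im) / Complex.normSq (z₀ - z) := by
    rw [Complex.div_re]; ring
  have h1 : z₀.re^2 + z₀.im^2 = 1 := by
    have : ‖z₀‖^2 = 1 := by rw [h0]; norm_num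
    rwa [Complex.sq_norm, Complex.normSq_apply, ← sq, ← sq] at this
  have h2 : z.re^2 + z.im^2 = ‖z‖^2 := by
    rw [Complex.sq_norm, Complex.normSq_apply, ← sq, ← sq]
  have ht1 : z₀.re * z.re + z₀.im * z.im ≤ ‖z‖ := by
    have h3 : (z₀ * (starRingEnd ℂ) z).re ≤ ‖z₀ * (starRingEnd ℂ) z‖ :=
      Complex.re_le_norm _
    have h4 : ‖z₀ * (starRingEnd ℂ) z‖ = ‖z‖ := by
      rw [norm_mul, h0, one_mul, RCLike.norm_conj]
    have h5 : (z₀ * (starRingEnd ℂ) z).re = z₀.re * z.re + z₀.im * z.im := by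
      simp [Complex.mul_re, Complex.conj_re, Complex.conj_im]
    rw [h5, h4] at h3
    exact h3
  have ht2 : -(‖z‖) ≤ z₀.re * z.re + z₀.im * z.im := by
    have h3 : (-(z₀ * (starRingEnd ℂ) z)).re ≤ ‖-(z₀ * (starRingEnd ℂ) z)‖ :=
      Complex.re_le_norm _
    have h4 : ‖-(z₀ * (starRingEnd ℂ) z)‖ = ‖z‖ := by
      rw [norm_neg, norm_mul, h0, one_mul, RCLike.norm_conj]
    have h5 : (-(z₀ * (starRingEnd ℂ) z)).re = -(z₀.re * z.re + z₀.im * z.im) := by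
      simp [Complex.mul_re, Complex.conj_re, Complex.conj_im]
      try ring
    rw [h5, h4] at h3
    linarith
  rw [hre, div_le_div_iff₀ (by positivity) hd]
  have hz0 : 0 ≤ ‖z‖ := norm_nonneg z
  simp only [Complex.normSq_apply, Complex.sub_re, Complex.sub_im]
  nlinarith [mul_nonneg (sub_nonneg.2 hz) (by linarith : (0:ℝ) ≤ ‖z‖ + (z₀.re * z.re + z₀.im * z.im))]

lemma norm_prod_neg (s : Multiset ℂ) :
    ‖(s.map (fun c => -c)).prod‖ = (s.map (fun c => ‖c‖)).prod := by
  induction s using Multiset.induction_on with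
  | empty => simp
  | cons a t ih => simp only [Multiset.map_cons, Multiset.prod_cons, norm_mul, norm_neg, ih]

theorem stmt_11 (P : Polynomial ℂ) (n : ℕ) (hn : 0 < n) (hdeg : P.natDegree = n)
    (k : ℝ) (hk0 : 0 < k) (hk1 : k ≤ 1)
    (hzeros : ∀ z : ℂ, P.IsRoot z → ‖z‖ ≤ k)
    (α : ℂ) (hα : k ≤ ‖α‖)
    (D : Polynomial ℂ)
    (hD : D = Polynomial.C (n : ℂ) * P + (Polynomial.C α - Polynomial.X) * P.derivative) :
    (n : ℝ) * ((‖α‖ - k) / (1 + k)) *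
        (1 + (k / n) * ((k ^ n * ‖P.leadingCoeff‖ - ‖P.coeff 0‖) /
          (k ^ n * ‖P.leadingCoeff‖ + ‖P.coeff 0‖))) *
        (⨆ w : Metric.sphere (0 : ℂ) 1, ‖P.eval (w : ℂ)‖) ≤
      ⨆ w : Metric.sphere (0 : ℂ) 1, ‖D.eval (w : ℂ)‖ := by
  classical
  have hPne : P ≠ 0 := by
    intro h
    rw [h, Polynomial.natDegree_zero] at hdeg
    omega
  have hsplits : P.Splits := IsAlgClosed.splits P
  have hcard : Multiset.card P.roots = n := by
    rw [← hdeg]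
    exact Polynomial.splits_iff_card_roots.mp hsplits
  have hfact : P = Polynomial.C P.leadingCoeff
      * (P.roots.map (fun c => Polynomial.X - Polynomial.C c)).prod :=
    hsplits.eq_prod_roots
  have ha : P.leadingCoeff ≠ 0 := Polynomial.leadingCoeff_ne_zero.mpr hPne
  have hroots : ∀ c ∈ P.roots, ‖c‖ ≤ k :=
    fun c hc => hzeros c (Polynomial.isRoot_of_mem_roots hc)
  -- max of ‖P‖ on the sphere
  have hsphne : (Metric.sphere (0:ℂ) 1).Nonempty := NormedSpace.sphere_nonempty.mpr zero_le_one
  obtain ⟨z₀, hz₀, hmax'⟩ := (isCompact_sphere (0:ℂ) 1).exists_isMaxOn hsphne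
    ((Polynomial.continuous P).norm.continuousOn)
  have hmax : ∀ w ∈ Metric.sphere (0:ℂ) 1, ‖P.eval w‖ ≤ ‖P.eval z₀‖ := fun w hw => hmax' hw
  obtain ⟨z₁, hz₁, hmaxD'⟩ := (isCompact_sphere (0:ℂ) 1).exists_isMaxOn hsphne
    ((Polynomial.continuous D).norm.continuousOn)
  have hbddD : BddAbove (Set.range fun w : Metric.sphere (0:ℂ) 1 => ‖D.eval (w:ℂ)‖) :=
    ⟨‖D.eval z₁‖, by rintro x ⟨w, rfl⟩; exact hmaxD' w.2⟩
  have hbddP : BddAbove (Set.range fun w : Metric.sphere (0:ℂ) 1 => ‖P.eval (w:ℂ)‖) :=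
    ⟨‖P.eval z₀‖, by rintro x ⟨w, rfl⟩; exact hmax w w.2⟩
  have hsupP : (⨆ w : Metric.sphere (0:ℂ) 1, ‖P.eval (w:ℂ)‖) = ‖P.eval z₀‖ :=
    le_antisymm (ciSup_le fun w => hmax w w.2) (le_ciSup hbddP ⟨z₀, hz₀⟩)
  have hDge : ‖D.eval z₀‖ ≤ ⨆ w : Metric.sphere (0:ℂ) 1, ‖D.eval (w:ℂ)‖ :=
    le_ciSup hbddD ⟨z₀, hz₀⟩
  rw [hsupP]
  set M := ‖P.eval z₀‖ with hMdef
  by_cases hM : M = 0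
  · rw [hM, mul_zero]
    exact le_trans (norm_nonneg _) hDge
  have hM0 : 0 < M := lt_of_le_of_ne (norm_nonneg _) (Ne.symm hM)
  have hPz₀ : P.eval z₀ ≠ 0 := fun h => hM (by rw [hMdef, h, norm_zero])
  have hz₀n : ‖z₀‖ = 1 := by rwa [mem_sphere_zero_iff_norm] at hz₀
  have hzc : ∀ c ∈ P.roots, z₀ - c ≠ 0 := by
    intro c hc h
    apply hPz₀
    rw [sub_eq_zero] at h
    rw [h]
    exact Polynomial.isRoot_of_mem_roots hc
  set S := P.roots with hSdef
  set T := (S.map (fun c => Polynomial.X - Polynomial.C c)).prod with hTdef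
  set W := (S.map (fun c => z₀/(z₀ - c))).sum with hWdef
  set ρ := (S.map (fun c => ‖c‖)).prod with hρdef
  -- the identity z₀ P'(z₀) = P(z₀) W
  have hPz : Polynomial.eval z₀ P = P.leadingCoeff * Polynomial.eval z₀ T := by
    conv_lhs => rw [hfact]
    rw [Polynomial.eval_mul, Polynomial.eval_C]
  have hid : z₀ * Polynomial.eval z₀ (Polynomial.derivative P) = Polynomial.eval z₀ P * W := by
    conv_lhs => rw [hfact]
    rw [Polynomial.derivative_C_mul, Polynomial.eval_mul, Polynomial.eval_C]
    calc z₀ * (P.leadingCoeff * Polynomial.eval z₀ (Polynomial.derivative T))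
        = P.leadingCoeff * (z₀ * Polynomial.eval z₀ (Polynomial.derivative T)) := by ring
      _ = P.leadingCoeff * (Polynomial.eval z₀ T * W) := by rw [deriv_prod_eval S z₀ hzc]
      _ = Polynomial.eval z₀ P * W := by rw [hPz]; ring
  -- convexity bound
  have hconv : ‖W - (n:ℂ)‖ ≤ k * ‖W‖ := by
    have hcard' : Multiset.card (S.map (fun c => z₀/(z₀ - c))) = n := by
      rw [Multiset.card_map]
      exact hcard
    have h := convexity_bound k hk0.le hk1 (S.map (fun c => z₀/(z₀ - c))) ?_
    · rwa [hcard', ← hWdef] at h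
    · intro w hw
      obtain ⟨c, hc, rfl⟩ := Multiset.mem_map.1 hw
      have hd : z₀ - c ≠ 0 := hzc c hc
      have he : z₀/(z₀ - c) - 1 = c/(z₀ - c) := by field_simp; ring
      rw [he, norm_div, norm_div, hz₀n, mul_one_div]
      exact (div_le_div_iff_of_pos_right (norm_pos_iff.mpr hd)).mpr (hroots c hc)
  -- lower bound on Re W
  have hre : ((n:ℝ) + k*((k^n - ρ)/(k^n + ρ)))/(1+k) ≤ W.re := by
    have hmem : ∀ r ∈ (S.map (fun c => ‖c‖)), 0 ≤ r ∧ r ≤ k := by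
      intro r hr
      obtain ⟨c, hc, rfl⟩ := Multiset.mem_map.1 hr
      exact ⟨norm_nonneg c, hroots c hc⟩
    have h1 := sumR k hk0 hk1 (S.map (fun c => ‖c‖)) hmem
    simp only [Multiset.card_map, Multiset.map_map, Function.comp] at h1
    rw [hcard, ← hρdef] at h1
    have h2 : ((S.map (fun c => 1/(1+‖c‖))).sum) ≤ ((S.map (fun c => (z₀/(z₀ - c)).re)).sum) := by
      apply Multiset.sum_map_le_sum_map
      intro c hc
      exact re_lower z₀ c hz₀n (le_trans (hroots c hc) hk1) (hzc c hc)
    have h3 : ((S.map (fun c => (z₀/(z₀ - c)).re)).sum) = W.re := by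
      rw [hWdef, re_ms_sum, Multiset.map_map]
      rfl
    rw [← h3]
    exact le_trans h1 h2
  have hWn : ((n:ℝ) + k*((k^n - ρ)/(k^n + ρ)))/(1+k) ≤ ‖W‖ :=
    le_trans hre (Complex.re_le_norm W)
  -- coefficient identity
  have hρcoeff : ‖P.coeff 0‖ = ‖P.leadingCoeff‖ * ρ := by
    rw [Polynomial.coeff_zero_eq_eval_zero]
    conv_lhs => rw [hfact]
    rw [Polynomial.eval_mul, Polynomial.eval_C, norm_mul]
    congr 1
    rw [Polynomial.eval_multiset_prod, Multiset.map_map]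
    rw [show ((Polynomial.eval 0) ∘ (fun c : ℂ => Polynomial.X - Polynomial.C c)) = (fun c : ℂ => -c) from by funext c; simp]
    rw [hρdef]
    exact norm_prod_neg S
  -- lower bound for D at z₀
  have hu : ‖Polynomial.eval z₀ (Polynomial.derivative P)‖ = M * ‖W‖ := by
    rw [show ‖Polynomial.eval z₀ (Polynomial.derivative P)‖
        = ‖z₀ * Polynomial.eval z₀ (Polynomial.derivative P)‖ from by rw [norm_mul, hz₀n, one_mul]]
    rw [hid, norm_mul, hMdef]
  have hDval : Polynomial.eval z₀ D
      = α * Polynomial.eval z₀ (Polynomial.derivative P)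
        + ((n:ℂ) * Polynomial.eval z₀ P - z₀ * Polynomial.eval z₀ (Polynomial.derivative P)) := by
    rw [hD]
    simp only [Polynomial.eval_add, Polynomial.eval_mul, Polynomial.eval_sub, Polynomial.eval_C,
      Polynomial.eval_X]
    ring
  have hrem : ‖(n:ℂ) * Polynomial.eval z₀ P - z₀ * Polynomial.eval z₀ (Polynomial.derivative P)‖
      ≤ k * (M * ‖W‖) := by
    rw [hid, show (n:ℂ) * Polynomial.eval z₀ P - Polynomial.eval z₀ P * W
        = -(Polynomial.eval z₀ P * (W - (n:ℂ))) from by ring, norm_neg, norm_mul]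
    rw [← hMdef]
    calc M * ‖W - (n:ℂ)‖ ≤ M * (k * ‖W‖) := mul_le_mul_of_nonneg_left hconv hM0.le
      _ = k * (M * ‖W‖) := by ring
  have hDz : (‖α‖ - k) * (M * ‖W‖) ≤ ‖Polynomial.eval z₀ D‖ := by
    have h7 : ‖α * Polynomial.eval z₀ (Polynomial.derivative P)‖
        ≤ ‖Polynomial.eval z₀ D‖
          + ‖(n:ℂ) * Polynomial.eval z₀ P - z₀ * Polynomial.eval z₀ (Polynomial.derivative P)‖ := by
      calc ‖α * Polynomial.eval z₀ (Polynomial.derivative P)‖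
          = ‖Polynomial.eval z₀ D - ((n:ℂ) * Polynomial.eval z₀ P - z₀ * Polynomial.eval z₀ (Polynomial.derivative P))‖ := by
            rw [hDval]; ring_nf
        _ ≤ _ := norm_sub_le _ _
    rw [norm_mul, hu] at h7
    nlinarith [hrem, h7]
  -- final assembly
  have hkn : (0:ℝ) < k^n + ρ := by
    have : (0:ℝ) ≤ ρ := by
      rw [hρdef]
      exact Multiset.prod_nonneg (by intro x hx; obtain ⟨c, _, rfl⟩ := Multiset.mem_map.1 hx; exact norm_nonneg c)
    positivity
  have hA : (0:ℝ) < ‖P.leadingCoeff‖ := norm_pos_iff.mpr ha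
  have hq : (k^n * ‖P.leadingCoeff‖ - ‖P.coeff 0‖) / (k^n * ‖P.leadingCoeff‖ + ‖P.coeff 0‖)
      = (k^n - ρ)/(k^n + ρ) := by
    rw [hρcoeff]
    rw [show k^n * ‖P.leadingCoeff‖ - ‖P.leadingCoeff‖ * ρ = ‖P.leadingCoeff‖ * (k^n - ρ) from by ring,
      show k^n * ‖P.leadingCoeff‖ + ‖P.leadingCoeff‖ * ρ = ‖P.leadingCoeff‖ * (k^n + ρ) from by ring]
    exact mul_div_mul_left _ _ (ne_of_gt hA)
  rw [hq]
  have hne' : (n:ℝ) ≠ 0 := Nat.cast_ne_zero.mpr (Nat.pos_iff_ne_zero.mp hn)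
  have hkk : (1:ℝ) + k ≠ 0 := by positivity
  have heq : (n : ℝ) * ((‖α‖ - k) / (1 + k)) * (1 + (k / n) * ((k^n - ρ)/(k^n + ρ))) * M
      = (‖α‖ - k) * (M * (((n:ℝ) + k*((k^n - ρ)/(k^n + ρ)))/(1+k))) := by
    field_simp
  rw [heq]
  have hαk : (0:ℝ) ≤ ‖α‖ - k := by linarith
  calc (‖α‖ - k) * (M * (((n:ℝ) + k*((k^n - ρ)/(k^n + ρ)))/(1+k)))
      ≤ (‖α‖ - k) * (M * ‖W‖) := by
        apply mul_le_mul_of_nonneg_left _ hαk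
        exact mul_le_mul_of_nonneg_left hWn hM0.le
    _ ≤ ‖Polynomial.eval z₀ D‖ := hDz
    _ ≤ _ := hDge
end

section
/- Let $P(z) = c\prod_{j=1}^n(z-z_j)$ be a degree-$n$ polynomial with all zeros satisfying $|z_j| \le 1$, and let $\gamma = (\gamma_1,\dots,\gamma_n)$ be nonnegative reals, not all zero, with sum $\Lambda$ and minimum $\gamma_m$. Then for every $z$ with $|z| = 1$, $\left| z\, P(z) \sum_{j=1}^n \frac{\gamma_j}{z - z_j} \right| \ge \left( \frac{\Lambda}{2} + \frac{\gamma_m}{2}\cdot\frac{|a_n| - |a_0|}{|a_n| + |a_0|} \right) |P(z)|$, where $a_n$ and $a_0$ are the leading coefficient and constant term of $P$ (the left side is interpreted as the value of the polynomial $z \cdot c\sum_j \gamma_j \prod_{i\ne j}(z-z_i)$). -/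
lemma reA (w ζ : ℂ) (hw : ‖w‖ = 1) (hζ : ‖ζ‖ ≤ 1) (hne : w ≠ ζ) :
    1 / (1 + ‖ζ‖) ≤ (w / (w - ζ)).re := by
  have hns : (0:ℝ) < Complex.normSq (w - ζ) :=
    Complex.normSq_pos.mpr (sub_ne_zero.mpr hne)
  have h1 : w.re ^ 2 + w.im ^ 2 = 1 := by
    have h := Complex.sq_norm w
    rw [hw, Complex.normSq_apply] at h
    simpa [sq] using h.symm
  have h2 : ζ.re ^ 2 + ζ.im ^ 2 = ‖ζ‖ ^ 2 := by
    have h := Complex.sq_norm ζ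
    rw [Complex.normSq_apply] at h
    simpa [sq] using h.symm
  have ht0 : 0 ≤ ‖ζ‖ := norm_nonneg _
  have hden : (0:ℝ) < 1 + ‖ζ‖ := by linarith
  rw [Complex.div_re, ← add_div, div_le_div_iff₀ hden hns]
  have hnsq : Complex.normSq (w - ζ) = (w.re - ζ.re)^2 + (w.im - ζ.im)^2 := by
    simp [Complex.normSq_apply, sq]
  rw [hnsq]
  have hs : (w.re * ζ.re + w.im * ζ.im)^2 ≤ ‖ζ‖^2 := by
    nlinarith [sq_nonneg (w.re * ζ.im - w.im * ζ.re)]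
  have hsge : -‖ζ‖ ≤ w.re * ζ.re + w.im * ζ.im := by nlinarith
  simp only [Complex.sub_re, Complex.sub_im]
  nlinarith [mul_nonneg (sub_nonneg.2 hζ) (by linarith : (0:ℝ) ≤ ‖ζ‖ + (w.re * ζ.re + w.im * ζ.im))]

lemma fmul (a b : ℝ) (ha0 : 0 ≤ a) (ha1 : a ≤ 1) (hb0 : 0 ≤ b) (hb1 : b ≤ 1) :
    (1 - a * b) / (1 + a * b) ≤ (1 - a) / (1 + a) + (1 - b) / (1 + b) := by
  have h1 : (0:ℝ) < 1 + a := by linarith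
  have h2 : (0:ℝ) < 1 + b := by linarith
  have h3 : (0:ℝ) < 1 + a * b := by nlinarith
  rw [div_add_div _ _ (ne_of_gt h1) (ne_of_gt h2), div_le_div_iff₀ h3 (by positivity)]
  nlinarith [mul_nonneg (mul_nonneg (sub_nonneg.2 ha1) (sub_nonneg.2 hb1))
    (sub_nonneg.2 (by nlinarith : a * b ≤ 1))]

lemma sumB {ι : Type*} (s : Finset ι) (t : ι → ℝ) (h0 : ∀ i ∈ s, 0 ≤ t i)
    (h1 : ∀ i ∈ s, t i ≤ 1) :
    (1 - ∏ i ∈ s, t i) / (1 + ∏ i ∈ s, t i) ≤ ∑ i ∈ s, (1 - t i) / (1 + t i) := by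
  induction s using Finset.cons_induction with
  | empty => simp
  | cons a s ha ih =>
    rw [Finset.prod_cons, Finset.sum_cons]
    have hp0 : 0 ≤ ∏ i ∈ s, t i := Finset.prod_nonneg fun i hi => h0 i (Finset.mem_cons_of_mem hi)
    have hp1 : ∏ i ∈ s, t i ≤ 1 :=
      Finset.prod_le_one (fun i hi => h0 i (Finset.mem_cons_of_mem hi))
        (fun i hi => h1 i (Finset.mem_cons_of_mem hi))
    calc (1 - t a * ∏ i ∈ s, t i) / (1 + t a * ∏ i ∈ s, t i)
        ≤ (1 - t a) / (1 + t a) + (1 - ∏ i ∈ s, t i) / (1 + ∏ i ∈ s, t i) :=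
          fmul _ _ (h0 a (Finset.mem_cons_self a s)) (h1 a (Finset.mem_cons_self a s)) hp0 hp1
      _ ≤ _ := by
          have := ih (fun i hi => h0 i (Finset.mem_cons_of_mem hi))
            (fun i hi => h1 i (Finset.mem_cons_of_mem hi))
          linarith

theorem stmt_12 (n : ℕ) (hn : 0 < n) (c : ℂ) (hc : c ≠ 0) (z : Fin n → ℂ)
    (hz : ∀ j, ‖z j‖ ≤ 1)
    (γ : Fin n → ℝ) (hγ : ∀ j, 0 ≤ γ j) (hγ0 : ∃ j, γ j ≠ 0)
    (γm : ℝ) (hγm : IsLeast (Set.range γ) γm)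
    (P : Polynomial ℂ) (hP : P = Polynomial.C c * ∏ j, (Polynomial.X - Polynomial.C (z j)))
    (Pγ : Polynomial ℂ)
    (hPγ : Pγ = Polynomial.C c * ∑ j, Polynomial.C (γ j : ℂ) *
      ∏ i ∈ Finset.univ.erase j, (Polynomial.X - Polynomial.C (z i)))
    (w : ℂ) (hw : ‖w‖ = 1) :
    ((∑ j, γ j) / 2 + γm / 2 * ((‖c‖ - ‖P.coeff 0‖) / (‖c‖ + ‖P.coeff 0‖))) * ‖P.eval w‖ ≤
      ‖w * Pγ.eval w‖ := by
  by_cases hPw : P.eval w = 0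
  · simp only [hPw, norm_zero, mul_zero]
    positivity
  -- w ≠ z j for all j
  have hne : ∀ j, w ≠ z j := by
    intro j hj
    apply hPw
    rw [hP]
    simp only [Polynomial.eval_mul, Polynomial.eval_C, Polynomial.eval_prod,
      Polynomial.eval_sub, Polynomial.eval_X]
    rw [Finset.prod_eq_zero (Finset.mem_univ j) (by rw [← hj]; ring)]
    ring
  have hsub : ∀ j, w - z j ≠ 0 := fun j => sub_ne_zero.mpr (hne j)
  -- key identity
  have key : Pγ.eval w = P.eval w * ∑ j, (γ j : ℂ) / (w - z j) := by
    rw [hP, hPγ]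
    simp only [Polynomial.eval_mul, Polynomial.eval_C, Polynomial.eval_finset_sum,
      Polynomial.eval_prod, Polynomial.eval_sub, Polynomial.eval_X]
    rw [mul_assoc]
    congr 1
    rw [Finset.mul_sum]
    refine Finset.sum_congr rfl fun j _ => ?_
    rw [← Finset.mul_prod_erase _ _ (Finset.mem_univ j)]
    field_simp [hsub j]
  have hwkey : w * Pγ.eval w = P.eval w * ∑ j, (γ j : ℂ) * (w / (w - z j)) := by
    rw [key, mul_left_comm]
    congr 1
    rw [Finset.mul_sum]
    refine Finset.sum_congr rfl fun j _ => ?_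
    ring
  set S : ℂ := ∑ j, (γ j : ℂ) * (w / (w - z j)) with hS
  have hnorm : ‖w * Pγ.eval w‖ = ‖P.eval w‖ * ‖S‖ := by rw [hwkey, norm_mul]
  have hre : ∑ j, γ j * (1 / (1 + ‖z j‖)) ≤ S.re := by
    rw [hS, Complex.re_sum]
    refine Finset.sum_le_sum fun j _ => ?_
    rw [Complex.re_ofReal_mul]
    exact mul_le_mul_of_nonneg_left (reA w (z j) hw (hz j) (hne j)) (hγ j)
  have hSre : S.re ≤ ‖S‖ := Complex.re_le_norm S
  obtain ⟨⟨jm, hjm⟩, hlb⟩ := hγm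
  have hγm0 : 0 ≤ γm := hjm ▸ hγ jm
  have hγmle : ∀ j, γm ≤ γ j := fun j => hlb ⟨j, rfl⟩
  set T : ℝ := ∏ j, ‖z j‖ with hT
  have hT0 : 0 ≤ T := Finset.prod_nonneg fun j _ => norm_nonneg _
  have hT1 : T ≤ 1 := Finset.prod_le_one (fun j _ => norm_nonneg _) (fun j _ => hz j)
  have hc0 : ‖P.coeff 0‖ = ‖c‖ * T := by
    rw [Polynomial.coeff_zero_eq_eval_zero, hP]
    simp only [Polynomial.eval_mul, Polynomial.eval_C, Polynomial.eval_prod,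
      Polynomial.eval_sub, Polynomial.eval_X, zero_sub, norm_mul, norm_prod, norm_neg, hT]
  have hcpos : 0 < ‖c‖ := norm_pos_iff.mpr hc
  have hratio : (‖c‖ - ‖P.coeff 0‖) / (‖c‖ + ‖P.coeff 0‖) = (1 - T) / (1 + T) := by
    rw [hc0, show ‖c‖ - ‖c‖ * T = ‖c‖ * (1 - T) by ring,
      show ‖c‖ + ‖c‖ * T = ‖c‖ * (1 + T) by ring,
      mul_div_mul_left _ _ (ne_of_gt hcpos)]
  have hterm : ∀ j, γ j / 2 + γm / 2 * ((1 - ‖z j‖) / (1 + ‖z j‖)) ≤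
      γ j * (1 / (1 + ‖z j‖)) := by
    intro j
    have ht0 : (0:ℝ) ≤ ‖z j‖ := norm_nonneg _
    have hd : (0:ℝ) < 1 + ‖z j‖ := by linarith
    have hfr : (0:ℝ) ≤ (1 - ‖z j‖) / (1 + ‖z j‖) := div_nonneg (by linarith [hz j]) hd.le
    have heq : γ j * (1 / (1 + ‖z j‖)) =
        γ j / 2 + γ j / 2 * ((1 - ‖z j‖) / (1 + ‖z j‖)) := by
      field_simp
      ring
    rw [heq]
    have := mul_le_mul_of_nonneg_right
      (by linarith [hγmle j] : γm / 2 ≤ γ j / 2) hfr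
    linarith
  have hsumB := sumB Finset.univ (fun j => ‖z j‖) (fun j _ => norm_nonneg _)
    (fun j _ => hz j)
  have hsum : (∑ j, γ j) / 2 + γm / 2 * ((1 - T) / (1 + T)) ≤
      ∑ j, γ j * (1 / (1 + ‖z j‖)) := by
    have h1 : ∑ j, (γ j / 2 + γm / 2 * ((1 - ‖z j‖) / (1 + ‖z j‖))) =
        (∑ j, γ j) / 2 + γm / 2 * ∑ j, (1 - ‖z j‖) / (1 + ‖z j‖) := by
      rw [Finset.sum_add_distrib, ← Finset.sum_div, ← Finset.mul_sum]
    have h2 : γm / 2 * ((1 - T) / (1 + T)) ≤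
        γm / 2 * ∑ j, (1 - ‖z j‖) / (1 + ‖z j‖) :=
      mul_le_mul_of_nonneg_left hsumB (by linarith)
    have h3 := Finset.sum_le_sum fun j (_ : j ∈ Finset.univ) => hterm j
    rw [h1] at h3
    linarith
  rw [hratio, hnorm, mul_comm ‖P.eval w‖]
  exact mul_le_mul_of_nonneg_right (by linarith) (norm_nonneg _)
end

section
/- If $P(z)$ is a polynomial of degree $n \ge 1$ and $\alpha \in \mathbb{C}$ with $|\alpha| \ge 1$, then for every $z$ with $|z| \ge 1$, $|D_\alpha[P](z)| \le n |\alpha| |z|^{n-1} \max_{|w|=1} |P(w)|$, where $D_\alpha[P](z) = nP(z) + (\alpha - z)P'(z)$. -/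
open Polynomial Metric

/-- Max modulus on closed unit disk for polynomials. -/
lemma poly_maxmod (Q : Polynomial ℂ) {C : ℝ} (hC : ∀ w : ℂ, ‖w‖ = 1 → ‖Q.eval w‖ ≤ C)
    {w : ℂ} (hw : ‖w‖ ≤ 1) : ‖Q.eval w‖ ≤ C := by
  refine Complex.norm_le_of_forall_mem_frontier_norm_le (U := ball (0:ℂ) 1)
    isBounded_ball (Q.differentiable.diffContOnCl) ?_ ?_
  · intro x hx
    rw [frontier_ball (0:ℂ) one_ne_zero, mem_sphere_zero_iff_norm] at hx
    exact hC x hx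
  · rw [closure_ball (0:ℂ) one_ne_zero, mem_closedBall_zero_iff]
    exact hw

lemma reflect_eval {Q : Polynomial ℂ} {m : ℕ} (hm : Q.natDegree ≤ m) {x : ℂ} (hx : x ≠ 0) :
    (Q.reflect m).eval x⁻¹ * x ^ m = Q.eval x := by
  have : Invertible x := invertibleOfNonzero hx
  have h := Polynomial.eval₂_reflect_mul_pow (RingHom.id ℂ) x m Q hm
  rw [invOf_eq_inv] at h; exact h

lemma reflect_circle_bound {Q : Polynomial ℂ} {m : ℕ} (hm : Q.natDegree ≤ m) {C : ℝ}
    (hC : ∀ w : ℂ, ‖w‖ = 1 → ‖Q.eval w‖ ≤ C) {v : ℂ} (hv : ‖v‖ = 1) :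
    ‖(Q.reflect m).eval v‖ ≤ C := by
  have hv0 : v ≠ 0 := by intro h; simp [h] at hv
  have h1 : ‖v⁻¹‖ = 1 := by rw [norm_inv, hv]; norm_num
  have h2 := reflect_eval hm (x := v⁻¹) (inv_ne_zero hv0)
  rw [inv_inv] at h2
  have h3 : ‖(Q.reflect m).eval v‖ * ‖v⁻¹‖ ^ m = ‖Q.eval v⁻¹‖ := by
    rw [← h2, norm_mul, norm_pow]
  rw [h1, one_pow, mul_one] at h3
  rw [h3]; exact hC _ h1

/-- Growth estimate: polynomial of degree ≤ m bounded by C on circle is ≤ ‖z‖^m C outside. -/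
lemma poly_growth {Q : Polynomial ℂ} {m : ℕ} (hm : Q.natDegree ≤ m) {C : ℝ}
    (hC : ∀ w : ℂ, ‖w‖ = 1 → ‖Q.eval w‖ ≤ C) {z : ℂ} (hz : 1 ≤ ‖z‖) :
    ‖Q.eval z‖ ≤ ‖z‖ ^ m * C := by
  have hz0 : z ≠ 0 := by intro h; simp [h] at hz; linarith
  have h2 := reflect_eval hm (x := z) hz0
  have h3 : ‖Q.eval z‖ = ‖(Q.reflect m).eval z⁻¹‖ * ‖z‖ ^ m := by
    rw [← h2, norm_mul, norm_pow]
  have h4 : ‖(Q.reflect m).eval z⁻¹‖ ≤ C := by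
    refine poly_maxmod _ (fun w hw => reflect_circle_bound hm hC hw) ?_
    rw [norm_inv]
    exact inv_le_one_of_one_le₀ hz
  rw [h3, mul_comm]
  exact mul_le_mul_of_nonneg_left h4 (by positivity)

/-- The top coefficient is bounded by the sup on the circle. -/
lemma coeff_bound {Q : Polynomial ℂ} {m : ℕ} (hm : Q.natDegree ≤ m) {C : ℝ}
    (hC : ∀ w : ℂ, ‖w‖ = 1 → ‖Q.eval w‖ ≤ C) : ‖Q.coeff m‖ ≤ C := by
  have h : (Q.reflect m).eval 0 = Q.coeff m := by
    rw [← Polynomial.coeff_zero_eq_eval_zero, Polynomial.coeff_reflect]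
    simp
  rw [← h]
  exact poly_maxmod _ (fun w hw => reflect_circle_bound hm hC hw) (by norm_num)

lemma half_re {z r : ℂ} (hz : ‖z‖ = 1) (hr : ‖r‖ ≤ 1) (hzr : z ≠ r) :
    (1:ℝ)/2 ≤ (z / (z - r)).re := by
  have hd : z - r ≠ 0 := sub_ne_zero.mpr hzr
  set w := z / (z - r) with hw
  have h1 : w - 1 = r / (z - r) := by
    rw [hw, div_sub_one hd]; ring
  have h2 : ‖w - 1‖ ≤ ‖w‖ := by
    rw [h1, hw, norm_div, norm_div, hz]
    exact div_le_div_of_nonneg_right hr (by positivity) |>.trans_eq (by ring) |>.trans le_rfl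
  have h3 : ‖w - 1‖ ^ 2 ≤ ‖w‖ ^ 2 := by
    apply pow_le_pow_left₀ (norm_nonneg _) h2
  have key : ∀ u : ℂ, ‖u‖ ^ 2 = Complex.normSq u := fun u => by
    rw [Complex.sq_norm]
  have e1 : ‖w - 1‖ ^ 2 = ‖w‖ ^ 2 - 2 * w.re + 1 := by
    rw [key, key]
    simp [Complex.normSq_apply, Complex.sub_re, Complex.sub_im]
    ring
  nlinarith [h3, e1]

lemma sum_re_half {s : Multiset ℂ} {z : ℂ} (hz : ‖z‖ = 1)
    (hr : ∀ r ∈ s, ‖r‖ ≤ 1) (hzs : z ∉ s) :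
    (s.card : ℝ) / 2 ≤ ((s.map (fun r => z / (z - r))).sum).re := by
  induction s using Multiset.induction with
  | empty => simp
  | cons a t ih =>
    simp only [Multiset.map_cons, Multiset.sum_cons, Multiset.card_cons, Complex.add_re]
    have hza : z ≠ a := fun h => hzs (h ▸ Multiset.mem_cons_self a t)
    have h1 := half_re hz (hr a (Multiset.mem_cons_self a t)) hza
    have h2 := ih (fun r hrt => hr r (Multiset.mem_cons_of_mem hrt))
      (fun h => hzs (Multiset.mem_cons_of_mem h))
    push_cast
    linarith

lemma sum_sub_card_le {s : Multiset ℂ} {z : ℂ} (hz : ‖z‖ = 1)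
    (hr : ∀ r ∈ s, ‖r‖ ≤ 1) (hzs : z ∉ s) :
    ‖(s.map (fun r => z / (z - r))).sum - (s.card : ℂ)‖ ≤
      ‖(s.map (fun r => z / (z - r))).sum‖ := by
  set S := (s.map (fun r => z / (z - r))).sum with hS
  have hre := sum_re_half hz hr hzs
  have key : ∀ u : ℂ, ‖u‖ ^ 2 = Complex.normSq u := fun u => by
    rw [Complex.sq_norm]
  have h1 : ‖S - (s.card : ℂ)‖ ^ 2 ≤ ‖S‖ ^ 2 := by
    rw [key, key]
    simp [Complex.normSq_apply, Complex.sub_re, Complex.sub_im]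
    nlinarith [hre]
  have := abs_le_abs (pow_le_pow_left₀ (norm_nonneg _) (le_refl ‖S‖) 2)
  nlinarith [norm_nonneg (S - (s.card : ℂ)), norm_nonneg S, h1]

lemma deriv_eval_prod {s : Multiset ℂ} {z : ℂ} (hzs : z ∉ s) :
    (Polynomial.derivative (s.map (fun r => X - C r)).prod).eval z =
      ((s.map (fun r => X - C r)).prod).eval z * (s.map (fun r => (z - r)⁻¹)).sum := by
  induction s using Multiset.induction with
  | empty => simp
  | cons a t ih =>
    have hza : z ≠ a := fun h => hzs (h ▸ Multiset.mem_cons_self a t)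
    have hzt : z ∉ t := fun h => hzs (Multiset.mem_cons_of_mem h)
    simp only [Multiset.map_cons, Multiset.prod_cons, Multiset.sum_cons, derivative_mul,
      eval_add, eval_mul, eval_sub, eval_X, eval_C, derivative_sub, derivative_X,
      derivative_C, sub_zero, eval_one, ih hzt]
    have : z - a ≠ 0 := sub_ne_zero.mpr hza
    field_simp

lemma key_ineq_prod {s : Multiset ℂ} {z : ℂ} (hz : ‖z‖ = 1)
    (hr : ∀ r ∈ s, ‖r‖ ≤ 1) :
    ‖(s.card : ℂ) * ((s.map (fun r => X - C r)).prod).eval z -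
        z * (Polynomial.derivative (s.map (fun r => X - C r)).prod).eval z‖ ≤
      ‖(Polynomial.derivative (s.map (fun r => X - C r)).prod).eval z‖ := by
  by_cases hzs : z ∈ s
  · have hG : ((s.map (fun r => X - C r)).prod).eval z = 0 := by
      rw [Polynomial.eval_multiset_prod, Multiset.map_map]
      refine Multiset.prod_eq_zero ?_
      simp only [Multiset.mem_map, Function.comp]
      exact ⟨z, hzs, by simp⟩
    rw [hG, mul_zero, zero_sub, norm_neg, norm_mul, hz, one_mul]
  · set G := (s.map (fun r => X - C r)).prod with hGdef
    have hGz : G.eval z ≠ 0 := by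
      rw [hGdef, Polynomial.eval_multiset_prod, Multiset.map_map]
      refine Multiset.prod_ne_zero ?_
      simp only [Multiset.mem_map, Function.comp, eval_sub, eval_X, eval_C, not_exists]
      rintro r ⟨hrs, hx⟩
      exact hzs ((sub_eq_zero.mp hx) ▸ hrs)
    set T := (s.map (fun r => (z - r)⁻¹)).sum with hT
    set S := (s.map (fun r => z / (z - r))).sum with hS
    have hzT : z * T = S := by
      rw [hT, hS, ← Multiset.sum_map_mul_left]
      exact congrArg _ (Multiset.map_congr rfl (fun r _ => (div_eq_mul_inv z (z - r)).symm)) 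
    have hder : (Polynomial.derivative G).eval z = G.eval z * T := deriv_eval_prod hzs
    have hkey : (s.card : ℂ) * G.eval z - z * (Polynomial.derivative G).eval z =
        -(G.eval z * (S - (s.card : ℂ))) := by
      rw [hder]
      have : z * (G.eval z * T) = G.eval z * S := by rw [← hzT]; ring
      rw [this]; ring
    rw [hkey, norm_neg, norm_mul, hder, norm_mul]
    have h1 : ‖S - (s.card : ℂ)‖ ≤ ‖S‖ := sum_sub_card_le hz hr hzs
    have h2 : ‖S‖ = ‖T‖ := by rw [← hzT, norm_mul, hz, one_mul]
    rw [h2] at h1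
    exact mul_le_mul_of_nonneg_left h1 (norm_nonneg _)

lemma key_ineq_poly {G : Polynomial ℂ} (hG0 : G ≠ 0)
    (hcard : Multiset.card G.roots = G.natDegree)
    (hroots : ∀ r ∈ G.roots, ‖r‖ ≤ 1) {z : ℂ} (hz : ‖z‖ = 1) :
    ‖(G.natDegree : ℂ) * G.eval z - z * (Polynomial.derivative G).eval z‖ ≤
      ‖(Polynomial.derivative G).eval z‖ := by
  have hfac := Polynomial.C_leadingCoeff_mul_prod_multiset_X_sub_C (p := G) hcard
  set s := G.roots with hs
  set Q := (s.map (fun r => X - C r)).prod with hQ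
  have h1 : G.eval z = G.leadingCoeff * Q.eval z := by
    conv_lhs => rw [← hfac]
    simp
  have h2 : (Polynomial.derivative G).eval z =
      G.leadingCoeff * (Polynomial.derivative Q).eval z := by
    conv_lhs => rw [← hfac]
    rw [derivative_mul]
    simp
  rw [h1, h2, ← hcard]
  have key := key_ineq_prod hz hroots
  calc ‖(Multiset.card s : ℂ) * (G.leadingCoeff * Q.eval z) -
        z * (G.leadingCoeff * (Polynomial.derivative Q).eval z)‖
      = ‖G.leadingCoeff‖ * ‖(Multiset.card s : ℂ) * Q.eval z -
        z * (Polynomial.derivative Q).eval z‖ := by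
        rw [← norm_mul]; congr 1; ring
    _ ≤ ‖G.leadingCoeff‖ * ‖(Polynomial.derivative Q).eval z‖ :=
        mul_le_mul_of_nonneg_left key (norm_nonneg _)
    _ = ‖G.leadingCoeff * (Polynomial.derivative Q).eval z‖ := (norm_mul _ _).symm

lemma circle_core {P : Polynomial ℂ} {m : ℕ} (hdeg : P.natDegree = m + 1)
    {M : ℝ} (hM : ∀ w : ℂ, ‖w‖ = 1 → ‖P.eval w‖ ≤ M) (hMpos : 0 < M)
    {w : ℂ} (hw : ‖w‖ = 1) :
    ‖((m+1:ℕ) : ℂ) * P.eval w - w * (Polynomial.derivative P).eval w‖ +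
      ‖(Polynomial.derivative P).eval w‖ ≤ (m+1 : ℕ) * M := by
  set n : ℕ := m + 1 with hn
  have hnpos : (0:ℝ) < n := by positivity
  have hw0 : w ≠ 0 := by intro h; simp [h] at hw
  refine le_of_forall_pos_le_add (fun ε' hε' => ?_)
  set ε : ℝ := ε' / (n * M) with hε
  have hεpos : 0 < ε := by positivity
  set D := (Polynomial.derivative P).eval w with hD
  set t : ℝ := ‖D‖ with ht
  set c : ℝ := n * M * (1 + ε) with hc
  have hcpos : 0 < c := by positivity
  obtain ⟨e, hee, hte⟩ : ∃ e : ℂ, ‖e‖ = 1 ∧ (t : ℂ) * e = D := by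
    by_cases h : D = 0
    · exact ⟨1, by simp, by simp [h, ht]⟩
    · refine ⟨(↑t)⁻¹ * D, ?_, ?_⟩
      · rw [norm_mul, norm_inv, Complex.norm_real, Real.norm_eq_abs, ht,
          abs_of_nonneg (norm_nonneg D), inv_mul_cancel₀ (norm_ne_zero_iff.mpr h)]
      · have htne : (t:ℂ) ≠ 0 := by
          simp only [ht, Ne, Complex.ofReal_eq_zero, norm_eq_zero]; exact h
        field_simp
  set β : ℂ := ((c / n : ℝ) : ℂ) * e * (w ^ m)⁻¹ with hβ
  have hβn : ‖β‖ = c / n := by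
    rw [hβ, norm_mul, norm_mul, norm_inv, norm_pow, hw, one_pow, inv_one, mul_one,
      hee, mul_one, Complex.norm_real, Real.norm_eq_abs, abs_of_pos (by positivity)]
  have hwm : w ^ m ≠ 0 := pow_ne_zero _ hw0
  have hnne : ((n:ℕ) : ℂ) ≠ 0 := Nat.cast_ne_zero.mpr (by omega)
  have hm1 : ((m:ℂ) + 1) ≠ 0 := by
    have h0 : ((m+1 : ℕ) : ℂ) ≠ 0 := Nat.cast_ne_zero.mpr (Nat.succ_ne_zero m)
    push_cast at h0; exact h0
  have hβc : (n : ℂ) * β * w ^ m = (c : ℂ) * e := by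
    rw [hβ]
    push_cast
    field_simp
  set G : Polynomial ℂ := P - C β * X ^ n with hG
  have hcoefP : ‖P.coeff n‖ ≤ M := coeff_bound (le_of_eq hdeg) hM
  have hβM : M < ‖β‖ := by
    rw [hβn, hc]
    have h9 : (n:ℝ) * M * (1 + ε) / n = M * (1+ε) := by
      field_simp
    rw [h9]
    nlinarith
  have hcoefG : G.coeff n ≠ 0 := by
    have hco : G.coeff n = P.coeff n - β := by
      simp [hG, Polynomial.coeff_X_pow]
    rw [hco]
    intro h
    have : P.coeff n = β := by linear_combination h
    rw [this] at hcoefP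
    linarith
  have hGdeg : G.natDegree = n := by
    refine le_antisymm ?_ (Polynomial.le_natDegree_of_ne_zero hcoefG)
    refine (Polynomial.natDegree_sub_le _ _).trans ?_
    simp only [max_le_iff]
    exact ⟨le_of_eq hdeg, Polynomial.natDegree_C_mul_X_pow_le _ _⟩
  have hG0 : G ≠ 0 := fun h => hcoefG (by simp [h])
  have hcard : Multiset.card G.roots = G.natDegree :=
    Polynomial.splits_iff_card_roots.mp (IsAlgClosed.splits G)
  have hroots : ∀ r ∈ G.roots, ‖r‖ ≤ 1 := by
    intro r hr
    by_contra hr1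
    push_neg at hr1
    have hrroot : G.eval r = 0 := Polynomial.isRoot_of_mem_roots hr
    have hPr : P.eval r = β * r ^ n := by
      have h0 : P.eval r - β * r ^ n = 0 := by
        simpa [hG] using hrroot
      linear_combination h0
    have hgrow : ‖P.eval r‖ ≤ ‖r‖ ^ n * M := poly_growth (le_of_eq hdeg) hM hr1.le
    have hnorm : ‖P.eval r‖ = ‖β‖ * ‖r‖ ^ n := by
      rw [hPr, norm_mul, norm_pow]
    have hpow : (0:ℝ) < ‖r‖ ^ n := by positivity
    nlinarith
  -- apply key inequality to G at w
  have hkey := key_ineq_poly hG0 hcard hroots hw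
  rw [hGdeg] at hkey
  -- identify the two sides
  have hGw : G.eval w = P.eval w - β * w ^ n := by simp [hG]
  have hG'w : (Polynomial.derivative G).eval w = D - (c:ℂ) * e := by
    rw [hG, ← hβc]
    simp only [derivative_sub, Polynomial.derivative_C_mul_X_pow, eval_sub, eval_mul, eval_C,
      eval_pow, eval_X, hD, hn]
    push_cast
    ring_nf
  have hws : w ^ n = w ^ m * w := pow_succ w m
  have hlhs : ((n:ℕ) : ℂ) * G.eval w - w * (Polynomial.derivative G).eval w =
      ((n:ℕ) : ℂ) * P.eval w - w * D := by
    rw [hGw, hG'w, ← hβc, hws]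
    ring
  rw [hlhs, hG'w] at hkey
  have hnorm2 : ‖D - (c:ℂ) * e‖ = |t - c| := by
    rw [← hte]
    have h12 : (t:ℂ) * e - (c:ℂ) * e = ((t - c : ℝ) : ℂ) * e := by push_cast; ring
    rw [h12, norm_mul, hee, mul_one, Complex.norm_real, Real.norm_eq_abs]
  rw [hnorm2] at hkey
  have htc : t ≤ c := by
    by_contra hlt
    push_neg at hlt
    rw [abs_of_pos (by linarith : (0:ℝ) < t - c)] at hkey
    have hPw : ‖P.eval w‖ ≤ M := hM w hw
    have h5 : t = ‖w * D‖ := by rw [norm_mul, hw, one_mul, ht]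
    have h6 : ‖w * D‖ ≤ ‖((n:ℕ):ℂ) * P.eval w‖ + ‖((n:ℕ):ℂ) * P.eval w - w * D‖ := by
      have h60 := norm_sub_le (((n:ℕ):ℂ) * P.eval w) (((n:ℕ):ℂ) * P.eval w - w * D)
      have h7 : ((n:ℕ):ℂ) * P.eval w - (((n:ℕ):ℂ) * P.eval w - w * D) = w * D := by ring
      rw [h7] at h60
      exact h60
    have h8 : ‖((n:ℕ):ℂ) * P.eval w‖ ≤ n * M := by
      rw [norm_mul, Complex.norm_natCast]
      exact mul_le_mul_of_nonneg_left hPw (by positivity)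
    have h9 : c ≤ n * M := by
      rw [← h5] at h6
      linarith
    rw [hc] at h9
    nlinarith
  rw [abs_of_nonpos (by linarith)] at hkey
  have hfin : ‖((n:ℕ):ℂ) * P.eval w - w * D‖ + t ≤ c := by linarith
  have h10 : c = n * M + ε' := by
    rw [hc, hε]
    field_simp
  rw [h10] at hfin
  exact hfin

theorem stmt_15 (P : Polynomial ℂ) (n : ℕ) (hn : 0 < n) (hdeg : P.natDegree = n)
    (α : ℂ) (hα : 1 ≤ ‖α‖) (z : ℂ) (hz : 1 ≤ ‖z‖) :
    ‖(n : ℂ) * P.eval z + (α - z) * P.derivative.eval z‖ ≤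
      (n : ℝ) * ‖α‖ * ‖z‖ ^ (n - 1) *
        ⨆ w : Metric.sphere (0 : ℂ) 1, ‖P.eval (w : ℂ)‖ := by
  obtain ⟨m, rfl⟩ : ∃ m, n = m + 1 := ⟨n - 1, (Nat.succ_pred_eq_of_pos hn).symm⟩
  set n : ℕ := m + 1 with hnn
  set M : ℝ := ⨆ w : Metric.sphere (0 : ℂ) 1, ‖P.eval (w : ℂ)‖ with hMdef
  -- the sup bounds values on the circle
  have hbdd : BddAbove (Set.range fun w : Metric.sphere (0 : ℂ) 1 => ‖P.eval (w : ℂ)‖) := by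
    obtain ⟨C, hC⟩ := (isCompact_sphere (0:ℂ) 1).exists_bound_of_continuousOn
      (Continuous.continuousOn (by continuity : Continuous fun x : ℂ => P.eval x))
    refine ⟨C, ?_⟩
    rintro y ⟨w, rfl⟩
    exact hC w w.2
  have hM : ∀ w : ℂ, ‖w‖ = 1 → ‖P.eval w‖ ≤ M := by
    intro w hw
    have hmem : w ∈ Metric.sphere (0:ℂ) 1 := by
      rwa [mem_sphere_zero_iff_norm]
    exact le_ciSup hbdd (⟨w, hmem⟩ : Metric.sphere (0:ℂ) 1)
  -- positivity of M
  have hP0 : P ≠ 0 := fun h => by simp [h] at hdeg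
  have hlc : P.coeff n ≠ 0 := by
    rw [← hdeg]
    exact Polynomial.leadingCoeff_ne_zero.mpr hP0
  have hMpos : 0 < M :=
    lt_of_lt_of_le (norm_pos_iff.mpr hlc) (coeff_bound (le_of_eq hdeg) hM)
  -- the polar derivative polynomial
  set R : Polynomial ℂ := C ((n:ℕ) : ℂ) * P + (C α - X) * Polynomial.derivative P with hR
  have hReval : ∀ y : ℂ, R.eval y =
      ((n:ℕ) : ℂ) * P.eval y + (α - y) * (Polynomial.derivative P).eval y := by
    intro y; simp [hR]
  -- circle bound for R
  have hRcirc : ∀ w : ℂ, ‖w‖ = 1 → ‖R.eval w‖ ≤ ‖α‖ * (n * M) := by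
    intro w hw
    have hcore := circle_core hdeg hM hMpos hw
    have hsplit : R.eval w = (((n:ℕ):ℂ) * P.eval w - w * (Polynomial.derivative P).eval w)
        + α * (Polynomial.derivative P).eval w := by
      rw [hReval]; ring
    rw [hsplit]
    refine (norm_add_le _ _).trans ?_
    rw [norm_mul]
    have h1 : ‖((n:ℕ):ℂ) * P.eval w - w * (Polynomial.derivative P).eval w‖ ≤
        ‖α‖ * ‖((n:ℕ):ℂ) * P.eval w - w * (Polynomial.derivative P).eval w‖ :=
      le_mul_of_one_le_left (norm_nonneg _) hα
    calc ‖((n:ℕ):ℂ) * P.eval w - w * (Polynomial.derivative P).eval w‖ +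
          ‖α‖ * ‖(Polynomial.derivative P).eval w‖
        ≤ ‖α‖ * (‖((n:ℕ):ℂ) * P.eval w - w * (Polynomial.derivative P).eval w‖ +
          ‖(Polynomial.derivative P).eval w‖) := by
          rw [mul_add]; linarith
      _ ≤ ‖α‖ * (n * M) := by
          refine mul_le_mul_of_nonneg_left ?_ (by positivity)
          exact_mod_cast hcore
  -- degree bound for R
  have hRdeg : R.natDegree ≤ m := by
    rw [Polynomial.natDegree_le_iff_coeff_eq_zero]
    intro N hN
    obtain ⟨j, rfl⟩ : ∃ j, N = j + 1 := ⟨N - 1, by omega⟩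
    have hj : m ≤ j := by omega
    have hc1 : P.coeff (j + 1 + 1) = 0 :=
      Polynomial.coeff_eq_zero_of_natDegree_lt (by omega)
    have hcoeff : R.coeff (j+1) = ((n:ℕ):ℂ) * P.coeff (j+1) +
        (α * (P.coeff (j+1+1) * ((j:ℂ)+1+1)) - P.coeff (j+1) * ((j:ℂ)+1)) := by
      rw [hR]
      simp only [Polynomial.coeff_add, Polynomial.coeff_C_mul, sub_mul,
        Polynomial.coeff_sub, Polynomial.coeff_X_mul, Polynomial.coeff_derivative]
      push_cast
      ring
    rw [hcoeff, hc1]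
    by_cases hjm : j = m
    · subst hjm
      rw [hnn]
      push_cast
      ring
    · have : P.coeff (j+1) = 0 := Polynomial.coeff_eq_zero_of_natDegree_lt (by omega)
      rw [this]
      ring
  -- growth estimate
  have hgrow := poly_growth hRdeg hRcirc hz
  rw [hReval] at hgrow
  have hfinal : ‖z‖ ^ m * (‖α‖ * (↑n * M)) = (n:ℝ) * ‖α‖ * ‖z‖ ^ (n - 1) * M := by
    have : n - 1 = m := by omega
    rw [this]; ring
  rw [hfinal] at hgrow
  exact_mod_cast hgrow
end
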